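/- arXiv:2006.07441 — 11 statements merged into one kernel-verified Lean document; each statement's English description precedes it below -/
import Mathlib

section
/- For every nonincreasing sequence (a_n) of nonnegative reals with a_1 ≥ a_2 ≥ … ≥ 0, one has ∑_{n=1}^∞ (1/n · ∑_{k=n}^∞ a_k²)^{1/2} ≤ (π/2) · ∑_{n=1}^∞ a_n. -/
open Real
open Filter
open scoped ENNReal


lemma Gderiv {L x : ℝ} (hx : 0 < x) (hxL : x < L) :
    HasDerivAt (fun y : ℝ => 2 * arcsin (Real.sqrt (y / L))) (1 / Real.sqrt (x * (L - x))) x := by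
  have hL : 0 < L := lt_trans hx hxL
  have hxLpos : 0 < x / L := div_pos hx hL
  have hu : Real.sqrt (x / L) < 1 := by
    rw [show (1:ℝ) = Real.sqrt 1 by simp]
    exact Real.sqrt_lt_sqrt (le_of_lt hxLpos) (by rw [div_lt_one hL]; exact hxL)
  have h1 : HasDerivAt (fun y : ℝ => y / L) (1 / L) x := by
    simpa using (hasDerivAt_id x).div_const L
  have h2 : HasDerivAt Real.sqrt (1 / (2 * Real.sqrt (x / L))) (x / L) :=
    Real.hasDerivAt_sqrt (ne_of_gt hxLpos)
  have h3 : HasDerivAt arcsin (1 / Real.sqrt (1 - Real.sqrt (x / L) ^ 2)) (Real.sqrt (x / L)) :=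
    Real.hasDerivAt_arcsin (by nlinarith [Real.sqrt_nonneg (x/L)]) (ne_of_lt hu)
  have h4 := ((h3.comp x (h2.comp x h1)).const_mul (2:ℝ))
  convert h4 using 1
  case e'_4 => rfl
  case e'_5 => rfl
  case e'_8 => rfl
  rw [Real.sq_sqrt (le_of_lt hxLpos)]
  have e1 : 1 - x / L = (L - x) / L := by field_simp
  rw [e1, Real.sqrt_div (by linarith) L, Real.sqrt_div (le_of_lt hx) L]
  have hsL : 0 < Real.sqrt L := Real.sqrt_pos.mpr hL
  have hsx : 0 < Real.sqrt x := Real.sqrt_pos.mpr hx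
  have hsLx : 0 < Real.sqrt (L - x) := Real.sqrt_pos.mpr (by linarith)
  rw [Real.sqrt_mul (le_of_lt hx)]
  have hL2 : Real.sqrt L * Real.sqrt L = L := Real.mul_self_sqrt (le_of_lt hL)
  field_simp
  rw [sq, hL2]

lemma Gcont (L : ℝ) : Continuous (fun y : ℝ => 2 * arcsin (Real.sqrt (y / L))) := by
  exact continuous_const.mul (Real.continuous_arcsin.comp (Real.continuous_sqrt.comp (continuous_id.div_const L)))

lemma step {L s t : ℝ} (hs : 0 < s) (hst : s < t) (ht2 : t ≤ L / 2) :
    (t - s) * (1 / Real.sqrt (t * (L - t))) ≤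
      2 * arcsin (Real.sqrt (t / L)) - 2 * arcsin (Real.sqrt (s / L)) := by
  have hL : 0 < L := by linarith
  have htL : t < L := by linarith
  obtain ⟨ξ, hξ, hslope⟩ := exists_hasDerivAt_eq_slope
    (fun y : ℝ => 2 * arcsin (Real.sqrt (y / L))) (fun y => 1 / Real.sqrt (y * (L - y)))
    hst (Gcont L).continuousOn
    (fun x hx => Gderiv (by linarith [hx.1]) (by linarith [hx.2]))
  obtain ⟨hξ1, hξ2⟩ := hξ
  have hmono : Real.sqrt (ξ * (L - ξ)) ≤ Real.sqrt (t * (L - t)) :=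
    Real.sqrt_le_sqrt (by nlinarith)
  have hpos : 0 < Real.sqrt (ξ * (L - ξ)) := Real.sqrt_pos.mpr (by nlinarith)
  have : 1 / Real.sqrt (t * (L - t)) ≤ 1 / Real.sqrt (ξ * (L - ξ)) :=
    one_div_le_one_div_of_le hpos hmono
  have hts : 0 < t - s := by linarith
  rw [hslope] at this
  rw [le_div_iff₀ hts] at this
  linarith [this]

/-- telescoping sum bound: for `1 ≤ c`, `(c:ℝ) ≤ L/2`,
`∑_{j<c} 1/√((j+1)(L-(j+1))) ≤ 1/√(L-1) + G(c) - G(1)` -/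
lemma sumbound (L : ℝ) : ∀ c : ℕ, 1 ≤ c → ((c : ℝ) ≤ L / 2) →
    ∑ j ∈ Finset.range c, 1 / Real.sqrt (((j:ℝ)+1) * (L - ((j:ℝ)+1))) ≤
      1 / Real.sqrt (L - 1) + (2 * arcsin (Real.sqrt ((c:ℝ) / L)) - 2 * arcsin (Real.sqrt (1 / L))) := by
  intro c hc
  induction c, hc using Nat.le_induction with
  | base =>
    intro h2
    simp only [Finset.sum_range_one]
    norm_num
  | succ c hc ih =>
    intro h2
    have hc' : (c : ℝ) ≤ L / 2 := by push_cast at h2 ⊢; linarith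
    have hih := ih hc'
    rw [Finset.sum_range_succ]
    have hstep := step (L := L) (s := (c:ℝ)) (t := (c:ℝ)+1) (by exact_mod_cast Nat.pos_of_ne_zero (by omega)) (by linarith) (by push_cast at h2 ⊢; linarith)
    have e : ((c:ℝ)+1) - (c:ℝ) = 1 := by ring
    rw [e, one_mul] at hstep
    push_cast
    linarith

section
variable (M : ℕ)

-- q n = 1/√((n+1)(M-n))
noncomputable def qf (M : ℕ) (n : ℕ) : ℝ := 1 / Real.sqrt (((n:ℝ)+1) * ((M:ℝ) - n))

lemma qf_nonneg (M n : ℕ) : 0 ≤ qf M n := by unfold qf; positivity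

lemma qf_symm (M n : ℕ) (hn : n < M) : qf M (M - 1 - n) = qf M n := by
  have hcast : ((M - 1 - n : ℕ) : ℝ) = (M:ℝ) - 1 - n := by
    have h : M - 1 - n + (n + 1) = M := by omega
    have := congrArg (fun k : ℕ => (k : ℝ)) h
    push_cast at this
    linarith
  unfold qf
  rw [hcast]
  congr 1
  ring

-- folding: ∑_{n<M} q ≤ 2 ∑_{n<c}, c = (M+1)/2
lemma fold (M : ℕ) (hM : 1 ≤ M) :
    ∑ n ∈ Finset.range M, qf M n ≤ 2 * ∑ n ∈ Finset.range ((M+1)/2), qf M n := by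
  set c := (M+1)/2 with hc
  have hcM : c ≤ M := by omega
  have hsplit : ∑ n ∈ Finset.range M, qf M n
      = ∑ n ∈ Finset.range c, qf M n + ∑ n ∈ Finset.Ico c M, qf M n := by
    rw [Finset.range_eq_Ico, ← Finset.sum_Ico_consecutive _ (Nat.zero_le c) hcM,
      ← Finset.range_eq_Ico]
  have hIco : ∑ n ∈ Finset.Ico c M, qf M n = ∑ k ∈ Finset.range (M - c), qf M k := by
    rw [Finset.sum_Ico_eq_sum_range]
    rw [← Finset.sum_range_reflect (fun k => qf M (c + k)) (M - c)]
    apply Finset.sum_congr rfl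
    intro k hk
    rw [Finset.mem_range] at hk
    have h1 : c + (M - c - 1 - k) = M - 1 - k := by omega
    rw [h1, qf_symm M k (by omega)]
  rw [hsplit, hIco]
  have hsub : ∑ k ∈ Finset.range (M - c), qf M k ≤ ∑ k ∈ Finset.range c, qf M k := by
    apply Finset.sum_le_sum_of_subset_of_nonneg
    · apply Finset.range_subset_range.mpr; omega
    · intro i _ _; exact qf_nonneg M i
  linarith

end

lemma pair_id (M n : ℕ) (hn : n < M) :
    Real.sqrt ((M:ℝ) - n) / Real.sqrt ((n:ℝ) + 1)
      + Real.sqrt ((M:ℝ) - ((M - 1 - n : ℕ):ℝ)) / Real.sqrt (((M - 1 - n : ℕ):ℝ) + 1)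
    = ((M:ℝ) + 1) * qf M n := by
  have hcast : ((M - 1 - n : ℕ) : ℝ) = (M:ℝ) - 1 - n := by
    have h : M - 1 - n + (n + 1) = M := by omega
    have := congrArg (fun k : ℕ => (k : ℝ)) h
    push_cast at this
    linarith
  rw [hcast]
  have e1 : (M:ℝ) - ((M:ℝ) - 1 - n) = (n:ℝ) + 1 := by ring
  have e2 : ((M:ℝ) - 1 - n) + 1 = (M:ℝ) - n := by ring
  rw [e1, e2]
  have hMn : (0:ℝ) < (M:ℝ) - n := by
    have : (n:ℝ) < M := by exact_mod_cast hn
    linarith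
  have hn1 : (0:ℝ) < (n:ℝ) + 1 := by positivity
  set x := Real.sqrt ((M:ℝ) - n) with hx
  set y := Real.sqrt ((n:ℝ) + 1) with hy
  have hxs : x^2 = (M:ℝ) - n := Real.sq_sqrt hMn.le
  have hys : y^2 = (n:ℝ) + 1 := Real.sq_sqrt hn1.le
  have hx0 : 0 < x := Real.sqrt_pos.mpr hMn
  have hy0 : 0 < y := Real.sqrt_pos.mpr hn1
  unfold qf
  rw [Real.sqrt_mul hn1.le, ← hx, ← hy]
  field_simp
  nlinarith [hxs, hys]

set_option maxHeartbeats 1000000 in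
lemma partA_large (M : ℕ) (hM : 5 ≤ M) :
    ∑ n ∈ Finset.range M, Real.sqrt ((M - n : ℕ) : ℝ) / Real.sqrt ((n : ℝ) + 1) ≤ π / 2 * M := by
  set L : ℝ := (M:ℝ) + 1 with hL
  have hL6 : (6:ℝ) ≤ L := by
    have : (5:ℝ) ≤ (M:ℝ) := by exact_mod_cast hM
    simp [hL]; linarith
  set f : ℕ → ℝ := fun n => Real.sqrt ((M:ℝ) - n) / Real.sqrt ((n:ℝ) + 1) with hf
  have hcastsum : ∑ n ∈ Finset.range M, Real.sqrt ((M - n : ℕ) : ℝ) / Real.sqrt ((n : ℝ) + 1)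
      = ∑ n ∈ Finset.range M, f n := by
    apply Finset.sum_congr rfl
    intro n hn
    rw [Finset.mem_range] at hn
    rw [hf]
    congr 2
    exact_mod_cast Nat.cast_sub hn.le
  rw [hcastsum]
  set c := (M+1)/2 with hc
  have hdouble : (∑ n ∈ Finset.range M, f n) + (∑ n ∈ Finset.range M, f n)
      = L * ∑ n ∈ Finset.range M, qf M n := by
    nth_rewrite 1 [← Finset.sum_range_reflect f M]
    rw [← Finset.sum_add_distrib, Finset.mul_sum]
    apply Finset.sum_congr rfl
    intro n hn
    rw [Finset.mem_range] at hn
    have hp := pair_id M n hn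
    simp only [hf, hL]
    rw [add_comm]
    exact hp
  have hfold := fold M (by omega)
  have hc1 : 1 ≤ c := by omega
  have hcL : (c:ℝ) ≤ L / 2 := by
    have h2c : 2 * c ≤ M + 1 := by omega
    have : (2:ℝ) * c ≤ (M:ℝ) + 1 := by exact_mod_cast h2c
    simp [hL]; linarith
  have hsumb := sumbound L c hc1 hcL
  have hqeq : ∑ j ∈ Finset.range c, 1 / Real.sqrt (((j:ℝ)+1) * (L - ((j:ℝ)+1)))
      = ∑ j ∈ Finset.range c, qf M j := by
    apply Finset.sum_congr rfl
    intro j _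
    unfold qf
    congr 2
    rw [hL]; ring
  rw [hqeq] at hsumb
  -- arcsin bounds
  have hLpos : (0:ℝ) < L := by linarith
  have b1 : arcsin (Real.sqrt ((c:ℝ) / L)) ≤ π / 4 := by
    have hle : Real.sqrt ((c:ℝ) / L) ≤ Real.sqrt 2 / 2 := by
      have h1 : (c:ℝ) / L ≤ 1/2 := by
        rw [div_le_div_iff₀ hLpos (by norm_num)]
        linarith
      calc Real.sqrt ((c:ℝ) / L) ≤ Real.sqrt (1/2) := Real.sqrt_le_sqrt h1
      _ = Real.sqrt 2 / 2 := by
          rw [Real.sqrt_div (by norm_num) 2, Real.sqrt_one,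
            div_eq_div_iff (Real.sqrt_pos.mpr (by norm_num : (0:ℝ) < 2)).ne' (by norm_num : (2:ℝ) ≠ 0)]
          rw [one_mul]
          exact (Real.mul_self_sqrt (by norm_num)).symm
    calc arcsin (Real.sqrt ((c:ℝ)/L)) ≤ arcsin (Real.sqrt 2 / 2) := Real.monotone_arcsin hle
    _ = π/4 := by rw [← Real.sin_pi_div_four, Real.arcsin_sin (by linarith [Real.pi_pos]) (by linarith [Real.pi_pos])]
  have b2 : 1 / Real.sqrt L ≤ arcsin (Real.sqrt (1 / L)) := by
    have h01 : (0:ℝ) ≤ 1/L := by positivity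
    have h11 : 1/L ≤ 1 := by
      rw [div_le_one hLpos]; linarith
    have hx1 : Real.sqrt (1/L) ≤ 1 := Real.sqrt_le_one.mpr h11
    have hge : Real.sqrt (1/L) ≤ arcsin (Real.sqrt (1/L)) := by
      have hs := Real.sin_arcsin (by linarith [Real.sqrt_nonneg (1/L)]) hx1
      have hnn : 0 ≤ arcsin (Real.sqrt (1/L)) := Real.arcsin_nonneg.mpr (Real.sqrt_nonneg _)
      nlinarith [Real.sin_le hnn]
    calc 1 / Real.sqrt L = Real.sqrt (1/L) := by
          rw [Real.sqrt_div (by norm_num) L, Real.sqrt_one]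
    _ ≤ arcsin (Real.sqrt (1/L)) := hge
  -- numeric finish
  set u := Real.sqrt L with hu
  set v := Real.sqrt (L - 1) with hv
  have hu2 : u^2 = L := Real.sq_sqrt (by linarith)
  have hv2 : v^2 = L - 1 := Real.sq_sqrt (by linarith)
  have hu0 : 0 < u := Real.sqrt_pos.mpr (by linarith)
  have hv0 : 0 < v := Real.sqrt_pos.mpr (by linarith)
  have hpi : π < 3.15 := Real.pi_lt_d2
  have hpi0 : 0 < π := Real.pi_pos
  clear_value L f c u v
  have huv : u ≤ 1.1 * v := by
    have h1 : L ≤ 1.21 * (L - 1) := by linarith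
    rw [hu, hv]
    calc Real.sqrt L ≤ Real.sqrt (1.21 * (L-1)) := Real.sqrt_le_sqrt h1
    _ = 1.1 * Real.sqrt (L-1) := by
        rw [Real.sqrt_mul (by norm_num), show (1.21:ℝ) = 1.1^2 by norm_num,
          Real.sqrt_sq (by norm_num)]
  have hu24 : (2.4:ℝ) ≤ u := by
    rw [hu]
    calc (2.4:ℝ) = Real.sqrt (2.4^2) := (Real.sqrt_sq (by norm_num)).symm
    _ ≤ Real.sqrt L := Real.sqrt_le_sqrt (by norm_num; linarith)
  -- chain
  have hq : ∑ n ∈ Finset.range c, qf M n ≤ 1/v + π/2 - 2 * (1/u) := by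
    linarith [hsumb, b1, b2]
  have hchain : (∑ n ∈ Finset.range M, f n) ≤ L * (1/v + π/2 - 2*(1/u)) := by
    have h1 : L * ∑ n ∈ Finset.range M, qf M n ≤ L * (2 * (1/v + π/2 - 2*(1/u))) := by
      apply mul_le_mul_of_nonneg_left _ (by linarith)
      calc ∑ n ∈ Finset.range M, qf M n ≤ 2 * ∑ n ∈ Finset.range ((M+1)/2), qf M n := hfold
      _ ≤ 2 * (1/v + π/2 - 2*(1/u)) := by rw [← hc]; linarith
    nlinarith [hdouble, h1]
  have hMr : (M:ℝ) = L - 1 := by rw [hL]; ring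
  rw [hMr]
  have key : u^2/v ≤ 2*u - π/2 := by
    rw [div_le_iff₀ hv0]
    nlinarith [mul_le_mul_of_nonneg_right huv hu0.le,
      mul_le_mul_of_nonneg_right hu24 hv0.le, hpi, hv0, hu0]
  have efin : L * (1/v + π/2 - 2*(1/u)) = u^2/v + π/2 * L - 2*u := by
    rw [← hu2]
    field_simp
  linarith [hchain, key, efin.le, efin.ge]

lemma partA_small (M : ℕ) (h1 : 1 ≤ M) (h4 : M ≤ 4) :
    ∑ n ∈ Finset.range M, Real.sqrt ((M - n : ℕ) : ℝ) / Real.sqrt ((n : ℝ) + 1) ≤ π / 2 * M := by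
  have hpi : (3.141592 : ℝ) < π := Real.pi_gt_d6
  have h2 : Real.sqrt 2 * Real.sqrt 2 = 2 := Real.mul_self_sqrt (by norm_num)
  have h3 : Real.sqrt 3 * Real.sqrt 3 = 3 := Real.mul_self_sqrt (by norm_num)
  have h2p : (0:ℝ) < Real.sqrt 2 := Real.sqrt_pos.mpr (by norm_num)
  have h3p : (0:ℝ) < Real.sqrt 3 := Real.sqrt_pos.mpr (by norm_num)
  have h2u : Real.sqrt 2 ≤ 1.415 := by nlinarith [sq_nonneg (Real.sqrt 2 - 1.415)]
  have h3u : Real.sqrt 3 ≤ 1.733 := by nlinarith [sq_nonneg (Real.sqrt 3 - 1.733)]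
  have h2l : (1.414:ℝ) ≤ Real.sqrt 2 := by nlinarith [sq_nonneg (Real.sqrt 2 - 1.414)]
  have h3l : (1.732:ℝ) ≤ Real.sqrt 3 := by nlinarith [sq_nonneg (Real.sqrt 3 - 1.732)]
  have h2i : (Real.sqrt 2)⁻¹ ≤ 0.7072 := by
    rw [inv_le_comm₀ (by positivity) (by norm_num)]; calc (0.7072:ℝ)⁻¹ = 1/0.7072 := by norm_num
    _ ≤ Real.sqrt 2 := by nlinarith
  have h3i : (Real.sqrt 3)⁻¹ ≤ 0.578 := by
    rw [inv_le_comm₀ (by positivity) (by norm_num)]; calc (0.578:ℝ)⁻¹ = 1/0.578 := by norm_num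
    _ ≤ Real.sqrt 3 := by nlinarith
  have h32 : Real.sqrt 3 / Real.sqrt 2 ≤ 1.23 := by
    rw [div_le_iff₀ h2p]; nlinarith
  have h23 : Real.sqrt 2 / Real.sqrt 3 ≤ 0.82 := by
    rw [div_le_iff₀ h3p]; nlinarith
  have h4e : Real.sqrt 4 = 2 := by
    rw [show (4:ℝ) = 2^2 by norm_num, Real.sqrt_sq]; norm_num
  interval_cases M
  · rw [Finset.sum_range_one]; norm_num; linarith
  · rw [Finset.sum_range_succ, Finset.sum_range_one]; norm_num; linarith
  · rw [Finset.sum_range_succ, Finset.sum_range_succ, Finset.sum_range_one]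
    norm_num; linarith
  · rw [Finset.sum_range_succ, Finset.sum_range_succ, Finset.sum_range_succ,
      Finset.sum_range_one]
    norm_num
    norm_num
    linarith

lemma partA (M : ℕ) :
    ∑ n ∈ Finset.range M, Real.sqrt ((M - n : ℕ) : ℝ) / Real.sqrt ((n : ℝ) + 1) ≤ π / 2 * M := by
  rcases Nat.eq_zero_or_pos M with h | h
  · subst h; simp
  · by_cases h4 : M ≤ 4
    · exact partA_small M h h4
    · exact partA_large M (by omega)


lemma rpow_two_e (x : ℝ≥0∞) : x ^ (2:ℝ) = x * x := by
  rw [show (2:ℝ) = ((2:ℕ):ℝ) by norm_num, ENNReal.rpow_natCast, pow_two]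

lemma sqrt_mul_self_e (x : ℝ≥0∞) : (x * x) ^ ((1:ℝ)/2) = x := by
  rw [← rpow_two_e, ← ENNReal.rpow_mul]
  norm_num

lemma count_tsum (n t : ℕ) (x : ℝ≥0∞) :
    ∑' k : ℕ, (if n + k ≤ t then x else 0) = ((t + 1 - n : ℕ) : ℝ≥0∞) * x := by
  rw [tsum_eq_sum (s := Finset.range (t + 1 - n))
    (by intro k hk; rw [Finset.mem_range] at hk; exact if_neg (by omega))]
  have h1 : ∀ k ∈ Finset.range (t + 1 - n), (if n + k ≤ t then x else 0) = x :=
    fun k hk => if_pos (by rw [Finset.mem_range] at hk; omega)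
  rw [Finset.sum_congr rfl h1, Finset.sum_const, Finset.card_range, nsmul_eq_mul]

lemma min_le_sqrt (u v : ℕ) :
    ((min u v : ℕ) : ℝ≥0∞) ≤ ((u : ℕ) : ℝ≥0∞) ^ ((1:ℝ)/2) * ((v : ℕ) : ℝ≥0∞) ^ ((1:ℝ)/2) := by
  have key : ∀ u v : ℕ, u ≤ v →
      ((u : ℝ≥0∞) ≤ (u : ℝ≥0∞) ^ ((1:ℝ)/2) * (v : ℝ≥0∞) ^ ((1:ℝ)/2)) := by
    intro u v huv
    rcases Nat.eq_zero_or_pos u with h | h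
    · subst h; simp
    · have h0 : (u : ℝ≥0∞) ≠ 0 := by exact_mod_cast Nat.pos_iff_ne_zero.mp h
      have ht : (u : ℝ≥0∞) ≠ ⊤ := ENNReal.natCast_ne_top u
      have e : (u : ℝ≥0∞) = (u : ℝ≥0∞) ^ ((1:ℝ)/2) * (u : ℝ≥0∞) ^ ((1:ℝ)/2) := by
        rw [← ENNReal.rpow_add _ _ h0 ht]
        norm_num
      conv_lhs => rw [e]
      have hle : (u : ℝ≥0∞) ≤ (v : ℝ≥0∞) := by exact_mod_cast huv
      exact mul_le_mul_right (ENNReal.rpow_le_rpow hle (by norm_num : (0:ℝ) ≤ 1/2)) _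
  rcases le_total u v with h | h
  · rw [min_eq_left h]; exact key u v h
  · rw [min_eq_right h]; rw [mul_comm]; exact key v u h

lemma sq_tsum (g : ℕ → ℝ≥0∞) : (∑' m, g m) ^ (2:ℝ) = ∑' m, ∑' m', g m * g m' := by
  rw [rpow_two_e]
  rw [← ENNReal.tsum_mul_right]
  exact tsum_congr fun m => (ENNReal.tsum_mul_left).symm

noncomputable def wB (n m : ℕ) : ℝ≥0∞ := ((m + 1 - n : ℕ) : ℝ≥0∞) ^ ((1:ℝ)/2)
noncomputable def invsq (n : ℕ) : ℝ≥0∞ := (1 / ((n + 1 : ℕ) : ℝ≥0∞)) ^ ((1:ℝ)/2)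


lemma wB_eq (n m : ℕ) : wB n m = ENNReal.ofReal (Real.sqrt ((m + 1 - n : ℕ) : ℝ)) := by
  unfold wB
  rw [← ENNReal.ofReal_natCast (m + 1 - n),
    ENNReal.ofReal_rpow_of_nonneg (Nat.cast_nonneg _) (by norm_num), Real.sqrt_eq_rpow]

lemma invsq_eq (n : ℕ) : invsq n = ENNReal.ofReal ((Real.sqrt ((n:ℝ) + 1))⁻¹) := by
  unfold invsq
  have h1 : ((n + 1 : ℕ) : ℝ≥0∞) = ENNReal.ofReal ((n + 1 : ℕ) : ℝ) :=
    (ENNReal.ofReal_natCast _).symm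
  have hpos : (0:ℝ) < ((n + 1 : ℕ) : ℝ) := by positivity
  rw [h1, one_div, ← ENNReal.ofReal_inv_of_pos hpos,
    ENNReal.ofReal_rpow_of_nonneg (by positivity) (by norm_num),
    Real.inv_rpow (by positivity), ← Real.sqrt_eq_rpow]
  congr 2
  push_cast
  ring

lemma hT_lemma (m : ℕ) :
    ∑' n : ℕ, wB n m * invsq n ≤ ENNReal.ofReal (π/2 * ((m:ℝ)+1)) := by
  rw [tsum_eq_sum (s := Finset.range (m+1)) (by
    intro n hn
    rw [Finset.mem_range] at hn
    have h0 : m + 1 - n = 0 := by omega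
    unfold wB
    rw [h0]
    simp [ENNReal.zero_rpow_of_pos (by norm_num : (0:ℝ) < 1/2)])]
  have heq : ∀ n ∈ Finset.range (m+1), wB n m * invsq n
      = ENNReal.ofReal (Real.sqrt ((m + 1 - n : ℕ) : ℝ) / Real.sqrt ((n:ℝ) + 1)) := by
    intro n _
    rw [wB_eq, invsq_eq, ← ENNReal.ofReal_mul (Real.sqrt_nonneg _), div_eq_mul_inv]
  rw [Finset.sum_congr rfl heq, ← ENNReal.ofReal_sum_of_nonneg (by
    intro i _
    positivity)]
  apply ENNReal.ofReal_le_ofReal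
  have := partA (m+1)
  calc ∑ n ∈ Finset.range (m+1), Real.sqrt ((m + 1 - n : ℕ) : ℝ) / Real.sqrt ((n:ℝ) + 1)
      ≤ π/2 * ((m+1 : ℕ) : ℝ) := partA (m+1)
  _ = π/2 * ((m:ℝ)+1) := by push_cast; ring

lemma tel (a : ℕ → ℝ) (ha : Antitone a) (h0 : Tendsto a atTop (nhds 0)) (s : ℕ) :
    HasSum (fun j => a (s + j) - a (s + (j + 1))) (a s) := by
  rw [hasSum_iff_tendsto_nat_of_nonneg (fun j => sub_nonneg.mpr (ha (by omega))) _]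
  have hsum : ∀ J, ∑ j ∈ Finset.range J, (a (s + j) - a (s + (j + 1))) = a s - a (s + J) := by
    intro J
    have := Finset.sum_range_sub' (fun j => a (s + j)) J
    simpa using this
  simp only [hsum]
  have h2 : Tendsto (fun J => a (s + J)) atTop (nhds 0) := by
    have h3 := (tendsto_add_atTop_iff_nat s).mpr h0
    simpa [add_comm] using h3
  simpa using tendsto_const_nhds.sub h2

set_option maxHeartbeats 2000000 in
/-- Strong discrete Stechkin inequality for `q = 2` with constant `π/2`. -/
theorem stechkin_strong_discrete_q2 (a : ℕ → ℝ) (ha0 : ∀ n, 0 ≤ a n) (ha : Antitone a) :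
    ∑' n : ℕ, ((1 / ((n + 1 : ℕ) : ℝ≥0∞)) *
        ∑' k : ℕ, ENNReal.ofReal (a (n + 1 + k)) ^ (2 : ℝ)) ^ ((1 : ℝ) / 2)
      ≤ ENNReal.ofReal (π / 2) * ∑' n : ℕ, ENNReal.ofReal (a (n + 1)) := by
  by_cases hfin : ∑' n : ℕ, ENNReal.ofReal (a (n + 1)) = ⊤
  · rw [hfin, ENNReal.mul_top (by
      simp only [ne_eq, ENNReal.ofReal_eq_zero, not_le]
      positivity)]
    exact le_top
  -- a tends to 0
  have hsummable : Summable fun n => a (n + 1) := by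
    have h1 := ENNReal.summable_toReal hfin
    have h2 : ∀ n, (ENNReal.ofReal (a (n+1))).toReal = a (n+1) :=
      fun n => ENNReal.toReal_ofReal (ha0 _)
    simpa [h2] using h1
  have h0 : Tendsto a atTop (nhds 0) := by
    have := hsummable.tendsto_atTop_zero
    rw [← tendsto_add_atTop_iff_nat 1]
    simpa [add_comm] using this
  set B : ℕ → ℝ≥0∞ := fun m => ENNReal.ofReal (a (m + 1) - a (m + 2)) with hB
  -- telescoping in ℝ≥0∞
  have hA : ∀ i : ℕ, ENNReal.ofReal (a (i + 1)) = ∑' m, (if i ≤ m then B m else 0) := by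
    intro i
    have ht := tel a ha h0 (i + 1)
    have e1 : ENNReal.ofReal (a (i + 1)) = ∑' j, ENNReal.ofReal (a (i + 1 + j) - a (i + 1 + (j + 1))) := by
      rw [← ht.tsum_eq]
      exact ENNReal.ofReal_tsum_of_nonneg (fun j => sub_nonneg.mpr (ha (by omega))) ht.summable
    have e2 : ∀ j, ENNReal.ofReal (a (i + 1 + j) - a (i + 1 + (j + 1))) = B (i + j) := by
      intro j
      rw [hB]
      simp only []
      rw [show i + 1 + j = i + j + 1 by omega, show i + 1 + (j + 1) = i + j + 2 by omega]
    have e3 : ∑' m, (if i ≤ m then B m else 0) = ∑' j, B (i + j) := by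
      have hinj : Function.Injective (fun j : ℕ => i + j) := fun x y h => Nat.add_left_cancel h
      have hsupp : Function.support (fun m => if i ≤ m then B m else 0)
          ⊆ Set.range (fun j : ℕ => i + j) := by
        intro m hm
        rw [Function.mem_support] at hm
        by_cases him : i ≤ m
        · exact ⟨m - i, show i + (m - i) = m by omega⟩
        · exact absurd (if_neg him) hm
      rw [← hinj.tsum_eq hsupp]
      exact tsum_congr fun j => if_pos (by omega)
    rw [e1, e3]
    exact tsum_congr e2
  -- RHS identity
  have hRHS : ∑' n : ℕ, ENNReal.ofReal (a (n + 1)) = ∑' m, ((m + 1 : ℕ) : ℝ≥0∞) * B m := by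
    rw [tsum_congr hA, ENNReal.tsum_comm]
    refine tsum_congr fun m => ?_
    have := count_tsum 0 m (B m)
    simp only [zero_add, Nat.sub_zero] at this
    rw [← this]
  -- per-n bound
  have hterm : ∀ n : ℕ, ((1 / ((n + 1 : ℕ) : ℝ≥0∞)) *
      ∑' k : ℕ, ENNReal.ofReal (a (n + 1 + k)) ^ (2 : ℝ)) ^ ((1 : ℝ) / 2)
      ≤ ∑' m, invsq n * (B m * wB n m) := by
    intro n
    set g : ℕ → ℕ → ℝ≥0∞ := fun k m => if n + k ≤ m then B m else 0 with hg
    have hk : ∀ k : ℕ, ENNReal.ofReal (a (n + 1 + k)) = ∑' m, g k m := by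
      intro k
      rw [show n + 1 + k = (n + k) + 1 by omega]
      exact hA (n + k)
    have hS : ∑' k, ENNReal.ofReal (a (n + 1 + k)) ^ (2:ℝ)
        = ∑' m, ∑' m', ∑' k, g k m * g k m' := by
      rw [tsum_congr (fun k => by rw [hk k, sq_tsum])]
      rw [ENNReal.tsum_comm (f := fun k m => ∑' m', g k m * g k m')]
      exact tsum_congr fun m => ENNReal.tsum_comm
    have hcount : ∀ m m' : ℕ, ∑' k, g k m * g k m'
        = ((min m m' + 1 - n : ℕ) : ℝ≥0∞) * (B m * B m') := by
      intro m m'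
      rw [tsum_congr (fun k => show g k m * g k m'
          = (if n + k ≤ min m m' then B m * B m' else 0) from by
        by_cases h1 : n + k ≤ m <;> by_cases h2 : n + k ≤ m' <;>
          simp [hg, h1, h2, le_min_iff])]
      exact count_tsum n (min m m') (B m * B m')
    set R : ℝ≥0∞ := ∑' m, B m * wB n m with hR
    have hSle : ∑' k, ENNReal.ofReal (a (n + 1 + k)) ^ (2:ℝ) ≤ R * R := by
      rw [hS]
      have hb : ∀ m m' : ℕ, ∑' k, g k m * g k m' ≤ (B m * wB n m) * (B m' * wB n m') := by
        intro m m'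
        rw [hcount m m']
        calc ((min m m' + 1 - n : ℕ) : ℝ≥0∞) * (B m * B m')
            ≤ (wB n m * wB n m') * (B m * B m') := by
              apply mul_le_mul_left
              rw [show min m m' + 1 - n = min (m + 1 - n) (m' + 1 - n) by omega]
              exact min_le_sqrt (m + 1 - n) (m' + 1 - n)
        _ = (B m * wB n m) * (B m' * wB n m') := by ring
      calc ∑' m, ∑' m', ∑' k, g k m * g k m'
          ≤ ∑' m, ∑' m', (B m * wB n m) * (B m' * wB n m') :=
            ENNReal.tsum_le_tsum fun m => ENNReal.tsum_le_tsum fun m' => hb m m'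
      _ = (∑' m, B m * wB n m) ^ (2:ℝ) := (sq_tsum _).symm
      _ = R * R := by rw [rpow_two_e, hR]
    calc ((1 / ((n + 1 : ℕ) : ℝ≥0∞)) * ∑' k : ℕ, ENNReal.ofReal (a (n + 1 + k)) ^ (2 : ℝ)) ^ ((1 : ℝ) / 2)
        ≤ ((1 / ((n + 1 : ℕ) : ℝ≥0∞)) * (R * R)) ^ ((1 : ℝ) / 2) :=
          ENNReal.rpow_le_rpow (mul_le_mul_right hSle _) (by norm_num)
    _ = (1 / ((n + 1 : ℕ) : ℝ≥0∞)) ^ ((1:ℝ)/2) * ((R * R) ^ ((1:ℝ)/2)) :=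
          ENNReal.mul_rpow_of_nonneg _ _ (by norm_num)
    _ = invsq n * R := by rw [sqrt_mul_self_e]; rfl
    _ = ∑' m, invsq n * (B m * wB n m) := by rw [hR, ENNReal.tsum_mul_left]
  -- combine
  calc ∑' n : ℕ, ((1 / ((n + 1 : ℕ) : ℝ≥0∞)) *
        ∑' k : ℕ, ENNReal.ofReal (a (n + 1 + k)) ^ (2 : ℝ)) ^ ((1 : ℝ) / 2)
      ≤ ∑' n, ∑' m, invsq n * (B m * wB n m) := ENNReal.tsum_le_tsum hterm
  _ = ∑' m, ∑' n, invsq n * (B m * wB n m) := ENNReal.tsum_comm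
  _ = ∑' m, B m * (∑' n, wB n m * invsq n) := by
      refine tsum_congr fun m => ?_
      rw [← ENNReal.tsum_mul_left]
      exact tsum_congr fun n => by ring
  _ ≤ ∑' m, B m * ENNReal.ofReal (π/2 * ((m:ℝ)+1)) :=
      ENNReal.tsum_le_tsum fun m => mul_le_mul_right (hT_lemma m) _
  _ = ∑' m, ENNReal.ofReal (π / 2) * (((m + 1 : ℕ) : ℝ≥0∞) * B m) := by
      refine tsum_congr fun m => ?_
      rw [ENNReal.ofReal_mul (by positivity)]
      rw [show ENNReal.ofReal ((m:ℝ)+1) = ((m + 1 : ℕ) : ℝ≥0∞) by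
        rw [← ENNReal.ofReal_natCast (m+1)]; congr 1; push_cast; ring]
      ring
  _ = ENNReal.ofReal (π / 2) * ∑' m, ((m + 1 : ℕ) : ℝ≥0∞) * B m := ENNReal.tsum_mul_left
  _ = ENNReal.ofReal (π / 2) * ∑' n : ℕ, ENNReal.ofReal (a (n + 1)) := by rw [hRHS]
end

section
/- The constant π/2 is optimal in the strong discrete Stechkin inequality for q = 2: for every c < π/2 there exists a nonincreasing nonnegative sequence (a_n) with ∑_{n=1}^∞ (1/n · ∑_{k=n}^∞ a_k²)^{1/2} > c · ∑_{n=1}^∞ a_n < ∞. -/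
open Real
open scoped ENNReal

lemma stech_hasDerivAt (N x : ℝ) (hx : -1 < x) (hxN : x < N) :
    HasDerivAt (fun x => (N+1)/2 * arcsin ((2*x+1-N)/(N+1)) + Real.sqrt ((N-x)*(x+1)))
      (Real.sqrt ((N-x)/(x+1))) x := by
  have hx1 : 0 < x + 1 := by linarith
  have hNx : 0 < N - x := by linarith
  have hN1 : 0 < N + 1 := by linarith
  set u : ℝ := (2*x+1-N)/(N+1) with hu
  have hu1 : u ≠ -1 := by
    intro h; rw [hu, div_eq_iff hN1.ne'] at h; nlinarith
  have hu2 : u ≠ 1 := by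
    intro h; rw [hu, div_eq_iff hN1.ne'] at h; nlinarith
  have h1u : 1 - u ^ 2 = 4 * ((N-x)*(x+1)) / (N+1)^2 := by
    rw [eq_div_iff (by positivity : ((N:ℝ)+1)^2 ≠ 0), hu, div_pow, sub_mul, one_mul,
      div_mul_cancel₀ _ (by positivity : ((N:ℝ)+1)^2 ≠ 0)]
    ring
  set S : ℝ := Real.sqrt ((N-x)*(x+1)) with hS
  have hSpos : 0 < S := Real.sqrt_pos.2 (by positivity)
  have hsqrt1u : Real.sqrt (1 - u ^ 2) = 2 * S / (N+1) := by
    rw [h1u]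
    rw [show 4 * ((N-x)*(x+1)) / (N+1)^2 = (2/(N+1))^2 * ((N-x)*(x+1)) by field_simp; ring]
    rw [Real.sqrt_mul (by positivity), Real.sqrt_sq (by positivity)]
    ring
  have harc : HasDerivAt (fun x => arcsin ((2*x+1-N)/(N+1))) ((1 / Real.sqrt (1 - u^2)) * (2/(N+1))) x := by
    have hfun : (fun x : ℝ => (2*x+1-N)/(N+1)) = fun x : ℝ => (2*x+(1-N))/(N+1) := by
      funext y; ring
    have hin : HasDerivAt (fun x : ℝ => (2*x+1-N)/(N+1)) (2/(N+1)) x := by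
      rw [hfun]
      simpa using (((hasDerivAt_id x).const_mul 2).add_const (1-N)).div_const (N+1)
    exact (Real.hasDerivAt_arcsin hu1 hu2).comp x hin
  have hsq : HasDerivAt (fun x => Real.sqrt ((N-x)*(x+1))) ((N - 1 - 2*x) / (2 * S)) x := by
    have hin : HasDerivAt (fun x : ℝ => (N-x)*(x+1)) (N - 1 - 2*x) x := by
      have := ((hasDerivAt_id x).const_sub N).mul ((hasDerivAt_id x).add_const 1)
      simp only [id_eq] at this
      exact this.congr_deriv (by ring)
    have := (Real.hasDerivAt_sqrt (by positivity : (N-x)*(x+1) ≠ 0)).comp x hin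
    exact this.congr_deriv (by rw [← hS]; ring)
  have htot := (harc.const_mul ((N+1)/2)).add hsq
  refine htot.congr_deriv (Eq.symm ?_)
  rw [hsqrt1u]
  have e1 : Real.sqrt (N-x) * Real.sqrt (N-x) = N - x := Real.mul_self_sqrt hNx.le
  have key : Real.sqrt ((N-x)/(x+1)) = (N - x) / S := by
    rw [hS, Real.sqrt_div hNx.le, Real.sqrt_mul hNx.le,
      div_eq_div_iff (by positivity) (by positivity), ← mul_assoc, e1]
  rw [key]
  field_simp
  ring

lemma stech_contOn (N : ℝ) (hN : 1 ≤ N) :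
    ContinuousOn (fun x => Real.sqrt ((N-x)/(x+1))) (Set.Icc 0 N) := by
  apply Real.continuous_sqrt.comp_continuousOn
  apply ContinuousOn.div
  · exact (continuousOn_const.sub continuousOn_id)
  · exact (continuousOn_id.add continuousOn_const)
  · intro x hx; have := hx.1; positivity

lemma stech_integral (N : ℝ) (hN : 1 ≤ N) :
    ∫ x in (0:ℝ)..N, Real.sqrt ((N-x)/(x+1))
      = (N+1)/2 * (π/2 - arcsin ((1-N)/(N+1))) - Real.sqrt N := by
  have h0N : (0:ℝ) ≤ N := by linarith
  have hN1 : (0:ℝ) < N + 1 := by linarith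
  have := intervalIntegral.integral_eq_sub_of_hasDeriv_right_of_le h0N
    (f := fun x => (N+1)/2 * arcsin ((2*x+1-N)/(N+1)) + Real.sqrt ((N-x)*(x+1)))
    (f' := fun x => Real.sqrt ((N-x)/(x+1)))
    (by
      apply Continuous.continuousOn
      exact (continuous_const.mul (Real.continuous_arcsin.comp (by continuity))).add
        (Real.continuous_sqrt.comp (by continuity)))
    (fun x hx => (stech_hasDerivAt N x (by linarith [hx.1]) hx.2).hasDerivWithinAt)
    ((stech_contOn N hN).intervalIntegrable_of_Icc h0N)
  rw [this]
  beta_reduce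
  have e1 : (2*N+1-N)/(N+1) = 1 := by rw [div_eq_one_iff_eq hN1.ne']; ring
  have e2 : (2*0+1-N)/(N+1) = (1-N)/(N+1) := by norm_num
  rw [e1, e2, Real.arcsin_one]
  have e3 : (N-N)*(N+1) = 0 := by ring
  have e4 : (N-0)*(0+1) = N := by ring
  rw [e3, e4, Real.sqrt_zero]
  ring

lemma stech_tendsto :
    Filter.Tendsto (fun n : ℕ =>
      (((n:ℝ)+1)/2 * (π/2 - arcsin ((1-(n:ℝ))/((n:ℝ)+1))) - Real.sqrt n) / n)
      Filter.atTop (nhds (π/2)) := by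
  have h1 : Filter.Tendsto (fun n : ℕ => (1-(n:ℝ))/((n:ℝ)+1)) Filter.atTop (nhds (-1)) := by
    have : (fun n : ℕ => (1-(n:ℝ))/((n:ℝ)+1)) = fun n : ℕ => 2*(1/((n:ℝ)+1)) - 1 := by
      funext n
      have : ((n:ℝ)+1) ≠ 0 := by positivity
      field_simp
      ring
    rw [this]
    have := ((tendsto_one_div_add_atTop_nhds_zero_nat (𝕜 := ℝ)).const_mul 2).sub_const 1
    simpa using this
  have harc : Filter.Tendsto (fun n : ℕ => arcsin ((1-(n:ℝ))/((n:ℝ)+1)))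
      Filter.atTop (nhds (-(π/2))) := by
    have := (Real.continuous_arcsin.tendsto (-1)).comp h1
    simpa [Function.comp_def, Real.arcsin_neg, Real.arcsin_one] using this
  have hB : Filter.Tendsto (fun n : ℕ => π/2 - arcsin ((1-(n:ℝ))/((n:ℝ)+1)))
      Filter.atTop (nhds π) := by
    have := (tendsto_const_nhds (x := π/2)).sub harc
    simpa [show π/2 - -(π/2) = π by ring] using this
  have hA : Filter.Tendsto (fun n : ℕ => ((n:ℝ)+1)/(2*n)) Filter.atTop (nhds (1/2)) := by
    apply Filter.Tendsto.congr' (f₁ := fun n : ℕ => 1/2 + (1/2)*(1/(n:ℝ)))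
    · filter_upwards [Filter.eventually_ge_atTop 1] with n hn
      have hn0 : ((n:ℝ)) ≠ 0 := by positivity
      field_simp
    · have := ((tendsto_one_div_atTop_nhds_zero_nat (𝕜 := ℝ)).const_mul (1/2)).const_add (1/2)
      simpa using this
  have hC : Filter.Tendsto (fun n : ℕ => Real.sqrt n / n) Filter.atTop (nhds 0) := by
    apply Filter.Tendsto.congr' (f₁ := fun n : ℕ => (Real.sqrt n)⁻¹)
    · filter_upwards [Filter.eventually_ge_atTop 1] with n hn
      have hn1 : (1:ℝ) ≤ (n:ℝ) := by exact_mod_cast hn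
      have h0 : Real.sqrt n ≠ 0 := by positivity
      field_simp
      rw [Real.sq_sqrt (by positivity)]
    · have h := (tendsto_rpow_atTop (show (0:ℝ) < 1/2 by norm_num)).comp
        (tendsto_natCast_atTop_atTop (R := ℝ))
      have h2 := h.inv_tendsto_atTop
      apply h2.congr
      intro n
      simp [Function.comp, Real.sqrt_eq_rpow]
  have := (hA.mul hB).sub hC
  apply Filter.Tendsto.congr' (f₁ := fun n : ℕ =>
    ((n:ℝ)+1)/(2*n) * (π/2 - arcsin ((1-(n:ℝ))/((n:ℝ)+1))) - Real.sqrt n / n)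
  · filter_upwards [Filter.eventually_ge_atTop 1] with n hn
    have hn0 : ((n:ℝ)) ≠ 0 := by positivity
    field_simp
  · have e : (1:ℝ)/2 * π - 0 = π/2 := by ring
    rw [e] at this
    exact this

lemma stech_anti (N : ℝ) (hN : 1 ≤ N) :
    AntitoneOn (fun x => Real.sqrt ((N-x)/(x+1))) (Set.Icc 0 N) := by
  intro x hx y hy hxy
  apply Real.sqrt_le_sqrt
  rw [div_le_div_iff₀ (by linarith [hy.1]) (by linarith [hx.1])]
  nlinarith [hx.1, hy.2]

lemma stech_sum_lb (N : ℕ) (hN : 1 ≤ N) :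
    ∫ x in (0:ℝ)..N, Real.sqrt (((N:ℝ)-x)/(x+1))
      ≤ ∑ i ∈ Finset.range N, Real.sqrt (((N:ℝ)-i)/(i+1)) := by
  have hN1 : (1:ℝ) ≤ (N:ℝ) := by exact_mod_cast hN
  have ha : AntitoneOn (fun x => Real.sqrt (((N:ℝ)-x)/(x+1))) (Set.Icc 0 (0 + (N:ℝ))) := by
    rw [zero_add]; exact stech_anti (N:ℝ) hN1
  have h := ha.integral_le_sum
  simpa using h


/-- Optimality of the constant `π/2` in the strong discrete Stechkin inequality for `q = 2`. -/
theorem stechkin_strong_discrete_q2_optimal (c : ℝ) (hc : c < π / 2) :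
    ∃ a : ℕ → ℝ, (∀ n, 0 ≤ a n) ∧ Antitone a ∧ Summable a ∧
      ENNReal.ofReal (c * ∑' n : ℕ, a (n + 1)) <
        ∑' n : ℕ, ((1 / ((n + 1 : ℕ) : ℝ≥0∞)) *
          ∑' k : ℕ, ENNReal.ofReal (a (n + 1 + k)) ^ (2 : ℝ)) ^ ((1 : ℝ) / 2) := by
  -- choose N
  have hev := (stech_tendsto.eventually (eventually_gt_nhds hc)).and
    ((stech_tendsto.eventually (eventually_gt_nhds (by positivity : (0:ℝ) < π/2))).and
      (Filter.eventually_ge_atTop 1))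
  obtain ⟨N, hcN, h0N, hN1⟩ := hev.exists
  have hN1R : (1:ℝ) ≤ (N:ℝ) := by exact_mod_cast hN1
  have hNpos : (0:ℝ) < (N:ℝ) := by linarith
  set s : ℝ := ∑ i ∈ Finset.range N, (1/(N:ℝ)) * Real.sqrt (((N:ℝ)-i)/(i+1)) with hs
  have hss : s = (∑ i ∈ Finset.range N, Real.sqrt (((N:ℝ)-i)/(i+1))) / N := by
    rw [hs, Finset.sum_div]
    apply Finset.sum_congr rfl
    intro i _
    ring
  have h1 : c < (∫ x in (0:ℝ)..(N:ℝ), Real.sqrt (((N:ℝ)-x)/(x+1))) / N := by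
    rw [stech_integral (N:ℝ) hN1R]; exact hcN
  have h2 : 0 < (∫ x in (0:ℝ)..(N:ℝ), Real.sqrt (((N:ℝ)-x)/(x+1))) / N := by
    rw [stech_integral (N:ℝ) hN1R]; exact h0N
  have h3 : (∫ x in (0:ℝ)..(N:ℝ), Real.sqrt (((N:ℝ)-x)/(x+1))) / N ≤ s := by
    rw [hss]
    gcongr
    exact stech_sum_lb N hN1
  have hsgtc : c < s := lt_of_lt_of_le h1 h3
  have hs0 : 0 < s := lt_of_lt_of_le h2 h3
  -- the witness sequence
  refine ⟨fun n => if n ≤ N then 1/(N:ℝ) else 0, ?_, ?_, ?_, ?_⟩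
  · intro n; dsimp only; split
    · positivity
    · exact le_rfl
  · intro m n hmn
    dsimp only
    by_cases hn : n ≤ N
    · have hm : m ≤ N := hmn.trans hn
      simp [hn, hm]
    · simp only [if_neg hn]
      split
      · positivity
      · exact le_rfl
  · apply summable_of_ne_finset_zero (s := Finset.range (N+1))
    intro n hn
    simp only [Finset.mem_range, not_lt] at hn
    have : ¬ n ≤ N := by omega
    simp [this]
  · -- main inequality
    have htsum1 : ∑' n : ℕ, (if n + 1 ≤ N then 1/(N:ℝ) else 0) = 1 := by
      rw [tsum_eq_sum (s := Finset.range N) (by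
        intro n hn
        simp only [Finset.mem_range, not_lt] at hn
        have : ¬ n + 1 ≤ N := by omega
        simp [this])]
      rw [Finset.sum_congr rfl (fun n hn => by
        simp only [Finset.mem_range] at hn
        have : n + 1 ≤ N := by omega
        simp [this] : ∀ n ∈ Finset.range N,
          (if n + 1 ≤ N then 1/(N:ℝ) else 0) = 1/(N:ℝ))]
      rw [Finset.sum_const, Finset.card_range, nsmul_eq_mul]
      field_simp
    simp only []
    rw [htsum1, mul_one]
    -- lower bound the RHS by the partial sum over range N
    have hterm : ∀ n ∈ Finset.range N,
        ((1 / ((n + 1 : ℕ) : ℝ≥0∞)) *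
          ∑' k : ℕ, ENNReal.ofReal (if n + 1 + k ≤ N then 1/(N:ℝ) else 0) ^ (2 : ℝ))
            ^ ((1 : ℝ) / 2)
        = ENNReal.ofReal ((1/(N:ℝ)) * Real.sqrt (((N:ℝ)-n)/(n+1))) := by
      intro n hn
      simp only [Finset.mem_range] at hn
      -- inner tsum
      have hin : ∑' k : ℕ, ENNReal.ofReal (if n + 1 + k ≤ N then 1/(N:ℝ) else 0) ^ (2 : ℝ)
          = ENNReal.ofReal (((N - n : ℕ) : ℝ) * (1/(N:ℝ))^2) := by
        rw [tsum_eq_sum (s := Finset.range (N - n)) (by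
          intro k hk
          simp only [Finset.mem_range, not_lt] at hk
          have : ¬ n + 1 + k ≤ N := by omega
          simp only [this, if_false, ENNReal.ofReal_zero]
          rw [ENNReal.zero_rpow_of_pos (by norm_num)])]
        rw [Finset.sum_congr rfl (fun k hk => by
          simp only [Finset.mem_range] at hk
          have hkn : n + 1 + k ≤ N := by omega
          simp only [hkn, if_true]
          rw [ENNReal.ofReal_rpow_of_nonneg (by positivity) (by norm_num)]
          norm_num : ∀ k ∈ Finset.range (N - n),
            ENNReal.ofReal (if n + 1 + k ≤ N then 1/(N:ℝ) else 0) ^ (2 : ℝ)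
              = ENNReal.ofReal ((1/(N:ℝ))^2))]
        rw [Finset.sum_const, Finset.card_range, nsmul_eq_mul]
        rw [← ENNReal.ofReal_natCast (N - n), ← ENNReal.ofReal_mul (by positivity)]
      rw [hin]
      have hone : (1 / ((n + 1 : ℕ) : ℝ≥0∞)) = ENNReal.ofReal (1/((n:ℝ)+1)) := by
        rw [one_div, one_div, ENNReal.ofReal_inv_of_pos (by positivity)]
        congr 1
        rw [← ENNReal.ofReal_natCast (n+1)]
        congr 1
        push_cast
        ring
      rw [hone, ← ENNReal.ofReal_mul (by positivity)]
      rw [ENNReal.ofReal_rpow_of_nonneg (by positivity) (by norm_num)]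
      congr 1
      have hcast : ((N - n : ℕ) : ℝ) = (N:ℝ) - (n:ℝ) := by
        rw [Nat.cast_sub (by omega)]
      rw [hcast]
      rw [show (1/((n:ℝ)+1)) * (((N:ℝ) - n) * (1/(N:ℝ))^2)
          = (((N:ℝ)-n)/((n:ℝ)+1)) * (1/(N:ℝ))^2 by ring]
      rw [← Real.sqrt_eq_rpow]
      have hnN : (n:ℝ) < (N:ℝ) := by exact_mod_cast hn
      rw [Real.sqrt_mul (div_nonneg (by linarith) (by positivity)),
        Real.sqrt_sq (by positivity)]
      ring
    calc ENNReal.ofReal c < ENNReal.ofReal s := by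
          rw [ENNReal.ofReal_lt_ofReal_iff hs0]; exact hsgtc
      _ = ∑ n ∈ Finset.range N, ENNReal.ofReal ((1/(N:ℝ)) * Real.sqrt (((N:ℝ)-n)/(n+1))) := by
          rw [hs, ENNReal.ofReal_sum_of_nonneg (fun i _ => by positivity)]
      _ = ∑ n ∈ Finset.range N, ((1 / ((n + 1 : ℕ) : ℝ≥0∞)) *
            ∑' k : ℕ, ENNReal.ofReal (if n + 1 + k ≤ N then 1/(N:ℝ) else 0) ^ (2 : ℝ))
              ^ ((1 : ℝ) / 2) := (Finset.sum_congr rfl hterm).symm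
      _ ≤ _ := ENNReal.sum_le_tsum _
end

section
/- For each k₀ ∈ ℕ, let S(k₀) = ∑_{n=1}^{k₀} n^{-1/2} · ((k₀ - n + 1)/k₀²)^{1/2}. Then sup_{k₀ ∈ ℕ} S(k₀) = π/2. -/
open Real

namespace StechkinAux

noncomputable def f (m x : ℝ) : ℝ := 1 / Real.sqrt (x * (m - x))

noncomputable def G (m x : ℝ) : ℝ := 2 * Real.arcsin (Real.sqrt (x / m))

lemma sqrt_ineq1 {a b c : ℝ} (ha : 0 < a) (hb : 0 < b) (hc : 0 < c)
    (h : a + b ≤ 2 * c) : 2 / Real.sqrt c ≤ 1 / Real.sqrt a + 1 / Real.sqrt b := by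
  set p := Real.sqrt a with hp'
  set q := Real.sqrt b with hq'
  set r := Real.sqrt c with hr'
  have hp : 0 < p := Real.sqrt_pos.2 ha
  have hq : 0 < q := Real.sqrt_pos.2 hb
  have hr : 0 < r := Real.sqrt_pos.2 hc
  have hp2 : p ^ 2 = a := Real.sq_sqrt ha.le
  have hq2 : q ^ 2 = b := Real.sq_sqrt hb.le
  have hr2 : r ^ 2 = c := Real.sq_sqrt hc.le
  rw [div_add_div _ _ (ne_of_gt hp) (ne_of_gt hq), div_le_div_iff₀ hr (by positivity)]
  have key : (2 * (p * q)) ^ 2 ≤ ((q + p) * r) ^ 2 := by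
    nlinarith [sq_nonneg (p - q), sq_nonneg (p ^ 2 - q ^ 2), mul_pos hp hq,
      mul_nonneg (mul_pos hp hq).le (sq_nonneg (p - q)), sq_nonneg (p + q)]
  nlinarith [key, mul_pos hp hq, mul_pos (add_pos hq hp) hr]

lemma sqrt_ineq2 {a b w t : ℝ} (ha : 0 < a) (hb : 0 < b) (ht0 : 0 ≤ t) (ht1 : t ≤ 1)
    (hw : (1 - t) * a + t * b ≤ w) :
    1 / Real.sqrt w ≤ (1 - t) / Real.sqrt a + t / Real.sqrt b := by
  have hw0 : 0 < w := by rcases le_total a b with h | h <;> nlinarith [mul_nonneg ht0 (sub_nonneg.2 h), mul_nonneg (sub_nonneg.2 ht1) (sub_nonneg.2 h)]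
  set p := Real.sqrt a with hp'
  set q := Real.sqrt b with hq'
  set r := Real.sqrt w with hr'
  have hp : 0 < p := Real.sqrt_pos.2 ha
  have hq : 0 < q := Real.sqrt_pos.2 hb
  have hr : 0 < r := Real.sqrt_pos.2 hw0
  have hp2 : p ^ 2 = a := Real.sq_sqrt ha.le
  have hq2 : q ^ 2 = b := Real.sq_sqrt hb.le
  have hr2 : r ^ 2 = w := Real.sq_sqrt hw0.le
  have h1 : (1 - t) * p + t * q ≤ r := by
    have h2 : ((1 - t) * p + t * q) ^ 2 ≤ r ^ 2 := by
      nlinarith [sq_nonneg (p - q), mul_nonneg ht0 (sub_nonneg.2 ht1)]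
    nlinarith [h2, add_pos_of_nonneg_of_pos (mul_nonneg (sub_nonneg.2 ht1) hp.le) hr]
  rw [div_add_div _ _ (ne_of_gt hp) (ne_of_gt hq), div_le_div_iff₀ hr (by positivity)]
  have h3 : 0 ≤ (1 - t) * q + t * p :=
    add_nonneg (mul_nonneg (by linarith) hq.le) (mul_nonneg ht0 hp.le)
  nlinarith [mul_le_mul_of_nonneg_left h1 h3,
    mul_nonneg (mul_nonneg ht0 (sub_nonneg.2 ht1)) (sq_nonneg (p - q))]


lemma hasDerivAt_G {m x : ℝ} (hm : 0 < m) (hx : 0 < x) (hxm : x < m) :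
    HasDerivAt (G m) (f m x) x := by
  have hxm' : 0 < x / m := div_pos hx hm
  have hlt : x / m < 1 := (div_lt_one hm).2 hxm
  have hs0 : 0 < Real.sqrt (x / m) := Real.sqrt_pos.2 hxm'
  have hs1 : Real.sqrt (x / m) < 1 := by
    rw [show (1 : ℝ) = Real.sqrt 1 by simp]
    exact Real.sqrt_lt_sqrt hxm'.le hlt
  have h1 : HasDerivAt (fun y : ℝ => y / m) (1 / m) x := by
    simpa using (hasDerivAt_id x).div_const m
  have h2 : HasDerivAt (fun y : ℝ => Real.sqrt (y / m))
      (1 / (2 * Real.sqrt (x / m)) * (1 / m)) x :=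
    (Real.hasDerivAt_sqrt hxm'.ne').comp x h1
  have h3 : HasDerivAt Real.arcsin
      (1 / Real.sqrt (1 - Real.sqrt (x / m) ^ 2)) (Real.sqrt (x / m)) :=
    Real.hasDerivAt_arcsin (by nlinarith) (ne_of_lt hs1)
  have h4 := (h3.comp x h2).const_mul (2 : ℝ)
  refine h4.congr_deriv (Eq.symm ?_)
  rw [Real.sq_sqrt hxm'.le]
  have e1 : 1 - x / m = (m - x) / m := by field_simp
  rw [e1, Real.sqrt_div (by linarith) m, Real.sqrt_div hx.le m]
  have hsm : Real.sqrt m > 0 := Real.sqrt_pos.2 hm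
  have hsm2 : Real.sqrt m ^ 2 = m := Real.sq_sqrt hm.le
  have hsx : Real.sqrt x > 0 := Real.sqrt_pos.2 hx
  have hsy : Real.sqrt (m - x) > 0 := Real.sqrt_pos.2 (by linarith)
  unfold f
  rw [Real.sqrt_mul hx.le]
  field_simp
  ring_nf
  exact hsm2.symm


lemma f_contOn {m : ℝ} {s : Set ℝ} (hs : s ⊆ Set.Ioo 0 m) : ContinuousOn (f m) s := by
  apply ContinuousOn.div continuousOn_const
  · exact (Real.continuous_sqrt.comp (by continuity)).continuousOn
  · intro x hx
    have h := hs hx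
    have : 0 < x * (m - x) := mul_pos h.1 (by linarith [h.2])
    exact ne_of_gt (Real.sqrt_pos.2 this)

lemma integral_f {m a b : ℝ} (hm : 0 < m) (ha : 0 < a) (hb : b < m) (hab : a ≤ b) :
    ∫ x in a..b, f m x = G m b - G m a := by
  apply intervalIntegral.integral_eq_sub_of_hasDerivAt
  · intro x hx
    rw [Set.uIcc_of_le hab] at hx
    exact hasDerivAt_G hm (lt_of_lt_of_le ha hx.1) (lt_of_le_of_lt hx.2 hb)
  · apply (f_contOn (s := Set.uIcc a b) ?_).intervalIntegrable
    rw [Set.uIcc_of_le hab]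
    intro x hx
    exact ⟨lt_of_lt_of_le ha hx.1, lt_of_le_of_lt hx.2 hb⟩

lemma midpoint_le {m n : ℝ} (hn1 : 1 ≤ n) (hn2 : n ≤ m - 1) :
    f m n ≤ G m (n + 1 / 2) - G m (n - 1 / 2) := by
  have hm : 0 < m := by linarith
  have ha : 0 < n - 1 / 2 := by linarith
  have hb : n + 1 / 2 < m := by linarith
  have hab : n - 1 / 2 ≤ n + 1 / 2 := by linarith
  have hsub : Set.uIcc (n - 1 / 2) (n + 1 / 2) ⊆ Set.Ioo 0 m := by
    rw [Set.uIcc_of_le hab]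
    intro x hx
    exact ⟨lt_of_lt_of_le ha hx.1, lt_of_le_of_lt hx.2 hb⟩
  rw [← integral_f hm ha hb hab]
  have hint1 : IntervalIntegrable (f m) MeasureTheory.volume (n - 1/2) (n + 1/2) :=
    (f_contOn hsub).intervalIntegrable
  have hint2 : IntervalIntegrable (fun x => f m (2 * n - x)) MeasureTheory.volume
      (n - 1/2) (n + 1/2) := by
    apply ContinuousOn.intervalIntegrable
    apply ContinuousOn.comp (f_contOn (le_refl (Set.Ioo 0 m)))
      ((continuous_const.sub continuous_id).continuousOn)
    intro x hx
    rw [Set.uIcc_of_le hab] at hx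
    exact ⟨by show (0:ℝ) < 2 * n - x; linarith [hx.2], by show 2 * n - x < m; linarith [hx.1]⟩
  have hrefl : ∫ x in (n - 1/2)..(n + 1/2), f m (2 * n - x)
      = ∫ x in (n - 1/2)..(n + 1/2), f m x := by
    rw [intervalIntegral.integral_comp_sub_left (f m) (2 * n)]
    congr 1 <;> ring
  have hmono : (2:ℝ) * f m n ≤ 2 * ∫ x in (n - 1/2)..(n + 1/2), f m x := by
    have hpt : ∀ x ∈ Set.Icc (n - 1/2) (n + 1/2),
        2 * f m n ≤ f m x + f m (2 * n - x) := by
      intro x hx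
      have hx1 : 0 < x := by have := hx.1; linarith
      have hx2 : x < m := by have := hx.2; linarith
      have hy1 : 0 < 2 * n - x := by have := hx.2; linarith
      have hy2 : 2 * n - x < m := by have := hx.1; linarith
      have key := sqrt_ineq1 (a := x * (m - x)) (b := (2 * n - x) * (m - (2 * n - x)))
        (c := n * (m - n)) (mul_pos hx1 (by linarith)) (mul_pos hy1 (by linarith))
        (mul_pos (by linarith) (by linarith)) (by nlinarith [sq_nonneg (x - n)])
      unfold f
      calc 2 * (1 / Real.sqrt (n * (m - n))) = 2 / Real.sqrt (n * (m - n)) := by ring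
        _ ≤ _ := key
    have hc : ∫ x in (n - 1/2)..(n + 1/2), (2 * f m n : ℝ)
        ≤ ∫ x in (n - 1/2)..(n + 1/2), (f m x + f m (2 * n - x)) := by
      apply intervalIntegral.integral_mono_on hab intervalIntegrable_const
        (hint1.add hint2) hpt
    rw [intervalIntegral.integral_const, intervalIntegral.integral_add hint1 hint2, hrefl]
      at hc
    rw [smul_eq_mul] at hc
    linarith
  linarith

lemma trapezoid_le {m n : ℝ} (hn1 : 1 ≤ n) (hn2 : n + 1 ≤ m - 1) :
    G m (n + 1) - G m n ≤ (f m n + f m (n + 1)) / 2 := by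
  have hm : 0 < m := by linarith
  rw [← integral_f hm (by linarith) (by linarith) (by linarith)]
  have hsub : Set.uIcc n (n + 1) ⊆ Set.Ioo 0 m := by
    rw [Set.uIcc_of_le (by linarith)]
    intro x hx
    exact ⟨by linarith [hx.1], by linarith [hx.2]⟩
  have hint1 : IntervalIntegrable (f m) MeasureTheory.volume n (n + 1) :=
    (f_contOn hsub).intervalIntegrable
  have hint2 : IntervalIntegrable (fun x => f m n + (f m (n+1) - f m n) * (x - n))
      MeasureTheory.volume n (n + 1) := by
    apply Continuous.intervalIntegrable
    continuity
  have hpt : ∀ x ∈ Set.Icc n (n + 1),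
      f m x ≤ f m n + (f m (n+1) - f m n) * (x - n) := by
    intro x hx
    have key := sqrt_ineq2 (a := n * (m - n)) (b := (n + 1) * (m - (n + 1)))
      (w := x * (m - x)) (t := x - n)
      (mul_pos (by linarith) (by linarith)) (mul_pos (by linarith) (by linarith))
      (by linarith [hx.1]) (by linarith [hx.2])
      (by nlinarith [mul_nonneg (sub_nonneg.2 hx.1) (sub_nonneg.2 hx.2)])
    unfold f
    calc 1 / Real.sqrt (x * (m - x))
        ≤ (1 - (x - n)) / Real.sqrt (n * (m - n))
          + (x - n) / Real.sqrt ((n + 1) * (m - (n + 1))) := key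
      _ = 1 / Real.sqrt (n * (m - n)) + (1 / Real.sqrt ((n+1) * (m - (n+1)))
          - 1 / Real.sqrt (n * (m - n))) * (x - n) := by ring
  have hmono := intervalIntegral.integral_mono_on (by linarith : n ≤ n + 1)
    hint1 hint2 hpt
  have hval : ∫ x in n..(n+1), (f m n + (f m (n+1) - f m n) * (x - n))
      = (f m n + f m (n + 1)) / 2 := by
    rw [intervalIntegral.integral_add intervalIntegrable_const (by
      apply Continuous.intervalIntegrable; continuity),
      intervalIntegral.integral_const, intervalIntegral.integral_const_mul,
      intervalIntegral.integral_sub (intervalIntegral.intervalIntegrable_id)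
        intervalIntegrable_const,
      integral_id, intervalIntegral.integral_const]
    simp only [smul_eq_mul]
    ring
  rw [hval] at hmono
  exact hmono

lemma G_reflect {m y : ℝ} (hm : 0 < m) (hy0 : 0 ≤ y) (hym : y ≤ m) :
    G m (m - y) = π - G m y := by
  unfold G
  have h1 : Real.sqrt ((m - y) / m) = Real.sqrt (1 - Real.sqrt (y / m) ^ 2) := by
    rw [Real.sq_sqrt (div_nonneg hy0 hm.le)]
    congr 1
    field_simp
  rw [h1, ← Real.arccos_eq_arcsin (Real.sqrt_nonneg _),
    Real.arccos_eq_pi_div_two_sub_arcsin]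
  ring

lemma f_nonneg (m x : ℝ) : 0 ≤ f m x := by unfold f; positivity

lemma T_upper {k : ℕ} (hk : 1 ≤ k) :
    ∑ i ∈ Finset.range k, f ((k : ℝ) + 1) ((i : ℝ) + 1)
      ≤ π - 4 * Real.arcsin (Real.sqrt (1 / (2 * ((k : ℝ) + 1)))) := by
  set m : ℝ := (k : ℝ) + 1 with hm'
  have hm : 0 < m := by positivity
  have hk' : (1 : ℝ) ≤ (k : ℝ) := by exact_mod_cast hk
  have step : ∀ i ∈ Finset.range k,
      f m ((i : ℝ) + 1) ≤ G m (((i+1 : ℕ) : ℝ) + 1/2) - G m (((i : ℕ) : ℝ) + 1/2) := by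
    intro i hi
    have hik : (i : ℝ) + 1 ≤ (k : ℝ) := by
      have := Finset.mem_range.1 hi
      exact_mod_cast Nat.succ_le_of_lt this
    have h := midpoint_le (m := m) (n := (i : ℝ) + 1) (by linarith [Nat.cast_nonneg (α := ℝ) i])
      (by rw [hm']; linarith)
    convert h using 2 <;> push_cast <;> ring
  calc ∑ i ∈ Finset.range k, f m ((i : ℝ) + 1)
      ≤ ∑ i ∈ Finset.range k,
        (G m (((i+1 : ℕ) : ℝ) + 1/2) - G m (((i : ℕ) : ℝ) + 1/2)) := Finset.sum_le_sum step
    _ = G m ((k : ℝ) + 1/2) - G m ((0 : ℝ) + 1/2) := by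
        rw [Finset.sum_range_sub (fun j : ℕ => G m ((j : ℝ) + 1/2))]
        norm_num
    _ = π - 4 * Real.arcsin (Real.sqrt (1 / (2 * m))) := by
        have h1 : (k : ℝ) + 1/2 = m - 1/2 := by rw [hm']; ring
        rw [h1, G_reflect hm (by norm_num) (by linarith)]
        have h2 : (0 : ℝ) + 1/2 = 1/2 := by norm_num
        rw [h2]
        have h3 : (1 : ℝ) / 2 / m = 1 / (2 * m) := by field_simp
        unfold G
        rw [h3]
        ring

lemma T_lower {k : ℕ} (hk : 1 ≤ k) :
    π - 4 * Real.arcsin (Real.sqrt (1 / ((k : ℝ) + 1)))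
      ≤ ∑ i ∈ Finset.range k, f ((k : ℝ) + 1) ((i : ℝ) + 1) := by
  set m : ℝ := (k : ℝ) + 1 with hm'
  have hm : 0 < m := by positivity
  have hk' : (1 : ℝ) ≤ (k : ℝ) := by exact_mod_cast hk
  set T := ∑ i ∈ Finset.range k, f m ((i : ℝ) + 1) with hT'
  -- telescoping sum over range (k-1)
  have tel : ∑ i ∈ Finset.range (k - 1),
      (G m (((i+1 : ℕ) : ℝ) + 1) - G m (((i : ℕ) : ℝ) + 1))
      = G m (((k - 1 : ℕ) : ℝ) + 1) - G m 1 := by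
    rw [Finset.sum_range_sub (fun j : ℕ => G m ((j : ℝ) + 1))]
    norm_num
  have hcast : ((k - 1 : ℕ) : ℝ) + 1 = (k : ℝ) := by
    have : ((k - 1 : ℕ) : ℝ) = (k : ℝ) - 1 := by
      rw [Nat.cast_sub hk]; norm_num
    rw [this]; ring
  have step : ∀ i ∈ Finset.range (k - 1),
      G m (((i+1 : ℕ) : ℝ) + 1) - G m (((i : ℕ) : ℝ) + 1)
        ≤ (f m ((i : ℝ) + 1) + f m (((i+1 : ℕ) : ℝ) + 1)) / 2 := by
    intro i hi
    have hik : i + 1 ≤ k - 1 := Nat.succ_le_of_lt (Finset.mem_range.1 hi)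
    have hik' : (i : ℝ) + 2 ≤ (k : ℝ) := by
      have : i + 2 ≤ k := by omega
      exact_mod_cast this
    have h := trapezoid_le (m := m) (n := (i : ℝ) + 1)
      (by linarith [Nat.cast_nonneg (α := ℝ) i]) (by rw [hm']; linarith)
    convert h using 3 <;> push_cast <;> ring
  have sum_le_T : ∑ i ∈ Finset.range (k - 1),
      (f m ((i : ℝ) + 1) + f m (((i+1 : ℕ) : ℝ) + 1)) / 2 ≤ T := by
    have e1 : ∑ i ∈ Finset.range (k - 1), f m ((i : ℝ) + 1) ≤ T := by
      apply Finset.sum_le_sum_of_subset_of_nonneg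
      · exact Finset.range_subset_range.2 (Nat.sub_le k 1)
      · intro i _ _; exact f_nonneg _ _
    have e2 : ∑ i ∈ Finset.range (k - 1), f m (((i+1 : ℕ) : ℝ) + 1) ≤ T := by
      have hsplit := Finset.sum_range_succ' (fun j : ℕ => f m ((j : ℝ) + 1)) (k - 1)
      have hkk : k - 1 + 1 = k := Nat.succ_pred_eq_of_pos hk
      rw [hkk] at hsplit
      have : ∑ i ∈ Finset.range (k-1), f m (((i+1 : ℕ) : ℝ) + 1)
          = T - f m ((0 : ℝ) + 1) := by
        rw [hT', hsplit]
        push_cast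
        ring
      rw [this]
      have := f_nonneg m ((0 : ℝ) + 1)
      linarith
    calc ∑ i ∈ Finset.range (k - 1),
        (f m ((i : ℝ) + 1) + f m (((i+1 : ℕ) : ℝ) + 1)) / 2
        = (∑ i ∈ Finset.range (k - 1), f m ((i : ℝ) + 1)
          + ∑ i ∈ Finset.range (k - 1), f m (((i+1 : ℕ) : ℝ) + 1)) / 2 := by
          rw [← Finset.sum_add_distrib, Finset.sum_div]
      _ ≤ T := by linarith
  have hGk : G m (k : ℝ) - G m 1 ≤ T := by
    rw [← hcast, ← tel]
    exact le_trans (Finset.sum_le_sum step) sum_le_T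
  have hGval : G m (k : ℝ) = π - G m 1 := by
    have : (k : ℝ) = m - 1 := by rw [hm']; ring
    rw [this, G_reflect hm (by norm_num) (by linarith)]
  have hG1 : G m 1 = 2 * Real.arcsin (Real.sqrt (1 / m)) := by unfold G; norm_num
  rw [hGval, hG1] at hGk
  linarith

lemma sum_Icc_range (F : ℕ → ℝ) (k : ℕ) :
    ∑ n ∈ Finset.Icc 1 k, F n = ∑ i ∈ Finset.range k, F (i + 1) := by
  induction k with
  | zero => simp
  | succ k ih =>
      rw [Finset.sum_Icc_succ_top (Nat.le_add_left 1 k), ih, Finset.sum_range_succ]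

lemma S_eq {k : ℕ} (hk : 1 ≤ k) :
    ∑ n ∈ Finset.Icc 1 k, (1 / Real.sqrt n) * Real.sqrt (((k : ℝ) - n + 1) / (k : ℝ) ^ 2)
      = ((k : ℝ) + 1) / (2 * k) * ∑ i ∈ Finset.range k, f ((k : ℝ) + 1) ((i : ℝ) + 1) := by
  have hk0 : (0 : ℝ) < (k : ℝ) := by exact_mod_cast hk
  -- u i = the term at n = i+1
  set u : ℕ → ℝ := fun i => Real.sqrt ((k : ℝ) - i) / ((k : ℝ) * Real.sqrt ((i : ℝ) + 1))
    with hu'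
  have hS : ∑ n ∈ Finset.Icc 1 k, (1 / Real.sqrt n) * Real.sqrt (((k : ℝ) - n + 1) / (k : ℝ) ^ 2)
      = ∑ i ∈ Finset.range k, u i := by
    rw [sum_Icc_range (fun n : ℕ => (1 / Real.sqrt n) * Real.sqrt (((k : ℝ) - n + 1) / (k : ℝ) ^ 2)) k]
    apply Finset.sum_congr rfl
    intro i hi
    have hik : (i : ℝ) ≤ (k : ℝ) := by
      have := (Finset.mem_range.1 hi).le
      exact_mod_cast this
    have e1 : ((k : ℝ) - ((i + 1 : ℕ) : ℝ) + 1) = (k : ℝ) - i := by push_cast; ring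
    rw [e1]
    rw [Real.sqrt_div (by linarith) ((k : ℝ) ^ 2), Real.sqrt_sq hk0.le]
    rw [hu']
    push_cast
    field_simp
  rw [hS]
  -- reflection
  have hrefl : ∑ i ∈ Finset.range k, u i = ∑ i ∈ Finset.range k, u (k - 1 - i) :=
    (Finset.sum_range_reflect u k).symm
  have key : ∀ i ∈ Finset.range k,
      u i + u (k - 1 - i) = ((k : ℝ) + 1) / (k : ℝ) * f ((k : ℝ) + 1) ((i : ℝ) + 1) := by
    intro i hi
    have hik : i < k := Finset.mem_range.1 hi
    have hcast : ((k - 1 - i : ℕ) : ℝ) = (k : ℝ) - 1 - i := by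
      have h1 : k - 1 - i + (1 + i) = k := by omega
      have := congrArg (fun n : ℕ => (n : ℝ)) h1
      push_cast at this
      linarith
    have hik' : (i : ℝ) + 1 ≤ (k : ℝ) := by exact_mod_cast hik
    have hA : (0 : ℝ) < (k : ℝ) - i := by linarith
    have hB : (0 : ℝ) < (i : ℝ) + 1 := by positivity
    rw [hu']
    simp only [hcast]
    have e2 : (k : ℝ) - ((k : ℝ) - 1 - i) = (i : ℝ) + 1 := by ring
    have e3 : ((k : ℝ) - 1 - i) + 1 = (k : ℝ) - i := by ring
    rw [e2, e3]
    unfold f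
    have e4 : ((k : ℝ) + 1 - ((i : ℝ) + 1)) = (k : ℝ) - i := by ring
    rw [e4]
    have hsA : (0:ℝ) < Real.sqrt ((k : ℝ) - i) := Real.sqrt_pos.2 hA
    have hsB : (0:ℝ) < Real.sqrt ((i : ℝ) + 1) := Real.sqrt_pos.2 hB
    have hprod : Real.sqrt (((i : ℝ) + 1) * ((k : ℝ) - i))
        = Real.sqrt ((i : ℝ) + 1) * Real.sqrt ((k : ℝ) - i) := Real.sqrt_mul hB.le _
    rw [hprod]
    have hA2 : Real.sqrt ((k : ℝ) - i) ^ 2 = (k : ℝ) - i := Real.sq_sqrt hA.le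
    have hB2 : Real.sqrt ((i : ℝ) + 1) ^ 2 = (i : ℝ) + 1 := Real.sq_sqrt hB.le
    field_simp
    linear_combination hA2 + hB2
  have h2 : (2 : ℝ) * ∑ i ∈ Finset.range k, u i
      = ((k : ℝ) + 1) / (k : ℝ) * ∑ i ∈ Finset.range k, f ((k : ℝ) + 1) ((i : ℝ) + 1) := by
    calc (2 : ℝ) * ∑ i ∈ Finset.range k, u i
        = ∑ i ∈ Finset.range k, u i + ∑ i ∈ Finset.range k, u (k - 1 - i) := by
          rw [← hrefl]; ring
      _ = ∑ i ∈ Finset.range k, (u i + u (k - 1 - i)) := by rw [Finset.sum_add_distrib]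
      _ = ∑ i ∈ Finset.range k, ((k : ℝ) + 1) / (k : ℝ) * f ((k : ℝ) + 1) ((i : ℝ) + 1) :=
          Finset.sum_congr rfl key
      _ = ((k : ℝ) + 1) / (k : ℝ) * ∑ i ∈ Finset.range k, f ((k : ℝ) + 1) ((i : ℝ) + 1) := by
          rw [Finset.mul_sum]
  have := h2
  field_simp at this ⊢
  linarith

lemma S_le_pi_div_two {k : ℕ} (hk : 1 ≤ k) :
    ∑ n ∈ Finset.Icc 1 k, (1 / Real.sqrt n) * Real.sqrt (((k : ℝ) - n + 1) / (k : ℝ) ^ 2)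
      ≤ π / 2 := by
  have hk0 : (0 : ℝ) < (k : ℝ) := by exact_mod_cast hk
  have hk1 : (1 : ℝ) ≤ (k : ℝ) := by exact_mod_cast hk
  set m : ℝ := (k : ℝ) + 1 with hm'
  have hm : (2 : ℝ) ≤ m := by rw [hm']; linarith
  set a := Real.arcsin (Real.sqrt (1 / (2 * m))) with ha'
  have hT := T_upper hk
  have hTnn : 0 ≤ ∑ i ∈ Finset.range k, f ((k : ℝ) + 1) ((i : ℝ) + 1) :=
    Finset.sum_nonneg fun i _ => f_nonneg _ _
  have hsle1 : Real.sqrt (1 / (2 * m)) ≤ 1 := by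
    have h1 : (1 : ℝ) / (2 * m) ≤ 1 := by
      rw [div_le_one (by linarith)]; linarith
    calc Real.sqrt (1 / (2 * m)) ≤ Real.sqrt 1 := Real.sqrt_le_sqrt h1
      _ = 1 := Real.sqrt_one
  have ht_le_a : Real.sqrt (1 / (2 * m)) ≤ a := by
    have h1 := Real.sin_le (Real.arcsin_nonneg.2 (Real.sqrt_nonneg (1 / (2 * m))))
    rwa [Real.sin_arcsin (le_trans (by norm_num) (Real.sqrt_nonneg _)) hsle1] at h1
  have hpi_le : π ≤ 4 * m * a := by
    have e1 : Real.sqrt (1 / (2 * m)) = 1 / Real.sqrt (2 * m) := by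
      rw [one_div, one_div, Real.sqrt_inv]
    have h2 : (2 : ℝ) ≤ Real.sqrt (2 * m) := by
      have ha4 : Real.sqrt 4 ≤ Real.sqrt (2 * m) := Real.sqrt_le_sqrt (by linarith)
      have hb4 : Real.sqrt (4 : ℝ) = 2 := by
        rw [show (4:ℝ) = 2 ^ 2 by norm_num, Real.sqrt_sq (by norm_num : (0:ℝ) ≤ 2)]
      linarith
    have h3 : 4 * m * (1 / Real.sqrt (2 * m)) = 2 * Real.sqrt (2 * m) := by
      rw [mul_one_div]
      rw [show (4:ℝ) * m = 2 * (2 * m) by ring, mul_div_assoc, Real.div_sqrt]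
    have h4 : π ≤ 4 * m * (1 / Real.sqrt (2 * m)) := by
      rw [h3]
      calc π ≤ 4 := Real.pi_le_four
        _ ≤ 2 * Real.sqrt (2 * m) := by linarith
    calc π ≤ 4 * m * (1 / Real.sqrt (2 * m)) := h4
      _ ≤ 4 * m * a := by
          rw [← e1]
          exact mul_le_mul_of_nonneg_left ht_le_a (by linarith)
  rw [S_eq hk]
  calc ((k : ℝ) + 1) / (2 * k) * ∑ i ∈ Finset.range k, f ((k : ℝ) + 1) ((i : ℝ) + 1)
      ≤ ((k : ℝ) + 1) / (2 * k) * (π - 4 * a) := by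
        apply mul_le_mul_of_nonneg_left _ (by positivity)
        rw [← hm'] at hT ⊢
        exact hT
    _ ≤ π / 2 := by
        rw [div_mul_eq_mul_div, div_le_div_iff₀ (by positivity) (by norm_num)]
        have : m = (k : ℝ) + 1 := hm'
        nlinarith [hpi_le]

lemma S_lower {k : ℕ} (hk : 1 ≤ k) :
    π / 2 - 2 * Real.arcsin (Real.sqrt (1 / ((k : ℝ) + 1)))
      ≤ ∑ n ∈ Finset.Icc 1 k, (1 / Real.sqrt n) * Real.sqrt (((k : ℝ) - n + 1) / (k : ℝ) ^ 2) := by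
  have hk0 : (0 : ℝ) < (k : ℝ) := by exact_mod_cast hk
  have hT := T_lower hk
  have hTnn : 0 ≤ ∑ i ∈ Finset.range k, f ((k : ℝ) + 1) ((i : ℝ) + 1) :=
    Finset.sum_nonneg fun i _ => f_nonneg _ _
  rw [S_eq hk]
  have hcoef : (1 : ℝ) / 2 ≤ ((k : ℝ) + 1) / (2 * k) := by
    rw [div_le_div_iff₀ (by norm_num) (by positivity)]
    linarith
  calc π / 2 - 2 * Real.arcsin (Real.sqrt (1 / ((k : ℝ) + 1)))
      ≤ (1 / 2) * ∑ i ∈ Finset.range k, f ((k : ℝ) + 1) ((i : ℝ) + 1) := by linarith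
    _ ≤ ((k : ℝ) + 1) / (2 * k) * ∑ i ∈ Finset.range k, f ((k : ℝ) + 1) ((i : ℝ) + 1) :=
        mul_le_mul_of_nonneg_right hcoef hTnn

end StechkinAux

open StechkinAux

/-- `sup_{k₀ ∈ ℕ} ∑_{n=1}^{k₀} n^{-1/2} ((k₀ - n + 1)/k₀²)^{1/2} = π/2`. -/

theorem stechkin_vertex_sup :
    (⨆ k : ℕ+, ∑ n ∈ Finset.Icc 1 (k : ℕ),
        (1 / Real.sqrt n) * Real.sqrt (((k : ℝ) - n + 1) / (k : ℝ) ^ 2)) = π / 2 := by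
  have hcast : ∀ K : ℕ+, ((K : ℕ) : ℝ) = (K : ℝ) := fun K => by norm_cast
  have hub : ∀ K : ℕ+, (∑ n ∈ Finset.Icc 1 (K : ℕ),
      (1 / Real.sqrt n) * Real.sqrt (((K : ℝ) - n + 1) / (K : ℝ) ^ 2)) ≤ π / 2 := by
    intro K
    have := S_le_pi_div_two (k := (K : ℕ)) K.one_le
    rw [hcast K] at this
    exact this
  have hbdd : BddAbove (Set.range fun K : ℕ+ => ∑ n ∈ Finset.Icc 1 (K : ℕ),
      (1 / Real.sqrt n) * Real.sqrt (((K : ℝ) - n + 1) / (K : ℝ) ^ 2)) := by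
    refine ⟨π / 2, ?_⟩
    rintro x ⟨K, rfl⟩
    exact hub K
  apply le_antisymm (ciSup_le hub)
  refine le_of_forall_lt fun c hc => ?_
  -- find K with c < S K
  have t1 : Filter.Tendsto (fun n : ℕ => ((n : ℝ) + 2)) Filter.atTop Filter.atTop :=
    Filter.tendsto_atTop_add_const_right _ 2 tendsto_natCast_atTop_atTop
  have t2 : Filter.Tendsto (fun n : ℕ => 1 / ((n : ℝ) + 2)) Filter.atTop (nhds 0) := by
    simpa only [one_div, Pi.inv_def] using t1.inv_tendsto_atTop
  have t3 : Filter.Tendsto (fun n : ℕ => Real.sqrt (1 / ((n : ℝ) + 2)))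
      Filter.atTop (nhds 0) :=
    (Real.continuous_sqrt.tendsto' 0 0 Real.sqrt_zero).comp t2
  have t4 : Filter.Tendsto (fun n : ℕ => Real.arcsin (Real.sqrt (1 / ((n : ℝ) + 2))))
      Filter.atTop (nhds 0) :=
    (Real.continuous_arcsin.tendsto' 0 0 Real.arcsin_zero).comp t3
  have t5 : Filter.Tendsto (fun n : ℕ => 2 * Real.arcsin (Real.sqrt (1 / ((n : ℝ) + 2))))
      Filter.atTop (nhds 0) := by
    simpa using t4.const_mul (2 : ℝ)
  have hev : ∀ᶠ n : ℕ in Filter.atTop,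
      2 * Real.arcsin (Real.sqrt (1 / ((n : ℝ) + 2))) < π / 2 - c :=
    t5.eventually_lt_const (by linarith)
  obtain ⟨n, hn⟩ := hev.exists
  set K : ℕ+ := ⟨n + 1, Nat.succ_pos n⟩ with hK'
  have hKnat : (K : ℕ) = n + 1 := rfl
  have hlow := S_lower (k := (K : ℕ)) K.one_le
  rw [hcast K] at hlow
  have hKr : (K : ℝ) = (n : ℝ) + 1 := by
    rw [← hcast K, hKnat]; push_cast; ring
  have hc2 : c < ∑ m ∈ Finset.Icc 1 (K : ℕ),
      (1 / Real.sqrt m) * Real.sqrt (((K : ℝ) - m + 1) / (K : ℝ) ^ 2) := by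
    have : (K : ℝ) + 1 = (n : ℝ) + 2 := by rw [hKr]; ring
    rw [this] at hlow
    linarith
  exact lt_of_lt_of_le hc2 (le_ciSup hbdd K)
end

section
/- For a > 1, the function x ↦ ((x+1)·(π/2) − x^{1/2} − (x+1)·arctan(x^{−1/2})) / x is monotonically increasing on [1, ∞), with derivative (x^{1/2} − arctan(x^{1/2}))/x². -/
open Real

lemma deriv_aux {x : ℝ} (hx : 1 ≤ x) :
    HasDerivAt (fun x : ℝ =>
        ((x + 1) * (π / 2) - Real.sqrt x - (x + 1) * Real.arctan (1 / Real.sqrt x)) / x)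
      ((Real.sqrt x - Real.arctan (Real.sqrt x)) / x ^ 2) x := by
  have hx0 : (0 : ℝ) < x := lt_of_lt_of_le one_pos hx
  have hs0 : 0 < Real.sqrt x := Real.sqrt_pos.mpr hx0
  have hsq : Real.sqrt x * Real.sqrt x = x := Real.mul_self_sqrt hx0.le
  have hsqrt : HasDerivAt Real.sqrt (1 / (2 * Real.sqrt x)) x :=
    Real.hasDerivAt_sqrt hx0.ne'
  have hinv : HasDerivAt (fun y : ℝ => 1 / Real.sqrt y)
      (-(1 / (2 * Real.sqrt x)) / (Real.sqrt x) ^ 2) x := by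
    simpa [one_div] using hsqrt.fun_inv hs0.ne'
  have harctan : HasDerivAt (fun y : ℝ => Real.arctan (1 / Real.sqrt y))
      (1 / (1 + (1 / Real.sqrt x) ^ 2) * (-(1 / (2 * Real.sqrt x)) / (Real.sqrt x) ^ 2)) x :=
    by have := (Real.hasDerivAt_arctan (1 / Real.sqrt x)).comp x hinv; exact this
  have hid : HasDerivAt (fun y : ℝ => y + 1) 1 x := (hasDerivAt_id x).add_const 1
  have hnum : HasDerivAt (fun y : ℝ =>
      (y + 1) * (π / 2) - Real.sqrt y - (y + 1) * Real.arctan (1 / Real.sqrt y))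
      (1 * (π / 2) - 1 / (2 * Real.sqrt x) -
        (1 * Real.arctan (1 / Real.sqrt x) +
          (x + 1) * (1 / (1 + (1 / Real.sqrt x) ^ 2) * (-(1 / (2 * Real.sqrt x)) / (Real.sqrt x) ^ 2)))) x :=
    ((hid.mul_const (π / 2)).sub hsqrt).sub (hid.mul harctan)
  have h := hnum.fun_div (hasDerivAt_id x) hx0.ne'
  refine h.congr_deriv ?_
  simp only [id]
  have harc : Real.arctan (1 / Real.sqrt x) = π / 2 - Real.arctan (Real.sqrt x) := by
    rw [one_div]; exact Real.arctan_inv_of_pos hs0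
  rw [harc]
  field_simp
  ring_nf
  rw [Real.sq_sqrt hx0.le]
  ring

/-- The function `x ↦ ((x+1)(π/2) − √x − (x+1) arctan(x^{-1/2}))/x` is monotonically
increasing on `[1, ∞)`, with derivative `(√x − arctan √x)/x²`. -/
theorem f_monotone_with_derivative :
    MonotoneOn (fun x : ℝ =>
        ((x + 1) * (π / 2) - Real.sqrt x - (x + 1) * Real.arctan (1 / Real.sqrt x)) / x)
      (Set.Ici (1 : ℝ)) ∧
    ∀ x : ℝ, 1 ≤ x →
      HasDerivAt (fun x : ℝ =>
          ((x + 1) * (π / 2) - Real.sqrt x - (x + 1) * Real.arctan (1 / Real.sqrt x)) / x)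
        ((Real.sqrt x - Real.arctan (Real.sqrt x)) / x ^ 2) x := by
  constructor
  · apply monotoneOn_of_deriv_nonneg (convex_Ici 1)
    · intro x hx
      exact (deriv_aux hx).continuousAt.continuousWithinAt
    · intro x hx
      rw [interior_Ici] at hx
      exact (deriv_aux hx.le).differentiableAt.differentiableWithinAt
    · intro x hx
      rw [interior_Ici] at hx
      rw [(deriv_aux hx.le).deriv]
      have hx0 : (0 : ℝ) < x := lt_trans one_pos hx
      have hs0 : 0 < Real.sqrt x := Real.sqrt_pos.mpr hx0
      have harc : Real.arctan (Real.sqrt x) ≤ Real.sqrt x := by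
        by_contra hlt
        push_neg at hlt
        have h1 : Real.arctan (Real.sqrt x) < Real.tan (Real.arctan (Real.sqrt x)) :=
          Real.lt_tan (by simpa using Real.arctan_strictMono hs0) (Real.arctan_lt_pi_div_two _)
        rw [Real.tan_arctan] at h1
        linarith
      exact div_nonneg (sub_nonneg.mpr harc) (sq_nonneg x)
  · intro x hx
    exact deriv_aux hx
end

section
/- For 0 < p ≤ 1, the sequence A′_n = ((n+1)^p − (n−1)^p) / n^{p−1} (n ∈ ℕ, n ≥ 1) is monotonically decreasing; in particular ((n+1)^p − (n−1)^p)/n^{p−1} ≤ 2^p for all n ≥ 1. -/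
open Real

section Aux

variable {p : ℝ}

private lemma psi_convex (hp0 : 0 < p) (hp1 : p ≤ 1) :
    ConvexOn ℝ (Set.Icc (0:ℝ) 1) (fun t => (1 + t) ^ p - (1 - t) ^ p) := by
  have hint : interior (Set.Icc (0:ℝ) 1) = Set.Ioo 0 1 := interior_Icc
  apply convexOn_of_hasDerivWithinAt2_nonneg (f' := fun t => p * (1 + t) ^ (p - 1)
      + p * (1 - t) ^ (p - 1))
      (f'' := fun t => p * (p - 1) * ((1 + t) ^ (p - 2) - (1 - t) ^ (p - 2)))
      (convex_Icc 0 1)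
  · -- continuity
    apply ContinuousOn.sub
    · exact (Real.continuous_rpow_const hp0.le).comp_continuousOn
        (continuous_const.add continuous_id).continuousOn
    · exact (Real.continuous_rpow_const hp0.le).comp_continuousOn
        (continuous_const.sub continuous_id).continuousOn
  · intro x hx
    rw [hint] at hx
    have h1 : (0:ℝ) < 1 + x := by linarith [hx.1]
    have h2 : (0:ℝ) < 1 - x := by linarith [hx.2]
    have d1 : HasDerivAt (fun t : ℝ => (1 + t) ^ p) (p * (1 + x) ^ (p - 1) * 1) x :=
      (Real.hasDerivAt_rpow_const (Or.inl h1.ne')).comp x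
        ((hasDerivAt_id x).const_add 1)
    have d2 : HasDerivAt (fun t : ℝ => (1 - t) ^ p) (p * (1 - x) ^ (p - 1) * (-1)) x :=
      (Real.hasDerivAt_rpow_const (Or.inl h2.ne')).comp x
        ((hasDerivAt_id x).const_sub 1)
    have := (d1.sub d2).hasDerivWithinAt (s := interior (Set.Icc (0:ℝ) 1))
    convert this using 1
    · rfl
    · rfl
    · rfl
    ring
  · intro x hx
    rw [hint] at hx
    have h1 : (0:ℝ) < 1 + x := by linarith [hx.1]
    have h2 : (0:ℝ) < 1 - x := by linarith [hx.2]
    have d1 : HasDerivAt (fun t : ℝ => p * (1 + t) ^ (p - 1))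
        (p * ((p - 1) * (1 + x) ^ (p - 1 - 1) * 1)) x :=
      (((Real.hasDerivAt_rpow_const (p := p - 1) (Or.inl h1.ne')).comp x
        ((hasDerivAt_id x).const_add 1))).const_mul p
    have d2 : HasDerivAt (fun t : ℝ => p * (1 - t) ^ (p - 1))
        (p * ((p - 1) * (1 - x) ^ (p - 1 - 1) * (-1))) x :=
      (((Real.hasDerivAt_rpow_const (p := p - 1) (Or.inl h2.ne')).comp x
        ((hasDerivAt_id x).const_sub 1))).const_mul p
    have := (d1.add d2).hasDerivWithinAt (s := interior (Set.Icc (0:ℝ) 1))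
    convert this using 1
    · rfl
    · rfl
    · rfl
    rw [show p - 1 - 1 = p - 2 by ring]
    ring
  · intro x hx
    rw [hint] at hx
    have h1 : (0:ℝ) < 1 + x := by linarith [hx.1]
    have h2 : (0:ℝ) < 1 - x := by linarith [hx.2]
    have hb : (1 + x) ^ (p - 2) ≤ (1 - x) ^ (p - 2) :=
      Real.rpow_le_rpow_of_nonpos h2 (by linarith [hx.1]) (by linarith)
    have : p * (p - 1) ≤ 0 := mul_nonpos_of_nonneg_of_nonpos hp0.le (by linarith)
    nlinarith [hb]

/-- slope monotonicity from convexity, since f 0 = 0 -/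
private lemma slope_mono (hp0 : 0 < p) (hp1 : p ≤ 1) {s t : ℝ}
    (hs : 0 < s) (hst : s ≤ t) (ht : t ≤ 1) :
    ((1 + s) ^ p - (1 - s) ^ p) / s ≤ ((1 + t) ^ p - (1 - t) ^ p) / t := by
  have ht0 : 0 < t := hs.trans_le hst
  have cv := psi_convex hp0 hp1
  have h0 : (0:ℝ) ∈ Set.Icc (0:ℝ) 1 := by constructor <;> norm_num
  have hT : t ∈ Set.Icc (0:ℝ) 1 := ⟨ht0.le, ht⟩
  have key := cv.2 hT h0 (show (0:ℝ) ≤ s / t from div_nonneg hs.le ht0.le)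
    (show (0:ℝ) ≤ 1 - s / t by rw [sub_nonneg]; exact div_le_one_of_le₀ hst ht0.le)
    (show s / t + (1 - s / t) = 1 by ring)
  have hst' : s / t * t + (1 - s / t) * 0 = s := by field_simp; ring
  rw [smul_eq_mul, smul_eq_mul, smul_eq_mul] at key
  rw [hst'] at key
  simp only [Real.one_rpow] at key
  have : (1 + s) ^ p - (1 - s) ^ p ≤ s / t * ((1 + t) ^ p - (1 - t) ^ p) := by
    have h10 : (1:ℝ) + 0 = 1 := by norm_num
    have h10' : (1:ℝ) - 0 = 1 := by norm_num
    calc (1 + s) ^ p - (1 - s) ^ p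
        ≤ s / t * ((1 + t) ^ p - (1 - t) ^ p)
          + (1 - s / t) * ((1 + (0:ℝ)) ^ p - (1 - (0:ℝ)) ^ p) := key
      _ = s / t * ((1 + t) ^ p - (1 - t) ^ p) := by
          rw [h10, h10', Real.one_rpow]; ring
  rw [div_le_div_iff₀ hs ht0]
  calc ((1 + s) ^ p - (1 - s) ^ p) * t
      ≤ (s / t * ((1 + t) ^ p - (1 - t) ^ p)) * t := by
        exact mul_le_mul_of_nonneg_right this ht0.le
    _ = ((1 + t) ^ p - (1 - t) ^ p) * s := by field_simp

private lemma key_rw (hp0 : 0 < p) {m : ℝ} (hm : 1 ≤ m) :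
    ((m + 1) ^ p - (m - 1) ^ p) / m ^ (p - 1)
      = ((1 + 1/m) ^ p - (1 - 1/m) ^ p) / (1/m) := by
  have hm0 : (0:ℝ) < m := lt_of_lt_of_le one_pos hm
  have hmp : (0:ℝ) < m ^ p := Real.rpow_pos_of_pos hm0 p
  have e1 : (1 : ℝ) + 1/m = (m + 1) / m := by field_simp
  have e2 : (1 : ℝ) - 1/m = (m - 1) / m := by field_simp
  rw [e1, e2, Real.div_rpow (by linarith) hm0.le, Real.div_rpow (by linarith) hm0.le,
    Real.rpow_sub_one hm0.ne']
  field_simp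

end Aux

/-- For `0 < p ≤ 1`, the sequence `A'_n = ((n+1)^p − (n−1)^p)/n^{p−1}` (here indexed so that
`n ∈ ℕ` represents the positive integer `n + 1`) is monotonically decreasing; in particular
all terms are at most `2^p`. -/
theorem Aprime_antitone (p : ℝ) (hp0 : 0 < p) (hp1 : p ≤ 1) :
    Antitone (fun n : ℕ => (((n : ℝ) + 2) ^ p - (n : ℝ) ^ p) / ((n : ℝ) + 1) ^ (p - 1)) ∧
    ∀ n : ℕ, (((n : ℝ) + 2) ^ p - (n : ℝ) ^ p) / ((n : ℝ) + 1) ^ (p - 1) ≤ 2 ^ p := by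
  have hrw : ∀ n : ℕ, (((n : ℝ) + 2) ^ p - (n : ℝ) ^ p) / ((n : ℝ) + 1) ^ (p - 1)
      = ((1 + 1/((n:ℝ)+1)) ^ p - (1 - 1/((n:ℝ)+1)) ^ p) / (1/((n:ℝ)+1)) := by
    intro n
    have := key_rw hp0 (m := (n:ℝ) + 1) (by linarith [Nat.cast_nonneg (α := ℝ) n])
    have e1 : (n:ℝ) + 1 + 1 = (n:ℝ) + 2 := by ring
    have e2 : (n:ℝ) + 1 - 1 = (n:ℝ) := by ring
    rwa [e1, e2] at this
  have hanti : Antitone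
      (fun n : ℕ => (((n : ℝ) + 2) ^ p - (n : ℝ) ^ p) / ((n : ℝ) + 1) ^ (p - 1)) := by
    apply antitone_nat_of_succ_le
    intro n
    rw [hrw n, hrw (n + 1)]
    push_cast
    have h1 : (0:ℝ) < (n:ℝ) + 1 := by positivity
    have h2 : (0:ℝ) < (n:ℝ) + 2 := by positivity
    have e : (n:ℝ) + 1 + 1 = (n:ℝ) + 2 := by ring
    rw [e]
    apply slope_mono hp0 hp1
    · positivity
    · exact one_div_le_one_div_of_le h1 (by linarith)
    · rw [div_le_one h1]; linarith
  refine ⟨hanti, fun n => ?_⟩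
  have := hanti (Nat.zero_le n)
  simpa [Real.zero_rpow hp0.ne', Real.one_rpow] using this
end

section
/- For all p ∈ (0,1]: 2^p ≥ (3^p − 1)/2^{p−1}, i.e. 2^{2p−1} ≥ 3^p − 1, with equality iff p = 1. -/
open Real

lemma aux_key (p : ℝ) (hp0 : 0 < p) (hp1 : p < 1) :
    (3 : ℝ) ^ p - 1 < (2 : ℝ) ^ (2 * p - 1) := by
  have h4 : (2:ℝ)^(2*p-1) = (4:ℝ)^p / 2 := by
    rw [Real.rpow_sub (by norm_num), Real.rpow_one,
      show (4:ℝ) = (2:ℝ)^(2:ℝ) by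
        rw [show (2:ℝ) = ((2:ℕ):ℝ) by norm_num, Real.rpow_natCast]; norm_num,
      ← Real.rpow_mul (by norm_num : (0:ℝ) ≤ 2)]
  have h34 : (3:ℝ)^p = (4:ℝ)^p * ((3/4:ℝ))^p := by
    rw [← Real.mul_rpow (by norm_num) (by norm_num)]; norm_num
  have hB : ((3/4:ℝ))^p < 1 + p * (-(1/4)) := by
    have := rpow_one_add_lt_one_add_mul_self (s := -(1/4)) (by norm_num) (by norm_num)
      hp0 hp1
    norm_num at this ⊢
    convert this using 2 <;> norm_num
  have hlog4 : (1:ℝ) ≤ Real.log 4 := by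
    rw [Real.le_log_iff_exp_le (by norm_num)]
    have := Real.exp_one_lt_d9
    linarith
  have h2 : (4:ℝ)^p * (2 - p) ≤ 4 := by
    have hexp : (2 - p : ℝ) ≤ (4:ℝ)^(1-p) := by
      rw [Real.rpow_def_of_pos (by norm_num), mul_comm]
      have h1 : (1-p) * 1 ≤ (1-p) * Real.log 4 :=
        mul_le_mul_of_nonneg_left hlog4 (by linarith)
      have h2 := Real.add_one_le_exp ((1-p) * Real.log 4)
      linarith
    have h41 : (4:ℝ)^p * (4:ℝ)^(1-p) = 4 := by
      rw [← Real.rpow_add (by norm_num)]; norm_num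
    have hpos : (0:ℝ) < (4:ℝ)^p := Real.rpow_pos_of_pos (by norm_num) p
    nlinarith
  have hpos : (0:ℝ) < (4:ℝ)^p := Real.rpow_pos_of_pos (by norm_num) p
  rw [h4, h34]
  nlinarith

/-- For `p ∈ (0,1]`: `2^{2p−1} ≥ 3^p − 1`, with equality iff `p = 1`. -/
theorem two_pow_ge_three_pow_sub_one (p : ℝ) (hp0 : 0 < p) (hp1 : p ≤ 1) :
    (3 : ℝ) ^ p - 1 ≤ (2 : ℝ) ^ (2 * p - 1) ∧
    ((2 : ℝ) ^ (2 * p - 1) = (3 : ℝ) ^ p - 1 ↔ p = 1) := by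
  rcases eq_or_lt_of_le hp1 with h | h
  · subst h
    norm_num
  · exact ⟨(aux_key p hp0 h).le, by
      constructor
      · intro heq; exfalso; have := aux_key p hp0 h; linarith
      · rintro rfl; norm_num⟩
end

section
/- Let 1 < q < ∞. For every nonincreasing nonnegative sequence (a_n), sup_{n∈ℕ} n·(1/n · ∑_{k=n}^∞ a_k^q)^{1/q} ≤ ζ(q)^{1/q} · sup_{n∈ℕ} n·a_n, and the constant ζ(q)^{1/q} is optimal (attained by a_n = 1/n). -/
open Real
open scoped ENNReal

private lemma ws_anti {q : ℝ} (hq : 0 < q) {x y : ℝ≥0∞} (hxy : x ≤ y) :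
    y ^ (-q) ≤ x ^ (-q) := by
  rw [ENNReal.rpow_neg, ENNReal.rpow_neg]
  exact ENNReal.inv_le_inv.2 (ENNReal.rpow_le_rpow hxy hq.le)

private lemma ws_key {q : ℝ} (hq : 1 < q) (n : ℕ) :
    ∑' k : ℕ, ((n + 1 + k : ℕ) : ℝ≥0∞) ^ (-q) ≤
      ((n + 1 : ℕ) : ℝ≥0∞) ^ (1 - q) * ∑' j : ℕ, ((j + 1 : ℕ) : ℝ≥0∞) ^ (-q) := by
  have hq0 : (0:ℝ) < q := lt_trans one_pos hq
  have h1 : ∑' k : ℕ, ((n + 1 + k : ℕ) : ℝ≥0∞) ^ (-q)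
      = ∑' p : ℕ × Fin (n+1),
          ((n + 1 + ((Nat.divModEquiv (n+1)).symm p) : ℕ) : ℝ≥0∞) ^ (-q) :=
    ((Nat.divModEquiv (n+1)).symm.tsum_eq (fun k => ((n + 1 + k : ℕ) : ℝ≥0∞) ^ (-q))).symm
  rw [h1]
  calc ∑' p : ℕ × Fin (n+1), ((n + 1 + ((Nat.divModEquiv (n+1)).symm p) : ℕ) : ℝ≥0∞) ^ (-q)
      ≤ ∑' p : ℕ × Fin (n+1), (((n+1) * (p.1+1) : ℕ) : ℝ≥0∞) ^ (-q) := by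
        apply ENNReal.tsum_le_tsum
        intro p
        apply ws_anti hq0
        have h : ((n+1) * (p.1+1) : ℕ) ≤ n + 1 + ((Nat.divModEquiv (n+1)).symm p) := by
          simp only [Nat.divModEquiv_symm_apply]
          have := p.2.2
          nlinarith [p.2.2]
        exact_mod_cast h
    _ = ∑' t : ℕ, ∑' r : Fin (n+1), (((n+1) * (t+1) : ℕ) : ℝ≥0∞) ^ (-q) := ENNReal.tsum_prod (f := fun t _ => (((n+1) * (t+1) : ℕ) : ℝ≥0∞) ^ (-q))
    _ = ∑' t : ℕ, ((n + 1 : ℕ) : ℝ≥0∞) * (((n+1) * (t+1) : ℕ) : ℝ≥0∞) ^ (-q) := by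
        apply tsum_congr
        intro t
        rw [tsum_fintype, Finset.sum_const, Finset.card_univ, Fintype.card_fin,
          nsmul_eq_mul]
    _ = ((n + 1 : ℕ) : ℝ≥0∞) * ∑' t : ℕ, (((n+1) * (t+1) : ℕ) : ℝ≥0∞) ^ (-q) :=
        ENNReal.tsum_mul_left
    _ = ((n + 1 : ℕ) : ℝ≥0∞) ^ (1 - q) * ∑' j : ℕ, ((j + 1 : ℕ) : ℝ≥0∞) ^ (-q) := by
        have hne : ((n + 1 : ℕ) : ℝ≥0∞) ≠ 0 := by exact_mod_cast Nat.succ_ne_zero n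
        have hnt : ((n + 1 : ℕ) : ℝ≥0∞) ≠ ⊤ := ENNReal.natCast_ne_top _
        have ht : ∀ t : ℕ, (((n+1) * (t+1) : ℕ) : ℝ≥0∞) ^ (-q)
            = ((n + 1 : ℕ) : ℝ≥0∞) ^ (-q) * ((t + 1 : ℕ) : ℝ≥0∞) ^ (-q) := by
          intro t
          rw [Nat.cast_mul, ENNReal.mul_rpow_of_ne_top hnt (ENNReal.natCast_ne_top _)]
        simp_rw [ht]
        rw [ENNReal.tsum_mul_left, ← mul_assoc]
        congr 1
        nth_rewrite 1 [← ENNReal.rpow_one ((n + 1 : ℕ) : ℝ≥0∞)]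
        rw [← ENNReal.rpow_add _ _ hne hnt, sub_eq_add_neg]

/-- Lower weak discrete Stechkin inequality with the optimal constant `ζ(q)^{1/q}`,
optimality being witnessed by the sequence `a_n = 1/n`. -/
theorem weak_stechkin_lower (q : ℝ) (hq : 1 < q) :
    (∀ a : ℕ → ℝ, (∀ n, 0 ≤ a n) → Antitone a →
      (⨆ n : ℕ, ((n + 1 : ℕ) : ℝ≥0∞) * ((1 / ((n + 1 : ℕ) : ℝ≥0∞)) *
          ∑' k : ℕ, ENNReal.ofReal (a (n + 1 + k)) ^ q) ^ (1 / q)) ≤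
        ENNReal.ofReal ((∑' n : ℕ, ((n + 1 : ℕ) : ℝ) ^ (-q)) ^ (1 / q)) *
          ⨆ n : ℕ, ((n + 1 : ℕ) : ℝ≥0∞) * ENNReal.ofReal (a (n + 1))) ∧
    (⨆ n : ℕ, ((n + 1 : ℕ) : ℝ≥0∞) * ((1 / ((n + 1 : ℕ) : ℝ≥0∞)) *
        ∑' k : ℕ, ENNReal.ofReal (1 / ((n + 1 + k : ℕ) : ℝ)) ^ q) ^ (1 / q)) =
      ENNReal.ofReal ((∑' n : ℕ, ((n + 1 : ℕ) : ℝ) ^ (-q)) ^ (1 / q)) *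
        ⨆ n : ℕ, ((n + 1 : ℕ) : ℝ≥0∞) * ENNReal.ofReal (1 / ((n + 1 : ℕ) : ℝ)) := by
  have hq0 : (0:ℝ) < q := lt_trans one_pos hq
  have hq0' : q ≠ 0 := ne_of_gt hq0
  set Z : ℝ≥0∞ := ∑' j : ℕ, ((j + 1 : ℕ) : ℝ≥0∞) ^ (-q) with hZdef
  have hsum : Summable (fun n : ℕ => ((n + 1 : ℕ) : ℝ) ^ (-q)) := by
    have h := Real.summable_nat_rpow (p := -q) |>.2 (by linarith)
    have h2 := (summable_nat_add_iff (f := fun n : ℕ => ((n : ℝ)) ^ (-q)) 1).2 h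
    exact_mod_cast h2
  have hζpos : 0 < ∑' n : ℕ, ((n + 1 : ℕ) : ℝ) ^ (-q) := by
    apply Summable.tsum_pos hsum (fun n => Real.rpow_nonneg (by positivity) _) 0
    exact Real.rpow_pos_of_pos (by norm_num) _
  have hZeq : ENNReal.ofReal ((∑' n : ℕ, ((n + 1 : ℕ) : ℝ) ^ (-q)) ^ (1/q)) = Z ^ (1/q) := by
    rw [← ENNReal.ofReal_rpow_of_pos hζpos]
    congr 1
    rw [ENNReal.ofReal_tsum_of_nonneg (fun n => Real.rpow_nonneg (by positivity) _) hsum]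
    apply tsum_congr
    intro j
    rw [← ENNReal.ofReal_rpow_of_pos (by positivity), ENNReal.ofReal_natCast]
  have main : ∀ a : ℕ → ℝ, (∀ n, 0 ≤ a n) →
      (⨆ n : ℕ, ((n + 1 : ℕ) : ℝ≥0∞) * ((1 / ((n + 1 : ℕ) : ℝ≥0∞)) *
          ∑' k : ℕ, ENNReal.ofReal (a (n + 1 + k)) ^ q) ^ (1 / q)) ≤
        Z ^ (1/q) * ⨆ n : ℕ, ((n + 1 : ℕ) : ℝ≥0∞) * ENNReal.ofReal (a (n + 1)) := by
    intro a ha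
    set M := ⨆ n : ℕ, ((n + 1 : ℕ) : ℝ≥0∞) * ENNReal.ofReal (a (n + 1)) with hMdef
    apply iSup_le
    intro n
    have hne : ((n + 1 : ℕ) : ℝ≥0∞) ≠ 0 := by exact_mod_cast Nat.succ_ne_zero n
    have hnt : ((n + 1 : ℕ) : ℝ≥0∞) ≠ ⊤ := ENNReal.natCast_ne_top _
    have hM' : ∀ m : ℕ, ENNReal.ofReal (a (m + 1)) ≤ M * ((m + 1 : ℕ) : ℝ≥0∞)⁻¹ := by
      intro m
      have hne' : ((m + 1 : ℕ) : ℝ≥0∞) ≠ 0 := by exact_mod_cast Nat.succ_ne_zero m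
      have hnt' : ((m + 1 : ℕ) : ℝ≥0∞) ≠ ⊤ := ENNReal.natCast_ne_top _
      calc ENNReal.ofReal (a (m + 1))
          = (((m + 1 : ℕ) : ℝ≥0∞) * ENNReal.ofReal (a (m + 1))) * ((m + 1 : ℕ) : ℝ≥0∞)⁻¹ := by
            rw [mul_comm _ (ENNReal.ofReal _), mul_assoc, ENNReal.mul_inv_cancel hne' hnt',
              mul_one]
        _ ≤ M * ((m + 1 : ℕ) : ℝ≥0∞)⁻¹ := mul_le_mul_left (le_iSup (fun n : ℕ => ((n + 1 : ℕ) : ℝ≥0∞) * ENNReal.ofReal (a (n + 1))) m) _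
    have hts : ∑' k : ℕ, ENNReal.ofReal (a (n + 1 + k)) ^ q
        ≤ M ^ q * (((n + 1 : ℕ) : ℝ≥0∞) ^ (1 - q) * Z) := by
      calc ∑' k : ℕ, ENNReal.ofReal (a (n + 1 + k)) ^ q
          ≤ ∑' k : ℕ, (M * ((n + 1 + k : ℕ) : ℝ≥0∞)⁻¹) ^ q := by
            apply ENNReal.tsum_le_tsum
            intro k
            apply ENNReal.rpow_le_rpow _ hq0.le
            have h := hM' (n + k)
            have he : n + k + 1 = n + 1 + k := by omega
            rwa [he] at h
        _ = M ^ q * ∑' k : ℕ, ((n + 1 + k : ℕ) : ℝ≥0∞) ^ (-q) := by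
            simp_rw [ENNReal.mul_rpow_of_nonneg _ _ hq0.le, ENNReal.inv_rpow,
              ← ENNReal.rpow_neg]
            exact ENNReal.tsum_mul_left
        _ ≤ M ^ q * (((n + 1 : ℕ) : ℝ≥0∞) ^ (1 - q) * Z) := mul_le_mul_right (ws_key hq n) _
    calc ((n + 1 : ℕ) : ℝ≥0∞) * ((1 / ((n + 1 : ℕ) : ℝ≥0∞)) *
            ∑' k : ℕ, ENNReal.ofReal (a (n + 1 + k)) ^ q) ^ (1 / q)
        ≤ ((n + 1 : ℕ) : ℝ≥0∞) * ((1 / ((n + 1 : ℕ) : ℝ≥0∞)) *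
            (M ^ q * (((n + 1 : ℕ) : ℝ≥0∞) ^ (1 - q) * Z))) ^ (1 / q) := by
          gcongr
      _ = Z ^ (1/q) * M := by
          have h1 : (1 / ((n + 1 : ℕ) : ℝ≥0∞)) * (M ^ q * (((n + 1 : ℕ) : ℝ≥0∞) ^ (1 - q) * Z))
              = ((n + 1 : ℕ) : ℝ≥0∞) ^ (-q) * (M ^ q * Z) := by
            rw [one_div, ← ENNReal.rpow_neg_one ((n + 1 : ℕ) : ℝ≥0∞)]
            calc ((n + 1 : ℕ) : ℝ≥0∞) ^ (-1:ℝ) * (M ^ q * (((n + 1 : ℕ) : ℝ≥0∞) ^ (1 - q) * Z))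
                = (((n + 1 : ℕ) : ℝ≥0∞) ^ (-1:ℝ) * ((n + 1 : ℕ) : ℝ≥0∞) ^ (1 - q)) *
                    (M ^ q * Z) := by ring
              _ = ((n + 1 : ℕ) : ℝ≥0∞) ^ (-q) * (M ^ q * Z) := by
                  rw [← ENNReal.rpow_add _ _ hne hnt,
                    show (-1:ℝ) + (1 - q) = -q from by ring]
          rw [h1, ENNReal.mul_rpow_of_nonneg _ _ (by positivity),
            ENNReal.mul_rpow_of_nonneg _ _ (by positivity), ← ENNReal.rpow_mul,
            ← ENNReal.rpow_mul,
            show -q * (1/q) = -1 by field_simp, show q * (1/q) = 1 by field_simp,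
            ENNReal.rpow_one, ENNReal.rpow_neg_one, ← mul_assoc,
            ENNReal.mul_inv_cancel hne hnt, one_mul, mul_comm]
  constructor
  · intro a ha _
    rw [hZeq]
    exact main a ha
  · set b : ℕ → ℝ := fun m => if m = 0 then 1 else 1 / (m : ℝ) with hbdef
    have hb0 : ∀ n, 0 ≤ b n := by
      intro n
      simp only [hbdef]
      split <;> positivity
    have e1 : ∀ n k : ℕ, (1:ℝ) / ((n + 1 + k : ℕ) : ℝ) = b (n + 1 + k) := by
      intro n k
      simp only [hbdef]
      rw [if_neg (by omega)]
    have e2 : ∀ n : ℕ, (1:ℝ) / ((n + 1 : ℕ) : ℝ) = b (n + 1) := by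
      intro n
      simp only [hbdef]
      rw [if_neg (by omega)]
    have hS1 : (⨆ n : ℕ, ((n + 1 : ℕ) : ℝ≥0∞) * ENNReal.ofReal (1 / ((n + 1 : ℕ) : ℝ))) = 1 := by
      have h : ∀ n : ℕ, ((n + 1 : ℕ) : ℝ≥0∞) * ENNReal.ofReal (1 / ((n + 1 : ℕ) : ℝ)) = 1 := by
        intro n
        rw [one_div, ENNReal.ofReal_inv_of_pos (by positivity), ENNReal.ofReal_natCast,
          ENNReal.mul_inv_cancel (by exact_mod_cast Nat.succ_ne_zero n)
            (ENNReal.natCast_ne_top _)]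
      simp_rw [h]
      exact iSup_const
    have hup : (⨆ n : ℕ, ((n + 1 : ℕ) : ℝ≥0∞) * ((1 / ((n + 1 : ℕ) : ℝ≥0∞)) *
        ∑' k : ℕ, ENNReal.ofReal (1 / ((n + 1 + k : ℕ) : ℝ)) ^ q) ^ (1 / q)) ≤ Z ^ (1/q) := by
      have h := main b hb0
      simp_rw [e1, e2] at *
      calc _ ≤ Z ^ (1/q) * ⨆ n : ℕ, ((n + 1 : ℕ) : ℝ≥0∞) * ENNReal.ofReal (b (n + 1)) := h
        _ = Z ^ (1/q) := by rw [hS1, mul_one]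
    have hlow : Z ^ (1/q) ≤ ⨆ n : ℕ, ((n + 1 : ℕ) : ℝ≥0∞) * ((1 / ((n + 1 : ℕ) : ℝ≥0∞)) *
        ∑' k : ℕ, ENNReal.ofReal (1 / ((n + 1 + k : ℕ) : ℝ)) ^ q) ^ (1 / q) := by
      have h0 := le_iSup (fun n : ℕ => ((n + 1 : ℕ) : ℝ≥0∞) * ((1 / ((n + 1 : ℕ) : ℝ≥0∞)) *
        ∑' k : ℕ, ENNReal.ofReal (1 / ((n + 1 + k : ℕ) : ℝ)) ^ q) ^ (1 / q)) 0
    -- compute the n = 0 term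
      have hterm : ((0 + 1 : ℕ) : ℝ≥0∞) * ((1 / ((0 + 1 : ℕ) : ℝ≥0∞)) *
          ∑' k : ℕ, ENNReal.ofReal (1 / ((0 + 1 + k : ℕ) : ℝ)) ^ q) ^ (1 / q) = Z ^ (1/q) := by
        have ht : ∀ k : ℕ, ENNReal.ofReal (1 / ((0 + 1 + k : ℕ) : ℝ)) ^ q
            = ((k + 1 : ℕ) : ℝ≥0∞) ^ (-q) := by
          intro k
          rw [show 0 + 1 + k = k + 1 from by omega, one_div,
            ENNReal.ofReal_inv_of_pos (by positivity), ENNReal.ofReal_natCast,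
            ENNReal.inv_rpow, ← ENNReal.rpow_neg]
        simp_rw [ht]
        rw [show (∑' k : ℕ, ((k + 1 : ℕ) : ℝ≥0∞) ^ (-q)) = Z from hZdef.symm]
        norm_num
      rw [hterm] at h0
      exact h0
    rw [hZeq, hS1, mul_one]
    exact le_antisymm hup hlow
end

section
/- Let 1 < q < ∞. Then sup_{n∈ℕ} n^{1−1/q}·(∑_{k=n}^∞ k^{−q})^{1/q} = ζ(q)^{1/q}, and the supremum is attained at n = 1. -/
open Real

lemma ws_summable_shift (q : ℝ) (hq : 1 < q) (m : ℕ) :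
    Summable (fun j : ℕ => ((m + j : ℕ) : ℝ) ^ (-q)) := by
  have h : Summable (fun n : ℕ => (n : ℝ) ^ (-q)) :=
    Real.summable_nat_rpow.2 (by linarith)
  have := (summable_nat_add_iff (f := fun n : ℕ => (n : ℝ) ^ (-q)) m).2 h
  simpa [Nat.add_comm] using this

lemma ws_tail_le (q : ℝ) (hq : 1 < q) (m : ℕ) (hm : 0 < m) :
    (∑' j : ℕ, ((m + j : ℕ) : ℝ) ^ (-q)) ≤
      (m : ℝ) ^ ((1 : ℝ) - q) * ∑' i : ℕ, ((i + 1 : ℕ) : ℝ) ^ (-q) := by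
  haveI : NeZero m := ⟨hm.ne'⟩
  have hm' : (0 : ℝ) < m := by exact_mod_cast hm
  have hZs : Summable (fun i : ℕ => ((i + 1 : ℕ) : ℝ) ^ (-q)) := by
    simpa [Nat.add_comm] using ws_summable_shift q hq 1
  set e := Nat.divModEquiv m with he
  set F : ℕ → ℝ := fun j => ((m + j : ℕ) : ℝ) ^ (-q) with hF
  set G : ℕ × Fin m → ℝ :=
    fun p => (m : ℝ) ^ (-q) * ((p.1 + 1 : ℕ) : ℝ) ^ (-q) with hG
  have hFs : Summable F := ws_summable_shift q hq m
  have hFs' : Summable (fun p : ℕ × Fin m => F (e.symm p)) :=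
    (e.symm.summable_iff).2 hFs
  -- summability of G
  have hGs : Summable G := by
    apply (summable_prod_of_nonneg ?_).2
    · constructor
      · intro i; exact Summable.of_finite
      · have : (fun i : ℕ => ∑' _ : Fin m, (m : ℝ) ^ (-q) * ((i + 1 : ℕ) : ℝ) ^ (-q))
            = fun i : ℕ => (m : ℕ) • ((m : ℝ) ^ (-q) * ((i + 1 : ℕ) : ℝ) ^ (-q)) := by
          funext i; simp [tsum_fintype, Finset.sum_const]
        rw [this]
        simpa [nsmul_eq_mul, mul_assoc] using
          ((hZs.mul_left ((m : ℝ) ^ (-q))).mul_left (m : ℝ))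
    · intro p
      positivity
  -- termwise bound
  have hterm : ∀ p : ℕ × Fin m, F (e.symm p) ≤ G p := by
    rintro ⟨i, r⟩
    have h1 : (m : ℝ) * (i + 1 : ℕ) ≤ ((m + (i * m + (r : ℕ)) : ℕ) : ℝ) := by
      push_cast
      have : (r : ℝ) ≥ 0 := by positivity
      nlinarith
    have hpos : (0 : ℝ) < (m : ℝ) * ((i + 1 : ℕ) : ℝ) := by positivity
    have h2 : ((m + (i * m + (r : ℕ)) : ℕ) : ℝ) ^ (-q) ≤
        ((m : ℝ) * ((i + 1 : ℕ) : ℝ)) ^ (-q) :=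
      Real.rpow_le_rpow_of_nonpos hpos h1 (by linarith)
    have h3 : ((m : ℝ) * ((i + 1 : ℕ) : ℝ)) ^ (-q)
        = (m : ℝ) ^ (-q) * ((i + 1 : ℕ) : ℝ) ^ (-q) :=
      Real.mul_rpow (le_of_lt hm') (by positivity)
    simpa [hF, hG, he, Nat.divModEquiv] using h2.trans_eq h3
  -- sum bound
  have hsum : (∑' j : ℕ, F j) ≤ ∑' p : ℕ × Fin m, G p := by
    have := Summable.tsum_le_tsum hterm hFs' hGs
    rwa [e.symm.tsum_eq F] at this
  -- compute tsum of G
  have hGval : (∑' p : ℕ × Fin m, G p)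
      = (m : ℝ) ^ ((1 : ℝ) - q) * ∑' i : ℕ, ((i + 1 : ℕ) : ℝ) ^ (-q) := by
    rw [Summable.tsum_prod hGs]
    have : (fun i : ℕ => ∑' _ : Fin m, (m : ℝ) ^ (-q) * ((i + 1 : ℕ) : ℝ) ^ (-q))
        = fun i : ℕ => (m : ℝ) * ((m : ℝ) ^ (-q) * ((i + 1 : ℕ) : ℝ) ^ (-q)) := by
      funext i; simp [tsum_fintype, Finset.sum_const, nsmul_eq_mul]
    rw [show G = fun p : ℕ × Fin m => (m : ℝ) ^ (-q) * ((p.1 + 1 : ℕ) : ℝ) ^ (-q) from rfl]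
    calc (∑' i : ℕ, ∑' _ : Fin m, (m : ℝ) ^ (-q) * ((i + 1 : ℕ) : ℝ) ^ (-q))
        = ∑' i : ℕ, (m : ℝ) * ((m : ℝ) ^ (-q) * ((i + 1 : ℕ) : ℝ) ^ (-q)) := by rw [this]
      _ = (m : ℝ) * ((m : ℝ) ^ (-q) * ∑' i : ℕ, ((i + 1 : ℕ) : ℝ) ^ (-q)) := by
          rw [← tsum_mul_left, ← tsum_mul_left]
      _ = (m : ℝ) ^ ((1 : ℝ) - q) * ∑' i : ℕ, ((i + 1 : ℕ) : ℝ) ^ (-q) := by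
          rw [show (1 : ℝ) - q = 1 + (-q) by ring, Real.rpow_add hm', Real.rpow_one,
            mul_assoc]
  calc (∑' j : ℕ, ((m + j : ℕ) : ℝ) ^ (-q)) = ∑' j : ℕ, F j := rfl
    _ ≤ ∑' p : ℕ × Fin m, G p := hsum
    _ = _ := hGval

lemma ws_bound (q : ℝ) (hq : 1 < q) (n : ℕ) :
    ((n + 1 : ℕ) : ℝ) ^ (1 - 1 / q) *
        (∑' k : ℕ, ((n + 1 + k : ℕ) : ℝ) ^ (-q)) ^ (1 / q) ≤
      (∑' m : ℕ, ((m + 1 : ℕ) : ℝ) ^ (-q)) ^ (1 / q) := by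
  set m := n + 1 with hmdef
  have hm : 0 < m := Nat.succ_pos n
  have hm' : (0 : ℝ) < m := by exact_mod_cast hm
  have hq0 : (0 : ℝ) < q := by linarith
  set Z := ∑' i : ℕ, ((i + 1 : ℕ) : ℝ) ^ (-q) with hZ
  have hZnn : 0 ≤ Z := tsum_nonneg fun i => by positivity
  have hS : (∑' k : ℕ, ((m + k : ℕ) : ℝ) ^ (-q)) ≤ (m : ℝ) ^ ((1 : ℝ) - q) * Z :=
    ws_tail_le q hq m hm
  have hSnn : 0 ≤ ∑' k : ℕ, ((m + k : ℕ) : ℝ) ^ (-q) := tsum_nonneg fun k => by positivity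
  have h1 : (∑' k : ℕ, ((m + k : ℕ) : ℝ) ^ (-q)) ^ (1 / q) ≤
      ((m : ℝ) ^ ((1 : ℝ) - q) * Z) ^ (1 / q) :=
    Real.rpow_le_rpow hSnn hS (by positivity)
  have h2 : ((m : ℝ) ^ ((1 : ℝ) - q) * Z) ^ (1 / q)
      = (m : ℝ) ^ (((1 : ℝ) - q) * (1 / q)) * Z ^ (1 / q) := by
    rw [Real.mul_rpow (by positivity) hZnn, ← Real.rpow_mul hm'.le]
  have h3 : (m : ℝ) ^ (1 - 1 / q) * ((m : ℝ) ^ (((1 : ℝ) - q) * (1 / q))) = 1 := by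
    rw [← Real.rpow_add hm']
    have : (1 - 1 / q) + ((1 : ℝ) - q) * (1 / q) = 0 := by field_simp; ring
    rw [this, Real.rpow_zero]
  calc ((n + 1 : ℕ) : ℝ) ^ (1 - 1 / q) *
        (∑' k : ℕ, ((n + 1 + k : ℕ) : ℝ) ^ (-q)) ^ (1 / q)
      = (m : ℝ) ^ (1 - 1 / q) * (∑' k : ℕ, ((m + k : ℕ) : ℝ) ^ (-q)) ^ (1 / q) := rfl
    _ ≤ (m : ℝ) ^ (1 - 1 / q) * ((m : ℝ) ^ (((1 : ℝ) - q) * (1 / q)) * Z ^ (1 / q)) := by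
        rw [← h2]
        exact mul_le_mul_of_nonneg_left h1 (by positivity)
    _ = Z ^ (1 / q) := by rw [← mul_assoc, h3, one_mul]

/-- `sup_{n≥1} n^{1−1/q} (∑_{k=n}^∞ k^{-q})^{1/q} = ζ(q)^{1/q}`, attained at `n = 1`. -/
theorem weak_stechkin_sup_zeta (q : ℝ) (hq : 1 < q) :
    (⨆ n : ℕ, ((n + 1 : ℕ) : ℝ) ^ (1 - 1 / q) *
        (∑' k : ℕ, ((n + 1 + k : ℕ) : ℝ) ^ (-q)) ^ (1 / q)) =
      (∑' n : ℕ, ((n + 1 : ℕ) : ℝ) ^ (-q)) ^ (1 / q) ∧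
    ∀ n : ℕ, ((n + 1 : ℕ) : ℝ) ^ (1 - 1 / q) *
        (∑' k : ℕ, ((n + 1 + k : ℕ) : ℝ) ^ (-q)) ^ (1 / q) ≤
      ((1 : ℕ) : ℝ) ^ (1 - 1 / q) * (∑' k : ℕ, ((1 + k : ℕ) : ℝ) ^ (-q)) ^ (1 / q) := by
  set f : ℕ → ℝ := fun n => ((n + 1 : ℕ) : ℝ) ^ (1 - 1 / q) *
      (∑' k : ℕ, ((n + 1 + k : ℕ) : ℝ) ^ (-q)) ^ (1 / q) with hf
  set Z := ∑' i : ℕ, ((i + 1 : ℕ) : ℝ) ^ (-q) with hZ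
  have hb : ∀ n, f n ≤ Z ^ (1 / q) := fun n => ws_bound q hq n
  have hf0 : f 0 = Z ^ (1 / q) := by
    have h1 : (∑' k : ℕ, ((0 + 1 + k : ℕ) : ℝ) ^ (-q)) = Z := by
      rw [hZ]
      apply tsum_congr
      intro k
      have : 0 + 1 + k = k + 1 := by omega
      rw [this]
    show ((0 + 1 : ℕ) : ℝ) ^ (1 - 1 / q) * (∑' k : ℕ, ((0 + 1 + k : ℕ) : ℝ) ^ (-q)) ^ (1 / q)
        = Z ^ (1 / q)
    rw [h1]
    norm_num
  have hf0' : ((1 : ℕ) : ℝ) ^ (1 - 1 / q) * (∑' k : ℕ, ((1 + k : ℕ) : ℝ) ^ (-q)) ^ (1 / q)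
      = Z ^ (1 / q) := by
    have h1 : (∑' k : ℕ, ((1 + k : ℕ) : ℝ) ^ (-q)) = Z := by
      rw [hZ]; apply tsum_congr; intro k; rw [show 1 + k = k + 1 by omega]
    rw [h1]; norm_num
  constructor
  · apply le_antisymm
    · exact ciSup_le hb
    · rw [← hf0]
      exact le_ciSup ⟨Z ^ (1 / q), by rintro x ⟨n, rfl⟩; exact hb n⟩ 0
  · intro n
    rw [hf0']
    exact hb n
end

section
/- Let 1 < q < ∞. For every nonincreasing nonnegative sequence (a_n), sup_{n∈ℕ} n·a_n ≤ q^{1/q}·(1−1/q)^{−(1−1/q)} · sup_{n∈ℕ} n·(1/n · ∑_{k=n}^∞ a_k^q)^{1/q}, i.e. the upper weak discrete Stechkin inequality holds with constant C = (1/q)^{−1/q}·(1−1/q)^{−(1−1/q)}, and this constant is optimal. -/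
open Real
open scoped ENNReal

lemma const_cancel (q : ℝ) (hq : 1 < q) :
    ((1 / q) ^ (-(1 / q)) * (1 - 1 / q) ^ (-(1 - 1 / q))) *
      ((1 - 1/q) ^ (1 - 1/q) * (1/q) ^ (1/q)) = 1 := by
  have hq0 : (0:ℝ) < 1/q := by positivity
  have hθ0 : (0:ℝ) < 1 - 1/q := by
    have : 1/q < 1 := by
      rw [div_lt_one (by linarith)]; linarith
    linarith
  rw [Real.rpow_neg hq0.le, Real.rpow_neg hθ0.le]
  have h1 : ((1:ℝ)/q) ^ (1/q) ≠ 0 := by positivity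
  have h2 : ((1:ℝ) - 1/q) ^ (1 - 1/q) ≠ 0 := by positivity
  have key : ∀ a b : ℝ, a ≠ 0 → b ≠ 0 → a⁻¹ * b⁻¹ * (b * a) = 1 := by
    intro a b ha hb; field_simp
  exact key _ _ h1 h2

lemma amgm (q : ℝ) (hq : 1 < q) (x y : ℝ) (hx : 0 ≤ x) (hy : 0 ≤ y) :
    x ^ (1 - 1/q) * y ^ (1/q) ≤ ((1 - 1/q) ^ (1 - 1/q) * (1/q) ^ (1/q)) * (x + y) := by
  have hq0 : (0:ℝ) < 1/q := by positivity
  have hθ0 : (0:ℝ) < 1 - 1/q := by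
    have : 1/q < 1 := by rw [div_lt_one (by linarith)]; linarith
    linarith
  have hx' : (1 - 1/q) * (x / (1 - 1/q)) = x := by
    rw [mul_comm]; exact div_mul_cancel₀ x hθ0.ne'
  have hy' : (1/q) * (y / (1/q)) = y := by
    rw [mul_comm]; exact div_mul_cancel₀ y hq0.ne'
  calc x ^ (1 - 1/q) * y ^ (1/q)
      = ((1 - 1/q) * (x / (1 - 1/q))) ^ (1 - 1/q) * ((1/q) * (y / (1/q))) ^ (1/q) := by
        rw [hx', hy']
    _ = ((1 - 1/q) ^ (1 - 1/q) * (1/q) ^ (1/q)) *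
          ((x / (1 - 1/q)) ^ (1 - 1/q) * (y / (1/q)) ^ (1/q)) := by
        rw [Real.mul_rpow hθ0.le (by positivity), Real.mul_rpow hq0.le (by positivity)]
        ring
    _ ≤ ((1 - 1/q) ^ (1 - 1/q) * (1/q) ^ (1/q)) * (x + y) := by
        refine mul_le_mul_of_nonneg_left ?_ (by positivity)
        have := Real.geom_mean_le_arith_mean2_weighted hθ0.le hq0.le
          (div_nonneg hx hθ0.le) (div_nonneg hy hq0.le) (by ring)
        calc (x / (1 - 1/q)) ^ (1 - 1/q) * (y / (1/q)) ^ (1/q)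
            ≤ (1 - 1/q) * (x / (1 - 1/q)) + (1/q) * (y / (1/q)) := this
          _ = x + y := by rw [hx', hy']
lemma key_lower (q : ℝ) (hq : 1 < q) (m : ℕ) (hm : 1 ≤ m) :
    ∃ x : ℕ, 1 ≤ x ∧ x ≤ m ∧
      (m:ℝ) ≤ ((1 / q) ^ (-(1 / q)) * (1 - 1 / q) ^ (-(1 - 1 / q))) *
        ((x:ℝ) ^ (1 - 1/q) * ((m + 1 - x : ℕ):ℝ) ^ (1/q)) := by
  have hq0 : (0:ℝ) < 1/q := by positivity
  have hθ0 : (0:ℝ) < 1 - 1/q := by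
    have : 1/q < 1 := by rw [div_lt_one (by linarith)]; linarith
    linarith
  have hm0 : (0:ℝ) < (m:ℝ) := by exact_mod_cast hm
  have hqm : 0 ≤ 1/q * (m:ℝ) := by positivity
  refine ⟨⌈(1 - 1/q) * m⌉₊, ?_, ?_, ?_⟩
  · exact Nat.one_le_iff_ne_zero.mpr (Nat.ceil_pos.mpr (by positivity)).ne'
  · exact Nat.ceil_le.mpr (by nlinarith)
  · set x : ℕ := ⌈(1 - 1/q) * m⌉₊ with hx
    have hxm : x ≤ m := Nat.ceil_le.mpr (by nlinarith)
    have hx1 : (1 - 1/q) * m ≤ (x:ℝ) := Nat.le_ceil _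
    have hx2 : (x:ℝ) < (1 - 1/q) * m + 1 := Nat.ceil_lt_add_one (by positivity)
    have hcast : ((m + 1 - x : ℕ):ℝ) = (m:ℝ) + 1 - x := by
      have h' : x ≤ m + 1 := le_trans hxm (Nat.le_succ m)
      push_cast [Nat.cast_sub h']; ring
    have h2 : (1/q) * m ≤ ((m + 1 - x : ℕ):ℝ) := by
      rw [hcast]; nlinarith
    have hmono1 : ((1 - 1/q) * m) ^ (1 - 1/q) ≤ (x:ℝ) ^ (1 - 1/q) :=
      Real.rpow_le_rpow (by positivity) hx1 hθ0.le
    have hmono2 : ((1/q) * m) ^ (1/q) ≤ ((m + 1 - x : ℕ):ℝ) ^ (1/q) :=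
      Real.rpow_le_rpow (by positivity) h2 hq0.le
    have hbase : ((1 / q) ^ (-(1 / q)) * (1 - 1/q) ^ (-(1 - 1/q))) *
        (((1 - 1/q) * m) ^ (1 - 1/q) * ((1/q) * m) ^ (1/q)) = m := by
      rw [Real.mul_rpow hθ0.le hm0.le, Real.mul_rpow hq0.le hm0.le]
      have hmm : (m:ℝ) ^ (1 - 1/q) * (m:ℝ) ^ (1/q) = m := by
        rw [← Real.rpow_add hm0]
        norm_num
      calc ((1 / q) ^ (-(1 / q)) * (1 - 1/q) ^ (-(1 - 1/q))) *
            ((1 - 1/q) ^ (1 - 1/q) * (m:ℝ)^(1 - 1/q) * ((1/q) ^ (1/q) * (m:ℝ)^(1/q)))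
          = (((1 / q) ^ (-(1 / q)) * (1 - 1/q) ^ (-(1 - 1/q))) *
              ((1 - 1/q) ^ (1 - 1/q) * (1/q) ^ (1/q))) * ((m:ℝ)^(1 - 1/q) * (m:ℝ)^(1/q)) := by
            ring
        _ = 1 * m := by rw [const_cancel q hq, hmm]
        _ = m := one_mul _
    calc (m:ℝ) = ((1 / q) ^ (-(1 / q)) * (1 - 1/q) ^ (-(1 - 1/q))) *
          (((1 - 1/q) * m) ^ (1 - 1/q) * ((1/q) * m) ^ (1/q)) := hbase.symm
      _ ≤ _ := by
          exact mul_le_mul_of_nonneg_left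
            (mul_le_mul hmono1 hmono2 (by positivity) (by positivity)) (by positivity)
lemma part1 (q : ℝ) (hq : 1 < q) (a : ℕ → ℝ) (ha : ∀ n, 0 ≤ a n) (hmono : Antitone a) :
    (⨆ n : ℕ, ((n + 1 : ℕ) : ℝ≥0∞) * ENNReal.ofReal (a (n + 1))) ≤
      ENNReal.ofReal ((1 / q) ^ (-(1 / q)) * (1 - 1 / q) ^ (-(1 - 1 / q))) *
        ⨆ n : ℕ, ((n + 1 : ℕ) : ℝ≥0∞) * ((1 / ((n + 1 : ℕ) : ℝ≥0∞)) *
          ∑' k : ℕ, ENNReal.ofReal (a (n + 1 + k)) ^ q) ^ (1 / q) := by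
  have hq0 : (0:ℝ) < 1/q := by positivity
  have hq1 : (0:ℝ) < q := by linarith
  refine iSup_le fun n => ?_
  obtain ⟨x, hx1, hxm, hkey⟩ := key_lower q hq (n+1) (Nat.le_add_left 1 n)
  obtain ⟨j, rfl⟩ : ∃ j, x = j + 1 := ⟨x - 1, (Nat.succ_pred_eq_of_pos hx1).symm⟩
  have hjn : j ≤ n := by omega
  set c : ℝ≥0∞ := ENNReal.ofReal (a (n+1)) with hc
  -- the tail sum bound
  have hsum : ((n + 1 - j : ℕ) : ℝ≥0∞) * c ^ q ≤
      ∑' k : ℕ, ENNReal.ofReal (a (j + 1 + k)) ^ q := by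
    calc ((n + 1 - j : ℕ) : ℝ≥0∞) * c ^ q
        = ∑ _k ∈ Finset.range (n + 1 - j), c ^ q := by
          rw [Finset.sum_const, Finset.card_range, nsmul_eq_mul]
      _ ≤ ∑ k ∈ Finset.range (n + 1 - j), ENNReal.ofReal (a (j + 1 + k)) ^ q := by
          refine Finset.sum_le_sum fun k hk => ?_
          refine ENNReal.rpow_le_rpow (ENNReal.ofReal_le_ofReal ?_) hq1.le
          exact hmono (by simp at hk; omega)
      _ ≤ _ := ENNReal.sum_le_tsum _
  -- nonzero/finiteness facts
  have hj0 : ((j + 1 : ℕ) : ℝ≥0∞) ≠ 0 := by exact_mod_cast Nat.succ_ne_zero j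
  have hjt : ((j + 1 : ℕ) : ℝ≥0∞) ≠ ⊤ := ENNReal.natCast_ne_top _
  -- the term at index j
  have hterm : ((j + 1 : ℕ) : ℝ≥0∞) ^ (1 - 1/q) * ((n + 1 - j : ℕ) : ℝ≥0∞) ^ (1/q) * c ≤
      ((j + 1 : ℕ) : ℝ≥0∞) * ((1 / ((j + 1 : ℕ) : ℝ≥0∞)) *
        ∑' k : ℕ, ENNReal.ofReal (a (j + 1 + k)) ^ q) ^ (1 / q) := by
    have h1 : ((j + 1 : ℕ) : ℝ≥0∞) * ((1 / ((j + 1 : ℕ) : ℝ≥0∞)) *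
        (((n + 1 - j : ℕ) : ℝ≥0∞) * c ^ q)) ^ (1 / q) =
        ((j + 1 : ℕ) : ℝ≥0∞) ^ (1 - 1/q) * ((n + 1 - j : ℕ) : ℝ≥0∞) ^ (1/q) * c := by
      rw [ENNReal.mul_rpow_of_nonneg _ _ hq0.le, ENNReal.mul_rpow_of_nonneg _ _ hq0.le]
      rw [one_div ((j + 1 : ℕ) : ℝ≥0∞), ENNReal.inv_rpow, ← ENNReal.rpow_neg]
      rw [← ENNReal.rpow_mul, mul_one_div_cancel hq1.ne', ENNReal.rpow_one]
      have : ((j + 1 : ℕ) : ℝ≥0∞) * ((j + 1 : ℕ) : ℝ≥0∞) ^ (-(1/q)) =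
          ((j + 1 : ℕ) : ℝ≥0∞) ^ (1 - 1/q) := by
        rw [sub_eq_add_neg, ENNReal.rpow_add _ _ hj0 hjt, ENNReal.rpow_one]
      calc ((j + 1 : ℕ) : ℝ≥0∞) * (((j + 1 : ℕ) : ℝ≥0∞) ^ (-(1/q)) *
            (((n + 1 - j : ℕ) : ℝ≥0∞) ^ (1/q) * c)) =
          (((j + 1 : ℕ) : ℝ≥0∞) * ((j + 1 : ℕ) : ℝ≥0∞) ^ (-(1/q))) *
            ((n + 1 - j : ℕ) : ℝ≥0∞) ^ (1/q) * c := by ring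
        _ = _ := by rw [this]
    rw [← h1]
    refine mul_le_mul_right (ENNReal.rpow_le_rpow (mul_le_mul_right hsum _) hq0.le) _
  -- the main numeric inequality
  have hnum : ((n + 1 : ℕ) : ℝ≥0∞) ≤
      ENNReal.ofReal ((1 / q) ^ (-(1 / q)) * (1 - 1 / q) ^ (-(1 - 1 / q))) *
        (((j + 1 : ℕ) : ℝ≥0∞) ^ (1 - 1/q) * ((n + 1 - j : ℕ) : ℝ≥0∞) ^ (1/q)) := by
    have hθ0 : (0:ℝ) < 1 - 1/q := by
      have : 1/q < 1 := by rw [div_lt_one (by linarith)]; linarith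
      linarith
    have e1 : ((j + 1 : ℕ) : ℝ≥0∞) ^ (1 - 1/q) =
        ENNReal.ofReal (((j + 1 : ℕ) : ℝ) ^ (1 - 1/q)) := by
      rw [← ENNReal.ofReal_rpow_of_pos (by positivity), ENNReal.ofReal_natCast]
    have e2 : ((n + 1 - j : ℕ) : ℝ≥0∞) ^ (1/q) =
        ENNReal.ofReal (((n + 1 - j : ℕ) : ℝ) ^ (1/q)) := by
      rw [← ENNReal.ofReal_rpow_of_pos ?_, ENNReal.ofReal_natCast]
      have : 1 ≤ n + 1 - j := by omega
      exact_mod_cast this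
    rw [e1, e2, ← ENNReal.ofReal_mul (by positivity), ← ENNReal.ofReal_mul (by positivity),
      ← ENNReal.ofReal_natCast]
    refine ENNReal.ofReal_le_ofReal ?_
    have : (n + 1 + 1 - (j + 1) : ℕ) = (n + 1 - j : ℕ) := by omega
    rw [this] at hkey
    exact_mod_cast hkey
  calc ((n + 1 : ℕ) : ℝ≥0∞) * c
      ≤ (ENNReal.ofReal ((1 / q) ^ (-(1 / q)) * (1 - 1 / q) ^ (-(1 - 1 / q))) *
          (((j + 1 : ℕ) : ℝ≥0∞) ^ (1 - 1/q) * ((n + 1 - j : ℕ) : ℝ≥0∞) ^ (1/q))) * c :=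
        mul_le_mul_left hnum _
    _ = ENNReal.ofReal ((1 / q) ^ (-(1 / q)) * (1 - 1 / q) ^ (-(1 - 1 / q))) *
          (((j + 1 : ℕ) : ℝ≥0∞) ^ (1 - 1/q) * ((n + 1 - j : ℕ) : ℝ≥0∞) ^ (1/q) * c) := by
        ring
    _ ≤ ENNReal.ofReal ((1 / q) ^ (-(1 / q)) * (1 - 1 / q) ^ (-(1 - 1 / q))) *
          (((j + 1 : ℕ) : ℝ≥0∞) * ((1 / ((j + 1 : ℕ) : ℝ≥0∞)) *
            ∑' k : ℕ, ENNReal.ofReal (a (j + 1 + k)) ^ q) ^ (1 / q)) :=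
        mul_le_mul_right hterm _
    _ ≤ _ := mul_le_mul_right (le_iSup (fun i : ℕ => ((i + 1 : ℕ) : ℝ≥0∞) *
          ((1 / ((i + 1 : ℕ) : ℝ≥0∞)) *
            ∑' k : ℕ, ENNReal.ofReal (a (i + 1 + k)) ^ q) ^ (1 / q)) j) _
lemma enn_term (q : ℝ) (hq : 1 < q) (j w : ℕ) (c : ℝ≥0∞) :
    ((j + 1 : ℕ) : ℝ≥0∞) * ((1 / ((j + 1 : ℕ) : ℝ≥0∞)) * ((w : ℝ≥0∞) * c ^ q)) ^ (1 / q) =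
      ((j + 1 : ℕ) : ℝ≥0∞) ^ (1 - 1/q) * (w : ℝ≥0∞) ^ (1/q) * c := by
  have hq0 : (0:ℝ) < 1/q := by positivity
  have hq1 : (0:ℝ) < q := by linarith
  have hj0 : ((j + 1 : ℕ) : ℝ≥0∞) ≠ 0 := by exact_mod_cast Nat.succ_ne_zero j
  have hjt : ((j + 1 : ℕ) : ℝ≥0∞) ≠ ⊤ := ENNReal.natCast_ne_top _
  rw [ENNReal.mul_rpow_of_nonneg _ _ hq0.le, ENNReal.mul_rpow_of_nonneg _ _ hq0.le]
  rw [one_div ((j + 1 : ℕ) : ℝ≥0∞), ENNReal.inv_rpow, ← ENNReal.rpow_neg]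
  rw [← ENNReal.rpow_mul, mul_one_div_cancel hq1.ne', ENNReal.rpow_one]
  have h2 : ((j + 1 : ℕ) : ℝ≥0∞) * ((j + 1 : ℕ) : ℝ≥0∞) ^ (-(1/q)) =
      ((j + 1 : ℕ) : ℝ≥0∞) ^ (1 - 1/q) := by
    rw [sub_eq_add_neg, ENNReal.rpow_add _ _ hj0 hjt, ENNReal.rpow_one]
  calc ((j + 1 : ℕ) : ℝ≥0∞) * (((j + 1 : ℕ) : ℝ≥0∞) ^ (-(1/q)) *
        ((w : ℝ≥0∞) ^ (1/q) * c)) =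
      (((j + 1 : ℕ) : ℝ≥0∞) * ((j + 1 : ℕ) : ℝ≥0∞) ^ (-(1/q))) *
        (w : ℝ≥0∞) ^ (1/q) * c := by ring
    _ = _ := by rw [h2]

lemma part2 (q : ℝ) (hq : 1 < q) (C : ℝ≥0∞)
    (h : ∀ a : ℕ → ℝ, (∀ n, 0 ≤ a n) → Antitone a →
      (⨆ n : ℕ, ((n + 1 : ℕ) : ℝ≥0∞) * ENNReal.ofReal (a (n + 1))) ≤
        C * ⨆ n : ℕ, ((n + 1 : ℕ) : ℝ≥0∞) * ((1 / ((n + 1 : ℕ) : ℝ≥0∞)) *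
          ∑' k : ℕ, ENNReal.ofReal (a (n + 1 + k)) ^ q) ^ (1 / q)) :
    ENNReal.ofReal ((1 / q) ^ (-(1 / q)) * (1 - 1 / q) ^ (-(1 - 1 / q))) ≤ C := by
  have hq0 : (0:ℝ) < 1/q := by positivity
  have hq1 : (0:ℝ) < q := by linarith
  have hθ0 : (0:ℝ) < 1 - 1/q := by
    have : 1/q < 1 := by rw [div_lt_one (by linarith)]; linarith
    linarith
  set Copt : ℝ := (1 / q) ^ (-(1 / q)) * (1 - 1 / q) ^ (-(1 - 1 / q)) with hCopt
  set c0 : ℝ := (1 - 1/q) ^ (1 - 1/q) * (1/q) ^ (1/q) with hc0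
  have hc0pos : 0 < c0 := by rw [hc0]; positivity
  have hCpos : 0 < Copt := by rw [hCopt]; positivity
  have hcancel : Copt * c0 = 1 := const_cancel q hq
  rcases eq_or_ne C ⊤ with rfl | hC
  · exact le_top
  -- main estimate for each m
  have main : ∀ m : ℕ, ((m + 1 : ℕ) : ℝ≥0∞) ≤ C * ENNReal.ofReal (c0 * (m + 2)) := by
    intro m
    set a : ℕ → ℝ := fun k => if k ≤ m + 1 then (1:ℝ) else 0 with haa
    have ha : ∀ n, 0 ≤ a n := by
      intro n; rw [haa]; dsimp only; split <;> norm_num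
    have hanti : Antitone a := by
      intro i j hij; rw [haa]; dsimp only
      by_cases hj : j ≤ m + 1
      · rw [if_pos hj, if_pos (le_trans hij hj)]
      · rw [if_neg hj]; split <;> norm_num
    have hsup := h a ha hanti
    -- LHS of hsup is at least m+1 (index m)
    have hL : ((m + 1 : ℕ) : ℝ≥0∞) ≤
        ⨆ n : ℕ, ((n + 1 : ℕ) : ℝ≥0∞) * ENNReal.ofReal (a (n + 1)) := by
      have : ((m + 1 : ℕ) : ℝ≥0∞) * ENNReal.ofReal (a (m + 1)) = ((m + 1 : ℕ) : ℝ≥0∞) := by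
        rw [haa]; norm_num
      calc ((m + 1 : ℕ) : ℝ≥0∞) = ((m + 1 : ℕ) : ℝ≥0∞) * ENNReal.ofReal (a (m + 1)) :=
            this.symm
        _ ≤ _ := le_iSup (fun n : ℕ => ((n + 1 : ℕ) : ℝ≥0∞) * ENNReal.ofReal (a (n + 1))) m
    -- RHS sup bound
    have hR : (⨆ n : ℕ, ((n + 1 : ℕ) : ℝ≥0∞) * ((1 / ((n + 1 : ℕ) : ℝ≥0∞)) *
        ∑' k : ℕ, ENNReal.ofReal (a (n + 1 + k)) ^ q) ^ (1 / q)) ≤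
        ENNReal.ofReal (c0 * (m + 2)) := by
      refine iSup_le fun n => ?_
      have htsum : (∑' k : ℕ, ENNReal.ofReal (a (n + 1 + k)) ^ q) =
          ((m + 1 - n : ℕ) : ℝ≥0∞) := by
        rw [tsum_eq_sum (s := Finset.range (m + 1 - n)) ?_]
        · have : ∀ k ∈ Finset.range (m + 1 - n), ENNReal.ofReal (a (n + 1 + k)) ^ q = 1 := by
            intro k hk
            simp only [Finset.mem_range] at hk
            rw [haa]; dsimp only
            rw [if_pos (by omega), ENNReal.ofReal_one, ENNReal.one_rpow]
          rw [Finset.sum_congr rfl this, Finset.sum_const, Finset.card_range, nsmul_eq_mul,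
            mul_one]
        · intro k hk
          simp only [Finset.mem_range, not_lt] at hk
          rw [haa]; dsimp only
          rw [if_neg (by omega), ENNReal.ofReal_zero, ENNReal.zero_rpow_of_pos hq1]
      rw [htsum]
      rcases le_or_gt (m + 1) n with hmn | hmn
      · have : (m + 1 - n : ℕ) = 0 := by omega
        rw [this, Nat.cast_zero, mul_zero, ENNReal.zero_rpow_of_pos hq0, mul_zero]
        exact zero_le
      · have heq : ((n + 1 : ℕ) : ℝ≥0∞) * ((1 / ((n + 1 : ℕ) : ℝ≥0∞)) *
            ((m + 1 - n : ℕ) : ℝ≥0∞)) ^ (1 / q) =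
            ((n + 1 : ℕ) : ℝ≥0∞) ^ (1 - 1/q) * ((m + 1 - n : ℕ) : ℝ≥0∞) ^ (1/q) := by
          have := enn_term q hq n (m + 1 - n) 1
          rw [ENNReal.one_rpow, mul_one, mul_one] at this
          exact this
        rw [heq]
        have e1 : ((n + 1 : ℕ) : ℝ≥0∞) ^ (1 - 1/q) =
            ENNReal.ofReal (((n + 1 : ℕ) : ℝ) ^ (1 - 1/q)) := by
          rw [← ENNReal.ofReal_rpow_of_pos (by positivity), ENNReal.ofReal_natCast]
        have e2 : ((m + 1 - n : ℕ) : ℝ≥0∞) ^ (1/q) =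
            ENNReal.ofReal (((m + 1 - n : ℕ) : ℝ) ^ (1/q)) := by
          rw [← ENNReal.ofReal_rpow_of_pos ?_, ENNReal.ofReal_natCast]
          have : 1 ≤ m + 1 - n := by omega
          exact_mod_cast this
        rw [e1, e2, ← ENNReal.ofReal_mul (by positivity)]
        refine ENNReal.ofReal_le_ofReal ?_
        have hxy : ((n + 1 : ℕ) : ℝ) + ((m + 1 - n : ℕ) : ℝ) = (m : ℝ) + 2 := by
          have : (m + 1 - n : ℕ) = m + 1 - n := rfl
          rw [this]
          push_cast [Nat.cast_sub (by omega : n ≤ m + 1)]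
          ring
        have := amgm q hq ((n + 1 : ℕ) : ℝ) ((m + 1 - n : ℕ) : ℝ) (by positivity)
          (by positivity)
        rw [hxy] at this
        calc ((n + 1 : ℕ) : ℝ) ^ (1 - 1/q) * ((m + 1 - n : ℕ) : ℝ) ^ (1/q)
            ≤ ((1 - 1/q) ^ (1 - 1/q) * (1/q) ^ (1/q)) * ((m:ℝ) + 2) := this
          _ = c0 * ((m:ℝ) + 2) := by rw [hc0]
    exact le_trans hL (le_trans hsup (mul_le_mul_right hR C))
  -- pass to reals
  have hreal : ∀ m : ℕ, ((m:ℝ) + 1) ≤ C.toReal * (c0 * ((m:ℝ) + 2)) := by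
    intro m
    have h1 := main m
    have h2 : (((m + 1 : ℕ) : ℝ≥0∞)).toReal ≤ (C * ENNReal.ofReal (c0 * (m + 2))).toReal := by
      refine ENNReal.toReal_mono ?_ h1
      exact ENNReal.mul_ne_top hC ENNReal.ofReal_ne_top
    rw [ENNReal.toReal_mul, ENNReal.toReal_ofReal (by positivity)] at h2
    rw [ENNReal.toReal_natCast] at h2
    exact_mod_cast h2
  have hfinal : Copt ≤ C.toReal := by
    have ht0 : 0 ≤ C.toReal := ENNReal.toReal_nonneg
    refine le_of_forall_pos_le_add fun ε hε => ?_
    obtain ⟨m, hm⟩ := exists_nat_gt (Copt / ε)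
    have hm2 : Copt / ε < (m:ℝ) + 2 := by linarith [hm]
    have h1 := hreal m
    -- multiply by Copt > 0 : Copt*(m+1) ≤ C.toReal*(m+2)
    have h2 : Copt * ((m:ℝ) + 1) ≤ C.toReal * ((m:ℝ) + 2) := by
      calc Copt * ((m:ℝ) + 1) ≤ Copt * (C.toReal * (c0 * ((m:ℝ) + 2))) :=
            mul_le_mul_of_nonneg_left h1 hCpos.le
        _ = (Copt * c0) * (C.toReal * ((m:ℝ) + 2)) := by ring
        _ = C.toReal * ((m:ℝ) + 2) := by rw [hcancel, one_mul]
    -- Copt*(m+2) ≤ C.toReal*(m+2) + Copt, so Copt ≤ C.toReal + Copt/(m+2) ≤ C.toReal + ε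
    have hm0 : (0:ℝ) < (m:ℝ) + 2 := by positivity
    have hdiv : Copt / ((m:ℝ) + 2) * ((m:ℝ) + 2) = Copt := div_mul_cancel₀ _ hm0.ne'
    have h3 : Copt ≤ C.toReal + Copt / ((m:ℝ) + 2) := by
      nlinarith [h2, hdiv, hm0, ht0]
    have h4 : Copt / ((m:ℝ) + 2) ≤ ε := by
      rw [div_le_iff₀ hm0]
      have : Copt / ε < (m:ℝ) + 2 := hm2
      rw [div_lt_iff₀ hε] at this
      nlinarith
    linarith
  calc ENNReal.ofReal Copt ≤ ENNReal.ofReal C.toReal := ENNReal.ofReal_le_ofReal hfinal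
    _ = C := ENNReal.ofReal_toReal hC

/-- Upper weak discrete Stechkin inequality with optimal constant
`C = (1/q)^{-1/q} (1 − 1/q)^{-(1−1/q)}`. -/
theorem weak_stechkin_upper (q : ℝ) (hq : 1 < q) :
    (∀ a : ℕ → ℝ, (∀ n, 0 ≤ a n) → Antitone a →
      (⨆ n : ℕ, ((n + 1 : ℕ) : ℝ≥0∞) * ENNReal.ofReal (a (n + 1))) ≤
        ENNReal.ofReal ((1 / q) ^ (-(1 / q)) * (1 - 1 / q) ^ (-(1 - 1 / q))) *
          ⨆ n : ℕ, ((n + 1 : ℕ) : ℝ≥0∞) * ((1 / ((n + 1 : ℕ) : ℝ≥0∞)) *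
            ∑' k : ℕ, ENNReal.ofReal (a (n + 1 + k)) ^ q) ^ (1 / q)) ∧
    (∀ C : ℝ≥0∞,
      (∀ a : ℕ → ℝ, (∀ n, 0 ≤ a n) → Antitone a →
        (⨆ n : ℕ, ((n + 1 : ℕ) : ℝ≥0∞) * ENNReal.ofReal (a (n + 1))) ≤
          C * ⨆ n : ℕ, ((n + 1 : ℕ) : ℝ≥0∞) * ((1 / ((n + 1 : ℕ) : ℝ≥0∞)) *
            ∑' k : ℕ, ENNReal.ofReal (a (n + 1 + k)) ^ q) ^ (1 / q)) →
      ENNReal.ofReal ((1 / q) ^ (-(1 / q)) * (1 - 1 / q) ^ (-(1 - 1 / q))) ≤ C) :=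
  ⟨fun a ha hm => part1 q hq a ha hm, fun C hC => part2 q hq C hC⟩
end

section
/- Let 1 < q < ∞ and N ∈ ℕ. Then sup_{1≤n≤N} n^{1−1/q}·((N−n+1)/N^q)^{1/q} ≤ ((N+1)/N)·(1/q)^{1/q}·(1−1/q)^{1−1/q}. -/
open Real

/-- For `1 ≤ n ≤ N`: `n^{1−1/q} ((N−n+1)/N^q)^{1/q} ≤ ((N+1)/N)(1/q)^{1/q}(1−1/q)^{1−1/q}`. -/
theorem weak_stechkin_finite_max (q : ℝ) (hq : 1 < q) (N : ℕ) (hN : 1 ≤ N) :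
    ∀ n ∈ Finset.Icc 1 N,
      ((n : ℝ)) ^ (1 - 1 / q) * (((N : ℝ) - n + 1) / (N : ℝ) ^ q) ^ (1 / q) ≤
        (((N : ℝ) + 1) / N) * (1 / q) ^ (1 / q) * (1 - 1 / q) ^ (1 - 1 / q) := by
  intro n hn
  simp only [Finset.mem_Icc] at hn
  have hq0 : 0 < q := lt_trans one_pos hq
  set θ : ℝ := 1 / q with hθ
  have hθ0 : 0 < θ := by positivity
  have hθ1 : θ < 1 := by rw [hθ, div_lt_one hq0]; exact hq
  have h1θ : 0 < 1 - θ := by linarith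
  have hNpos : (0:ℝ) < N := by exact_mod_cast hN
  have hnN : (n:ℝ) ≤ N := by exact_mod_cast hn.2
  have hn0 : (0:ℝ) ≤ n := Nat.cast_nonneg n
  have hm0 : (0:ℝ) ≤ (N:ℝ) - n + 1 := by linarith
  have hNq : ((N:ℝ) ^ q) ^ θ = N := by
    rw [← Real.rpow_mul hNpos.le, hθ, mul_one_div_cancel hq0.ne', Real.rpow_one]
  have hdiv : (((N:ℝ) - n + 1) / (N:ℝ) ^ q) ^ θ = ((N:ℝ) - n + 1) ^ θ / N := by
    rw [Real.div_rpow hm0 (Real.rpow_nonneg hNpos.le q), hNq]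
  -- AM-GM
  have amgm := Real.geom_mean_le_arith_mean2_weighted h1θ.le hθ0.le
    (div_nonneg hn0 h1θ.le) (div_nonneg hm0 hθ0.le) (by ring)
  have hrhs : (1 - θ) * ((n:ℝ) / (1 - θ)) + θ * (((N:ℝ) - n + 1) / θ) = (N:ℝ) + 1 := by
    field_simp; ring
  rw [hrhs] at amgm
  have hfact : (n:ℝ) ^ (1 - θ) * ((N:ℝ) - n + 1) ^ θ =
      ((n:ℝ) / (1 - θ)) ^ (1 - θ) * (((N:ℝ) - n + 1) / θ) ^ θ *
        ((1 - θ) ^ (1 - θ) * θ ^ θ) := by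
    rw [Real.div_rpow hn0 h1θ.le, Real.div_rpow hm0 hθ0.le]
    have h1 : (1 - θ) ^ (1 - θ) ≠ 0 := (Real.rpow_pos_of_pos h1θ _).ne'
    have h2 : θ ^ θ ≠ 0 := (Real.rpow_pos_of_pos hθ0 _).ne'
    field_simp
  have key : (n:ℝ) ^ (1 - θ) * ((N:ℝ) - n + 1) ^ θ ≤
      ((N:ℝ) + 1) * ((1 - θ) ^ (1 - θ) * θ ^ θ) := by
    rw [hfact]
    exact mul_le_mul_of_nonneg_right amgm
      (by positivity)
  calc (n:ℝ) ^ (1 - θ) * (((N:ℝ) - n + 1) / (N:ℝ) ^ q) ^ θ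
      = ((n:ℝ) ^ (1 - θ) * ((N:ℝ) - n + 1) ^ θ) / N := by rw [hdiv]; ring
    _ ≤ (((N:ℝ) + 1) * ((1 - θ) ^ (1 - θ) * θ ^ θ)) / N := by
        gcongr
    _ = (((N:ℝ) + 1) / N) * θ ^ θ * (1 - θ) ^ (1 - θ) := by ring
end

section
/- Let 1 < q < ∞. For every monotonically decreasing f : (0,∞) → [0,∞), ∫_0^∞ (1/t · ∫_t^∞ f(s)^q ds)^{1/q} dt ≤ (π/(q·sin(π/q))) · ∫_0^∞ f(t) dt, and the constant π/(q sin(π/q)) is optimal (attained by f = (1/T)·χ_{(0,T)} for any T > 0). -/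
open Real MeasureTheory
open scoped ENNReal

lemma realBeta (a b : ℝ) (ha : 0 < a) (hb : 0 < b) :
    Real.Gamma a * Real.Gamma b = Real.Gamma (a + b) * ∫ x in (0:ℝ)..1, x ^ (a-1) * (1-x) ^ (b-1) := by
  have h := Complex.Gamma_mul_Gamma_eq_betaIntegral (s := (a:ℂ)) (t := (b:ℂ))
    (by simpa using ha) (by simpa using hb)
  have hbeta : Complex.betaIntegral a b = ((∫ x in (0:ℝ)..1, x ^ (a-1) * (1-x) ^ (b-1) : ℝ) : ℂ) := by
    rw [Complex.betaIntegral, ← intervalIntegral.integral_ofReal]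
    refine intervalIntegral.integral_congr fun x hx => ?_
    rw [Set.uIcc_of_le (by norm_num : (0:ℝ) ≤ 1)] at hx
    have hx0 : (0:ℝ) ≤ x := hx.1
    have hx1 : (0:ℝ) ≤ 1 - x := by linarith [hx.2]
    rw [Complex.ofReal_mul, Complex.ofReal_cpow hx0, Complex.ofReal_cpow hx1]
    push_cast
    ring
  rw [hbeta, ← Complex.ofReal_add, Complex.Gamma_ofReal, Complex.Gamma_ofReal,
    Complex.Gamma_ofReal] at h
  exact_mod_cast h

lemma integrableOn_beta (q : ℝ) (hq : 1 < q) :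
    IntegrableOn (fun u : ℝ => u ^ (-(1/q)) * (1-u) ^ (1/q)) (Set.Ioo 0 1) := by
  have hq0 : 0 < q := lt_trans one_pos hq
  have h1 : (-1 : ℝ) < -(1/q) := by
    rw [neg_lt_neg_iff, div_lt_one hq0]; exact hq
  have hdom : IntegrableOn (fun u : ℝ => u ^ (-(1/q))) (Set.Ioo 0 1) := by
    have := intervalIntegral.intervalIntegrable_rpow' (a := (0:ℝ)) (b := 1) h1
    rwa [intervalIntegrable_iff_integrableOn_Ioo_of_le (by norm_num)] at this
  refine Integrable.mono' hdom ?_ ?_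
  · exact (by fun_prop : Measurable (fun u : ℝ => u ^ (-(1/q)) * (1-u) ^ (1/q))).aestronglyMeasurable
  · filter_upwards [ae_restrict_mem measurableSet_Ioo] with u hu
    have hu0 : (0:ℝ) < u := hu.1
    have hu1 : (0:ℝ) ≤ 1 - u := by linarith [hu.2.le]
    rw [Real.norm_eq_abs, abs_of_nonneg (mul_nonneg (Real.rpow_nonneg hu0.le _) (Real.rpow_nonneg hu1 _))]
    calc u ^ (-(1/q)) * (1-u) ^ (1/q) ≤ u ^ (-(1/q)) * 1 := by
          gcongr
          exact Real.rpow_le_one hu1 (by linarith [hu.2]) (by positivity)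
      _ = u ^ (-(1/q)) := mul_one _

lemma Bq_eq (q : ℝ) (hq : 1 < q) :
    ∫⁻ u in Set.Ioo (0:ℝ) 1, ENNReal.ofReal (u ^ (-(1/q)) * (1-u) ^ (1/q))
      = ENNReal.ofReal (π / (q * Real.sin (π / q))) := by
  have hq0 : 0 < q := lt_trans one_pos hq
  have hiq : 0 < 1/q := by positivity
  have hiq1 : 1/q < 1 := by rw [div_lt_one hq0]; exact hq
  rw [← MeasureTheory.ofReal_integral_eq_lintegral_ofReal (integrableOn_beta q hq) ?nn]
  case nn =>
    filter_upwards [ae_restrict_mem measurableSet_Ioo] with u hu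
    exact mul_nonneg (Real.rpow_nonneg hu.1.le _) (Real.rpow_nonneg (by linarith [hu.2.le]) _)
  congr 1
  have key := realBeta (1 - 1/q) (1 + 1/q) (by linarith) (by linarith)
  have hab : (1 - 1/q) + (1 + 1/q) = 2 := by ring
  rw [hab, Real.Gamma_two, one_mul, (by ring : (1 - 1/q) - 1 = -(1/q)),
    (by ring : (1 + 1/q) - 1 = 1/q)] at key
  rw [← MeasureTheory.integral_Ioc_eq_integral_Ioo, ← intervalIntegral.integral_of_le (by norm_num : (0:ℝ) ≤ 1), ← key]
  rw [add_comm (1:ℝ) (1/q), Real.Gamma_add_one (ne_of_gt hiq)]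
  have := Real.Gamma_mul_Gamma_one_sub (1/q)
  rw [mul_one_div π q] at this
  calc Real.Gamma (1 - 1/q) * (1/q * Real.Gamma (1/q))
      = 1/q * (Real.Gamma (1/q) * Real.Gamma (1 - 1/q)) := by ring
    _ = 1/q * (π / Real.sin (π / q)) := by rw [this]
    _ = π / (q * Real.sin (π / q)) := by ring

lemma J_eq (q : ℝ) (hq : 1 < q) (τ : ℝ) (hτ : 0 ≤ τ) :
    ∫⁻ t in Set.Ioi (0:ℝ),
        (1 / ENNReal.ofReal t) ^ (1/q) * (ENNReal.ofReal τ - ENNReal.ofReal t) ^ (1/q)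
      = (∫⁻ u in Set.Ioo (0:ℝ) 1, ENNReal.ofReal (u ^ (-(1/q)) * (1-u) ^ (1/q)))
          * ENNReal.ofReal τ := by
  have hq0 : 0 < q := lt_trans one_pos hq
  have hiq : 0 < 1/q := by positivity
  rcases eq_or_lt_of_le hτ with h0 | hτ0
  · simp only [← h0, ENNReal.ofReal_zero, zero_tsub, ENNReal.zero_rpow_of_pos hiq, mul_zero,
      lintegral_zero]
  have hτne : τ ≠ 0 := ne_of_gt hτ0
  have hemb : MeasurableEmbedding (fun u : ℝ => τ * u) :=
    (Homeomorph.mulLeft₀ τ hτne).measurableEmbedding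
  have hmp : MeasurePreserving (fun u : ℝ => τ * u)
      (ENNReal.ofReal τ • volume) volume := by
    refine ⟨(measurable_const_mul τ), ?_⟩
    rw [Measure.map_smul, Real.map_volume_mul_left hτne, smul_smul,
      abs_of_pos (inv_pos.mpr hτ0), ← ENNReal.ofReal_mul hτ, mul_inv_cancel₀ hτne,
      ENNReal.ofReal_one, one_smul]
  have hpre : (fun u : ℝ => τ * u) ⁻¹' (Set.Ioi 0) = Set.Ioi 0 := by
    ext u; simp [Set.mem_Ioi, mul_pos_iff_of_pos_left, hτ0]
  rw [← hmp.setLIntegral_comp_preimage_emb hemb _ (Set.Ioi 0), hpre,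
    Measure.restrict_smul, lintegral_smul_measure]
  have hτE0 : ENNReal.ofReal τ ≠ 0 := by simp [ENNReal.ofReal_eq_zero, not_le, hτ0]
  have hτET : ENNReal.ofReal τ ≠ ⊤ := ENNReal.ofReal_ne_top
  have hpt : ∀ u ∈ Set.Ioi (0:ℝ),
      (1 / ENNReal.ofReal (τ * u)) ^ (1/q) *
        (ENNReal.ofReal τ - ENNReal.ofReal (τ * u)) ^ (1/q)
      = (1 / ENNReal.ofReal u) ^ (1/q) * (ENNReal.ofReal (1 - u)) ^ (1/q) := by
    intro u hu
    have h1 : ENNReal.ofReal τ - ENNReal.ofReal (τ * u)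
        = ENNReal.ofReal τ * ENNReal.ofReal (1 - u) := by
      rw [← ENNReal.ofReal_mul hτ, mul_sub, mul_one, ENNReal.ofReal_sub _ (mul_nonneg hτ (le_of_lt hu))]
    have hiq' : (0:ℝ) ≤ q⁻¹ := by positivity
    rw [h1, ENNReal.ofReal_mul hτ]
    simp only [one_div]
    rw [ENNReal.mul_inv (Or.inl hτE0) (Or.inl hτET),
      ENNReal.mul_rpow_of_nonneg _ _ hiq', ENNReal.mul_rpow_of_nonneg _ _ hiq',
      mul_mul_mul_comm, ← ENNReal.mul_rpow_of_nonneg _ _ hiq',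
      ENNReal.inv_mul_cancel hτE0 hτET, ENNReal.one_rpow, one_mul]
  rw [setLIntegral_congr_fun measurableSet_Ioi hpt]
  rw [mul_comm]
  congr 1
  have hsplit : Set.Ioi (0:ℝ) = Set.Ioo 0 1 ∪ Set.Ici 1 := (Set.Ioo_union_Ici_eq_Ioi one_pos).symm
  rw [hsplit, lintegral_union measurableSet_Ici
    (Set.disjoint_left.mpr fun x hx hx' => absurd (Set.mem_Ici.mp hx') (not_le.mpr hx.2))]
  · have h2 : ∫⁻ u in Set.Ici (1:ℝ),
        (1 / ENNReal.ofReal u) ^ (1/q) * (ENNReal.ofReal (1 - u)) ^ (1/q) = 0 := by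
      rw [← lintegral_zero (μ := volume.restrict (Set.Ici (1:ℝ)))]
      refine setLIntegral_congr_fun measurableSet_Ici (fun u hu => ?_)
      rw [ENNReal.ofReal_eq_zero.mpr (by linarith [Set.mem_Ici.mp hu] : 1 - u ≤ 0),
        ENNReal.zero_rpow_of_pos hiq, mul_zero]
    rw [h2, add_zero]
    refine setLIntegral_congr_fun measurableSet_Ioo (fun u hu => ?_)
    have hu0 : (0:ℝ) < u := hu.1
    have hu1 : (0:ℝ) < 1 - u := by linarith [hu.2]
    simp only [one_div]
    rw [← ENNReal.ofReal_inv_of_pos hu0, ENNReal.ofReal_rpow_of_pos (by positivity),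
      ENNReal.ofReal_rpow_of_pos hu1, ← ENNReal.ofReal_mul (by positivity),
      Real.inv_rpow hu0.le, ← Real.rpow_neg hu0.le]

lemma rpow_split (q : ℝ) (hq : 1 < q) (x : ℝ≥0∞) : x ^ q = x ^ (q-1) * x := by
  nth_rewrite 3 [← ENNReal.rpow_one x]
  rw [← ENNReal.rpow_add_of_nonneg _ _ (by linarith) zero_le_one, sub_add_cancel]

lemma mink (q : ℝ) (hq : 1 < q) (μ : Measure ℝ) [SigmaFinite μ] (g : ℝ → ℝ≥0∞)
    (hg : Measurable g) (A : ℝ → Set ℝ)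
    (hA : MeasurableSet {p : ℝ × ℝ | p.1 ∈ A p.2})
    (hrep : ∀ᵐ s ∂μ, g s = ∫⁻ l in Set.Ioi (0:ℝ), (A l).indicator 1 s)
    (hfin : ∫⁻ s, g s ^ q ∂μ ≠ ⊤) :
    (∫⁻ s, g s ^ q ∂μ) ^ (1/q) ≤ ∫⁻ l in Set.Ioi (0:ℝ), (μ (A l)) ^ (1/q) := by
  have hq0 : 0 < q := lt_trans one_pos hq
  have hq1 : q - 1 ≠ 0 := by linarith
  set Aq := ∫⁻ s, g s ^ q ∂μ with hAq
  rcases eq_or_ne Aq 0 with h0 | hne0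
  · rw [h0, ENNReal.zero_rpow_of_pos (by positivity)]; exact bot_le
  have hAsec : ∀ l, MeasurableSet (A l) := fun l =>
    hA.preimage (measurable_id.prodMk measurable_const)
  have hgae : ∀ᵐ s ∂μ, g s ≠ ⊤ := by
    have : ∀ᵐ s ∂μ, g s ^ q ≠ ⊤ := (ae_lt_top (hg.pow_const q) hfin).mono fun s h => h.ne
    filter_upwards [this] with s h
    intro hc; rw [hc] at h; exact h (ENNReal.top_rpow_of_pos (by positivity))
  have step1 : Aq = ∫⁻ s, (∫⁻ l in Set.Ioi (0:ℝ), g s ^ (q-1) * (A l).indicator 1 s) ∂μ := by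
    rw [hAq]
    refine lintegral_congr_ae ?_
    filter_upwards [hrep, hgae] with s hs hst
    rw [lintegral_const_mul' _ _ (ENNReal.rpow_ne_top_of_nonneg (by linarith) hst), ← hs,
      rpow_split q hq]
  have hker : Measurable fun p : ℝ × ℝ => g p.1 ^ (q-1) * (A p.2).indicator 1 p.1 := by
    refine ((hg.comp measurable_fst).pow_const _).mul ?_
    have : (fun p : ℝ × ℝ => (A p.2).indicator (1 : ℝ → ℝ≥0∞) p.1)
        = Set.indicator {p : ℝ × ℝ | p.1 ∈ A p.2} 1 := by
      ext p; by_cases h : p.1 ∈ A p.2 <;> simp [Set.indicator_apply, h]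
    rw [this]
    exact measurable_one.indicator hA
  have step2 : Aq = ∫⁻ l in Set.Ioi (0:ℝ), (∫⁻ s, g s ^ (q-1) * (A l).indicator 1 s ∂μ) := by
    rw [step1, lintegral_lintegral_swap (hker.aemeasurable)]
  have hconj : (q/(q-1)).HolderConjugate q := (Real.HolderConjugate.conjExponent hq).symm
  have hexp : 1/(q/(q-1)) = 1 - 1/q := by field_simp
  have step3 : ∀ l : ℝ, (∫⁻ s, g s ^ (q-1) * (A l).indicator 1 s ∂μ)
      ≤ Aq ^ (1 - 1/q) * (μ (A l)) ^ (1/q) := by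
    intro l
    have h := ENNReal.lintegral_mul_le_Lp_mul_Lq μ hconj
      ((hg.pow_const (q-1)).aemeasurable)
      ((measurable_one.indicator (hAsec l)).aemeasurable)
    simp only [Pi.mul_apply] at h
    have e1 : ∫⁻ s, (g s ^ (q-1)) ^ (q/(q-1)) ∂μ = Aq := by
      rw [hAq]; congr 1; funext s
      rw [← ENNReal.rpow_mul]
      congr 1
      field_simp
    have e2 : ∫⁻ s, ((A l).indicator 1 s) ^ q ∂μ = μ (A l) := by
      rw [← lintegral_indicator_one (hAsec l)]
      congr 1; funext s
      by_cases h : s ∈ A l <;> simp [Set.indicator_apply, h, ENNReal.zero_rpow_of_pos hq0]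
    rw [e1, e2, hexp] at h
    exact h
  -- step 5: Aq ≤ Aq^(1-1/q) * S
  have step4 : Aq ≤ Aq ^ (1 - 1/q) * ∫⁻ l in Set.Ioi (0:ℝ), (μ (A l)) ^ (1/q) := by
    calc Aq = ∫⁻ l in Set.Ioi (0:ℝ), (∫⁻ s, g s ^ (q-1) * (A l).indicator 1 s ∂μ) := step2
      _ ≤ ∫⁻ l in Set.Ioi (0:ℝ), Aq ^ (1 - 1/q) * (μ (A l)) ^ (1/q) :=
          lintegral_mono fun l => step3 l
      _ = Aq ^ (1 - 1/q) * ∫⁻ l in Set.Ioi (0:ℝ), (μ (A l)) ^ (1/q) :=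
          lintegral_const_mul' _ _ (ENNReal.rpow_ne_top_of_nonneg (by
            have : 1/q < 1 := by rw [div_lt_one hq0]; exact hq
            linarith) hfin)
  -- step 6: divide
  have hB0 : Aq ^ (1 - 1/q) ≠ 0 := by
    simp only [ne_eq, ENNReal.rpow_eq_zero_iff, not_or]
    constructor
    · rintro ⟨h, -⟩; exact hne0 h
    · rintro ⟨h, -⟩; exact hfin h
  have hBt : Aq ^ (1 - 1/q) ≠ ⊤ := ENNReal.rpow_ne_top_of_nonneg (by
      have : 1/q < 1 := by rw [div_lt_one hq0]; exact hq
      linarith) hfin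
  rw [← ENNReal.mul_le_mul_iff_right hB0 hBt]
  calc Aq ^ (1 - 1/q) * Aq ^ (1/q) = Aq := by
        rw [← ENNReal.rpow_add_of_nonneg _ _ (by
          have : 1/q < 1 := by rw [div_lt_one hq0]; exact hq
          linarith) (by positivity), sub_add_cancel, ENNReal.rpow_one]
    _ ≤ _ := step4

lemma levelset_struct (f : ℝ → ℝ) (hmono : AntitoneOn f (Set.Ioi 0)) (l : ℝ)
    (hfin : volume ({s : ℝ | l < f s} ∩ Set.Ioi 0) ≠ ⊤) (t : ℝ) (ht : 0 ≤ t) :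
    volume (({s : ℝ | l < f s} ∩ Set.Ioi 0) ∩ Set.Ioi t)
      = ENNReal.ofReal ((volume ({s : ℝ | l < f s} ∩ Set.Ioi 0)).toReal)
        - ENNReal.ofReal t := by
  set A := {s : ℝ | l < f s} ∩ Set.Ioi 0 with hA
  set τ := (volume A).toReal with hτ
  have hτ0 : 0 ≤ τ := ENNReal.toReal_nonneg
  have hvA : volume A = ENNReal.ofReal τ := (ENNReal.ofReal_toReal hfin).symm
  have hsub1 : A ⊆ Set.Ioc 0 τ := by
    rintro x ⟨hx1, hx2⟩
    refine ⟨hx2, ?_⟩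
    have hIoo : Set.Ioo 0 x ⊆ A := by
      rintro y ⟨hy1, hy2⟩
      exact ⟨lt_of_lt_of_le hx1 (hmono (Set.mem_Ioi.mpr hy1) hx2 hy2.le), hy1⟩
    have : volume (Set.Ioo 0 x) ≤ volume A := measure_mono hIoo
    rw [Real.volume_Ioo, sub_zero, hvA] at this
    exact (ENNReal.ofReal_le_ofReal_iff hτ0).mp this
  have hsub2 : Set.Ioo 0 τ ⊆ A := by
    rintro x ⟨hx1, hx2⟩
    by_contra hxA
    have hfx : f x ≤ l := not_lt.mp fun h => hxA ⟨h, hx1⟩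
    have hAsub : A ⊆ Set.Ioc 0 x := by
      rintro y ⟨hy1, hy2⟩
      refine ⟨hy2, ?_⟩
      by_contra hyx
      push_neg at hyx
      exact absurd hy1 (not_lt.mpr (le_trans (hmono hx1 (Set.mem_Ioi.mpr (lt_trans hx1 hyx)) hyx.le) hfx))
    have : volume A ≤ volume (Set.Ioc 0 x) := measure_mono hAsub
    rw [Real.volume_Ioc, sub_zero, hvA] at this
    exact absurd hx2 (not_lt.mpr ((ENNReal.ofReal_le_ofReal_iff hx1.le).mp this))
  have hup : A ∩ Set.Ioi t ⊆ Set.Ioc t τ := by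
    rintro x ⟨hx1, hx2⟩
    exact ⟨hx2, (hsub1 hx1).2⟩
  have hlo : Set.Ioo t τ ⊆ A ∩ Set.Ioi t := by
    rintro x ⟨hx1, hx2⟩
    exact ⟨hsub2 ⟨lt_of_le_of_lt ht hx1, hx2⟩, hx1⟩
  have h1 : volume (A ∩ Set.Ioi t) ≤ volume (Set.Ioc t τ) := measure_mono hup
  have h2 : volume (Set.Ioo t τ) ≤ volume (A ∩ Set.Ioi t) := measure_mono hlo
  rw [Real.volume_Ioc] at h1
  rw [Real.volume_Ioo] at h2
  rw [← ENNReal.ofReal_sub _ ht]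
  exact le_antisymm h1 h2

lemma main_ineq (q : ℝ) (hq : 1 < q) (f : ℝ → ℝ) (hf : Measurable f)
    (hnn : ∀ t, 0 < t → 0 ≤ f t) (hmono : AntitoneOn f (Set.Ioi 0)) :
    (∫⁻ t in Set.Ioi (0:ℝ),
        ((1 / ENNReal.ofReal t) * ∫⁻ s in Set.Ioi t, ENNReal.ofReal (f s) ^ q) ^ (1 / q)) ≤
      ENNReal.ofReal (π / (q * Real.sin (π / q))) *
        ∫⁻ t in Set.Ioi (0:ℝ), ENNReal.ofReal (f t) := by
  have hq0 : 0 < q := lt_trans one_pos hq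
  have hiq : 0 < 1/q := by positivity
  have hC : 0 < π / (q * Real.sin (π / q)) := by
    have hs : 0 < Real.sin (π / q) :=
      Real.sin_pos_of_pos_of_lt_pi (by positivity) (div_lt_self Real.pi_pos hq)
    positivity
  set I := ∫⁻ t in Set.Ioi (0:ℝ), ENNReal.ofReal (f t) with hI
  by_cases hItop : I = ⊤
  · rw [hItop, ENNReal.mul_top (by simp [ENNReal.ofReal_eq_zero, not_le, hC])]
    exact le_top
  set g : ℝ → ℝ≥0∞ := fun s => ENNReal.ofReal (f s) with hgdef
  have hgm : Measurable g := ENNReal.measurable_ofReal.comp hf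
  set A : ℝ → Set ℝ := fun l => {s | l < f s} ∩ Set.Ioi 0 with hAdef
  have hAlmeas : ∀ l, MeasurableSet (A l) :=
    fun l => (measurableSet_lt measurable_const hf).inter measurableSet_Ioi
  have hAprod : MeasurableSet {p : ℝ × ℝ | p.1 ∈ A p.2} := by
    have : {p : ℝ × ℝ | p.1 ∈ A p.2}
        = {p : ℝ × ℝ | p.2 < f p.1} ∩ {p : ℝ × ℝ | 0 < p.1} := by
      ext p; simp [hAdef, Set.mem_Ioi, and_comm]
    rw [this]
    exact (measurableSet_lt measurable_snd (hf.comp measurable_fst)).inter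
      (measurable_fst measurableSet_Ioi)
  -- each A l has finite measure for l > 0
  have hAfin : ∀ l, 0 < l → volume (A l) ≠ ⊤ := by
    intro l hl hcon
    have hsub : A l ⊆ {s | ENNReal.ofReal l ≤ g s} ∩ Set.Ioi 0 := by
      rintro s ⟨hs1, hs2⟩
      exact ⟨ENNReal.ofReal_le_ofReal (le_of_lt hs1), hs2⟩
    have h1 : (⊤ : ℝ≥0∞) ≤ volume.restrict (Set.Ioi 0) {s | ENNReal.ofReal l ≤ g s} := by
      rw [Measure.restrict_apply₀' (measurableSet_Ioi.nullMeasurableSet)]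
      calc (⊤:ℝ≥0∞) = volume (A l) := hcon.symm
        _ ≤ volume ({s | ENNReal.ofReal l ≤ g s} ∩ Set.Ioi 0) :=
            measure_mono hsub
    have h2 := mul_meas_ge_le_lintegral₀ (μ := volume.restrict (Set.Ioi 0))
      hgm.aemeasurable (ENNReal.ofReal l)
    rw [top_le_iff.mp h1] at h2
    rw [ENNReal.mul_top (by simp [ENNReal.ofReal_eq_zero, not_le, hl])] at h2
    exact hItop (top_le_iff.mp (le_trans h2 (le_of_eq hI.symm)))
  set τ : ℝ → ℝ := fun l => (volume (A l)).toReal with hτdef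
  have hvA : ∀ l, 0 < l → volume (A l) = ENNReal.ofReal (τ l) :=
    fun l hl => (ENNReal.ofReal_toReal (hAfin l hl)).symm
  have hτm : Measurable τ := by
    have hmA : Antitone (fun l => volume (A l)) := by
      intro a b hab
      refine measure_mono ?_
      rintro s ⟨hs1, hs2⟩
      exact ⟨lt_of_le_of_lt hab hs1, hs2⟩
    exact ENNReal.measurable_toReal.comp hmA.measurable
  -- pointwise layer cake representation
  have hrep : ∀ s : ℝ, 0 < s → g s = ∫⁻ l in Set.Ioi (0:ℝ), (A l).indicator 1 s := by
    intro s hs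
    have heq : (fun l => (A l).indicator (1 : ℝ → ℝ≥0∞) s)
        = (Set.Iio (f s)).indicator (fun _ => (1:ℝ≥0∞)) := by
      funext l
      by_cases h : l < f s
      · simp [Set.indicator_apply, hAdef, h, hs]
      · simp [Set.indicator_apply, hAdef, h, hs]
    rw [heq]
    rw [lintegral_indicator_const measurableSet_Iio, Measure.restrict_apply measurableSet_Iio,
      Set.Iio_inter_Ioi, Real.volume_Ioo, sub_zero, one_mul]
  -- finiteness of inner integrals
  have hfin_t : ∀ t, 0 < t → ∫⁻ s in Set.Ioi t, g s ^ q ≠ ⊤ := by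
    intro t ht
    have hb : ∀ᵐ s ∂(volume.restrict (Set.Ioi t)),
        g s ^ q ≤ ENNReal.ofReal (f t) ^ (q-1) * g s := by
      filter_upwards [ae_restrict_mem measurableSet_Ioi] with s hs
      rw [rpow_split q hq]
      exact mul_le_mul_left (ENNReal.rpow_le_rpow
        (ENNReal.ofReal_le_ofReal (hmono (Set.mem_Ioi.mpr ht) (Set.mem_Ioi.mpr (lt_trans ht hs))
          (le_of_lt hs))) (by linarith)) _
    have h1 : ∫⁻ s in Set.Ioi t, g s ^ q
        ≤ ENNReal.ofReal (f t) ^ (q-1) * ∫⁻ s in Set.Ioi t, g s := by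
      calc ∫⁻ s in Set.Ioi t, g s ^ q ≤ ∫⁻ s in Set.Ioi t, ENNReal.ofReal (f t) ^ (q-1) * g s :=
            lintegral_mono_ae hb
        _ = _ := lintegral_const_mul' _ _ (ENNReal.rpow_ne_top_of_nonneg (by linarith)
            ENNReal.ofReal_ne_top)
    intro hcon
    rw [hcon] at h1
    have h2 : ∫⁻ s in Set.Ioi t, g s ≤ I := lintegral_mono_set (Set.Ioi_subset_Ioi (le_of_lt ht))
    exact (ENNReal.mul_ne_top (ENNReal.rpow_ne_top_of_nonneg (by linarith) ENNReal.ofReal_ne_top)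
      hItop) (top_le_iff.mp (le_trans h1 (mul_le_mul_right h2 _)))
  -- key bound at each t
  have key_t : ∀ t, 0 < t → (∫⁻ s in Set.Ioi t, g s ^ q) ^ (1/q)
      ≤ ∫⁻ l in Set.Ioi (0:ℝ), (ENNReal.ofReal (τ l) - ENNReal.ofReal t) ^ (1/q) := by
    intro t ht
    have hμ : ∀ l, 0 < l →
        (volume.restrict (Set.Ioi t)) (A l) = ENNReal.ofReal (τ l) - ENNReal.ofReal t := by
      intro l hl
      rw [Measure.restrict_apply (hAlmeas l)]
      exact levelset_struct f hmono l (hAfin l hl) t (le_of_lt ht)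
    have h := mink q hq (volume.restrict (Set.Ioi t)) g hgm A hAprod ?_ (hfin_t t ht)
    · refine le_trans h (le_of_eq ?_)
      refine setLIntegral_congr_fun measurableSet_Ioi
        (fun l hl => ?_)
      rw [hμ l hl]
    · filter_upwards [ae_restrict_mem measurableSet_Ioi] with s hs
      exact hrep s (lt_trans ht hs)
  -- assemble
  set Bq := ∫⁻ u in Set.Ioo (0:ℝ) 1, ENNReal.ofReal (u ^ (-(1/q)) * (1-u) ^ (1/q)) with hBq
  have hBqC : Bq = ENNReal.ofReal (π / (q * Real.sin (π / q))) := Bq_eq q hq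
  have hBqtop : Bq ≠ ⊤ := by rw [hBqC]; exact ENNReal.ofReal_ne_top
  calc ∫⁻ t in Set.Ioi (0:ℝ), ((1 / ENNReal.ofReal t) * ∫⁻ s in Set.Ioi t, g s ^ q) ^ (1/q)
      = ∫⁻ t in Set.Ioi (0:ℝ),
          (1 / ENNReal.ofReal t) ^ (1/q) * (∫⁻ s in Set.Ioi t, g s ^ q) ^ (1/q) := by
        refine setLIntegral_congr_fun measurableSet_Ioi
          (fun t ht => ?_)
        rw [ENNReal.mul_rpow_of_nonneg _ _ (le_of_lt hiq)]
    _ ≤ ∫⁻ t in Set.Ioi (0:ℝ), (1 / ENNReal.ofReal t) ^ (1/q) *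
          ∫⁻ l in Set.Ioi (0:ℝ), (ENNReal.ofReal (τ l) - ENNReal.ofReal t) ^ (1/q) := by
        refine lintegral_mono_ae ?_
        filter_upwards [ae_restrict_mem measurableSet_Ioi] with t ht
        exact mul_le_mul_right (key_t t ht) _
    _ = ∫⁻ t in Set.Ioi (0:ℝ), ∫⁻ l in Set.Ioi (0:ℝ),
          (1 / ENNReal.ofReal t) ^ (1/q) *
            (ENNReal.ofReal (τ l) - ENNReal.ofReal t) ^ (1/q) := by
        refine setLIntegral_congr_fun measurableSet_Ioi
          (fun t ht => ?_)
        rw [lintegral_const_mul' _ _ (ENNReal.rpow_ne_top_of_nonneg (le_of_lt hiq) ?_)]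
        rw [one_div]
        exact ENNReal.inv_ne_top.mpr (by simp [ENNReal.ofReal_eq_zero, not_le, Set.mem_Ioi.mp ht])
    _ = ∫⁻ l in Set.Ioi (0:ℝ), ∫⁻ t in Set.Ioi (0:ℝ),
          (1 / ENNReal.ofReal t) ^ (1/q) *
            (ENNReal.ofReal (τ l) - ENNReal.ofReal t) ^ (1/q) := by
        refine lintegral_lintegral_swap ?_
        refine Measurable.aemeasurable ?_
        refine Measurable.mul ?_ ?_
        · exact ((measurable_const.div (ENNReal.measurable_ofReal.comp measurable_fst)).pow_const _)
        · exact (((ENNReal.measurable_ofReal.comp (hτm.comp measurable_snd)).sub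
            (ENNReal.measurable_ofReal.comp measurable_fst)).pow_const _)
    _ = ∫⁻ l in Set.Ioi (0:ℝ), Bq * ENNReal.ofReal (τ l) := by
        refine setLIntegral_congr_fun measurableSet_Ioi
          (fun l hl => ?_)
        exact J_eq q hq (τ l) ENNReal.toReal_nonneg
    _ = Bq * ∫⁻ l in Set.Ioi (0:ℝ), ENNReal.ofReal (τ l) := lintegral_const_mul' _ _ hBqtop
    _ = Bq * ∫⁻ l in Set.Ioi (0:ℝ), volume (A l) := by
        congr 1
        refine setLIntegral_congr_fun measurableSet_Ioi
          (fun l hl => ?_)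
        exact (hvA l hl).symm
    _ = Bq * I := by
        congr 1
        have lc := lintegral_eq_lintegral_meas_lt (volume.restrict (Set.Ioi (0:ℝ)))
          (f := f) ?_ hf.aemeasurable
        · rw [hI, lc]
          refine setLIntegral_congr_fun measurableSet_Ioi
            (fun l hl => ?_)
          rw [Measure.restrict_apply (measurableSet_lt measurable_const hf)]
        · filter_upwards [ae_restrict_mem measurableSet_Ioi] with s hs
          exact hnn s hs
    _ = ENNReal.ofReal (π / (q * Real.sin (π / q))) * I := by rw [hBqC]

lemma eq_case (q : ℝ) (hq : 1 < q) (T : ℝ) (hT : 0 < T) :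
    (∫⁻ t in Set.Ioi (0:ℝ),
        ((1 / ENNReal.ofReal t) * ∫⁻ s in Set.Ioi t,
          ENNReal.ofReal (Set.indicator (Set.Ioo 0 T) (fun _ => 1 / T) s) ^ q) ^ (1 / q)) =
      ENNReal.ofReal (π / (q * Real.sin (π / q))) *
        ∫⁻ t in Set.Ioi (0:ℝ),
          ENNReal.ofReal (Set.indicator (Set.Ioo 0 T) (fun _ => 1 / T) t) := by
  have hq0 : 0 < q := lt_trans one_pos hq
  have hiq : 0 < 1/q := by positivity
  set c : ℝ≥0∞ := ENNReal.ofReal (1/T) with hc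
  have hcT : c * ENNReal.ofReal T = 1 := by
    rw [hc, ← ENNReal.ofReal_mul (by positivity), one_div, inv_mul_cancel₀ (ne_of_gt hT),
      ENNReal.ofReal_one]
  -- RHS integral equals 1
  have hRHS : (∫⁻ t in Set.Ioi (0:ℝ),
      ENNReal.ofReal (Set.indicator (Set.Ioo 0 T) (fun _ => 1 / T) t)) = 1 := by
    have h1 : ∀ t : ℝ, ENNReal.ofReal (Set.indicator (Set.Ioo 0 T) (fun _ => 1 / T) t)
        = (Set.Ioo (0:ℝ) T).indicator (fun _ => c) t := by
      intro t
      by_cases h : t ∈ Set.Ioo (0:ℝ) T <;> simp [Set.indicator_apply, h, hc]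
    simp_rw [h1]
    rw [lintegral_indicator_const measurableSet_Ioo, Measure.restrict_apply measurableSet_Ioo,
      (by rw [Set.inter_eq_left]; exact fun x hx => hx.1 : Set.Ioo (0:ℝ) T ∩ Set.Ioi 0 = Set.Ioo 0 T),
      Real.volume_Ioo, sub_zero, hcT]
  rw [hRHS, mul_one]
  -- inner integral
  have hinner : ∀ t : ℝ, 0 < t → (∫⁻ s in Set.Ioi t,
      ENNReal.ofReal (Set.indicator (Set.Ioo 0 T) (fun _ => 1 / T) s) ^ q)
      = c ^ q * (ENNReal.ofReal T - ENNReal.ofReal t) := by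
    intro t ht
    have h1 : ∀ s : ℝ, ENNReal.ofReal (Set.indicator (Set.Ioo 0 T) (fun _ => 1 / T) s) ^ q
        = (Set.Ioo (0:ℝ) T).indicator (fun _ => c ^ q) s := by
      intro s
      by_cases h : s ∈ Set.Ioo (0:ℝ) T
      · simp [Set.indicator_apply, h, hc]
      · simp [Set.indicator_apply, h, ENNReal.zero_rpow_of_pos hq0]
    simp_rw [h1]
    rw [lintegral_indicator_const measurableSet_Ioo, Measure.restrict_apply measurableSet_Ioo,
      (by ext x; constructor
          · rintro ⟨⟨h1, h2⟩, h3⟩; exact ⟨h3, h2⟩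
          · rintro ⟨h1, h2⟩; exact ⟨⟨lt_trans ht h1, h2⟩, h1⟩
        : Set.Ioo (0:ℝ) T ∩ Set.Ioi t = Set.Ioo t T),
      Real.volume_Ioo, ENNReal.ofReal_sub _ (le_of_lt ht)]
  calc ∫⁻ t in Set.Ioi (0:ℝ),
        ((1 / ENNReal.ofReal t) * ∫⁻ s in Set.Ioi t,
          ENNReal.ofReal (Set.indicator (Set.Ioo 0 T) (fun _ => 1 / T) s) ^ q) ^ (1 / q)
      = ∫⁻ t in Set.Ioi (0:ℝ), c *
          ((1 / ENNReal.ofReal t) ^ (1/q) * (ENNReal.ofReal T - ENNReal.ofReal t) ^ (1/q)) := by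
        refine setLIntegral_congr_fun measurableSet_Ioi
          (fun t ht => ?_)
        rw [hinner t ht, ← mul_assoc, mul_comm (1 / ENNReal.ofReal t) (c ^ q), mul_assoc,
          ENNReal.mul_rpow_of_nonneg _ _ (le_of_lt hiq),
          ENNReal.mul_rpow_of_nonneg _ _ (le_of_lt hiq), ← ENNReal.rpow_mul,
          mul_one_div_cancel (ne_of_gt hq0), ENNReal.rpow_one]
        
    _ = c * ((∫⁻ u in Set.Ioo (0:ℝ) 1, ENNReal.ofReal (u ^ (-(1/q)) * (1-u) ^ (1/q)))
          * ENNReal.ofReal T) := by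
        rw [lintegral_const_mul' _ _ ENNReal.ofReal_ne_top, J_eq q hq T (le_of_lt hT)]
    _ = ENNReal.ofReal (π / (q * Real.sin (π / q))) := by
        rw [Bq_eq q hq, ← mul_assoc, mul_comm c, mul_assoc, hcT, mul_one]

/-- Strong continuous Stechkin inequality with the optimal constant `π/(q sin(π/q))`,
optimality witnessed by `f = (1/T)·χ_{(0,T)}` for every `T > 0`. -/
theorem stechkin_strong_continuous (q : ℝ) (hq : 1 < q) :
    (∀ f : ℝ → ℝ, Measurable f → (∀ t, 0 < t → 0 ≤ f t) → AntitoneOn f (Set.Ioi 0) →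
      (∫⁻ t in Set.Ioi (0 : ℝ),
          ((1 / ENNReal.ofReal t) * ∫⁻ s in Set.Ioi t, ENNReal.ofReal (f s) ^ q) ^ (1 / q)) ≤
        ENNReal.ofReal (π / (q * Real.sin (π / q))) *
          ∫⁻ t in Set.Ioi (0 : ℝ), ENNReal.ofReal (f t)) ∧
    (∀ T : ℝ, 0 < T →
      (∫⁻ t in Set.Ioi (0 : ℝ),
          ((1 / ENNReal.ofReal t) * ∫⁻ s in Set.Ioi t,
            ENNReal.ofReal (Set.indicator (Set.Ioo 0 T) (fun _ => 1 / T) s) ^ q) ^ (1 / q)) =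
        ENNReal.ofReal (π / (q * Real.sin (π / q))) *
          ∫⁻ t in Set.Ioi (0 : ℝ),
            ENNReal.ofReal (Set.indicator (Set.Ioo 0 T) (fun _ => 1 / T) t)) := by
  exact ⟨fun f hf hnn hmono => main_ineq q hq f hf hnn hmono, fun T hT => eq_case q hq T hT⟩
end
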